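/- arXiv:1303.3697 — 12 statements merged into one kernel-verified Lean document; each statement's English description precedes it below -/
import Mathlib

section
/- Let I ⊆ ℝ be an open invex set with respect to η : I × I → ℝ₊, and let f : I → ℝ be absolutely continuous with a, b ∈ I and η(b,a) ≠ 0, such that t ↦ f'(a + t·η(b,a)) is integrable on [0,1]. Then (1/6)[f(a) + 4f(a + η(b,a)/2) + f(a + η(b,a))] − (1/η(b,a)) ∫_a^{a+η(b,a)} f(x) dx = η(b,a) ∫_0^1 m(t) f'(a + t·η(b,a)) dt, where m(t) = t − 1/6 for t ∈ [0, 1/2) and m(t) = t − 5/6 for t ∈ [1/2, 1]. -/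
open Real MeasureTheory intervalIntegral Set

lemma fubini_aux (φ : ℝ → ℝ) (hφ : IntervalIntegrable φ volume 0 1) :
    ∫ t in (0:ℝ)..1, (∫ s in (0:ℝ)..t, φ s) = ∫ s in (0:ℝ)..1, (1 - s) * φ s := by
  have hφμ : Integrable φ (volume.restrict (Ioc (0:ℝ) 1)) := hφ.1
  set μ := volume.restrict (Ioc (0:ℝ) 1) with hμ
  have hone : Integrable (fun _ : ℝ => (1:ℝ)) μ := by
    rw [hμ]
    refine (integrableOn_const_iff).mpr (Or.inr ?_)
    simp [Real.volume_Ioc]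
  have hbase : Integrable (fun z : ℝ × ℝ => ‖φ z.2‖) (μ.prod μ) := by
    simpa using hone.mul_prod hφμ.norm
  have hkerfun : (fun p : ℝ × ℝ => (Iic p.1).indicator φ p.2)
      = Set.indicator {p : ℝ × ℝ | p.2 ≤ p.1} (fun p => φ p.2) := by
    funext p
    by_cases h : p.2 ≤ p.1 <;> simp [Set.indicator, h]
  have hker : Integrable (fun p : ℝ × ℝ => (Iic p.1).indicator φ p.2) (μ.prod μ) := by
    refine Integrable.mono' hbase ?_ ?_
    · rw [hkerfun]
      exact (hφμ.aestronglyMeasurable.comp_snd).indicator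
        (measurableSet_le measurable_snd measurable_fst)
    · refine Filter.Eventually.of_forall fun p => ?_
      by_cases h : p.2 ≤ p.1 <;> simp [Set.indicator, h]
  have h1 : ∫ t in (0:ℝ)..1, (∫ s in (0:ℝ)..t, φ s)
      = ∫ t, (∫ s, (Iic t).indicator φ s ∂μ) ∂μ := by
    rw [intervalIntegral.integral_of_le zero_le_one, hμ]
    refine setIntegral_congr_fun measurableSet_Ioc fun t ht => ?_
    rw [intervalIntegral.integral_of_le ht.1.le,
      MeasureTheory.integral_indicator measurableSet_Iic,
      Measure.restrict_restrict measurableSet_Iic]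
    have hset : Iic t ∩ Ioc 0 1 = Ioc 0 t := by
      ext s
      simp only [mem_inter_iff, mem_Iic, mem_Ioc]
      constructor
      · rintro ⟨h1, h2, h3⟩; exact ⟨h2, h1⟩
      · rintro ⟨h1, h2⟩; exact ⟨h2, h1, h2.trans ht.2⟩
    rw [hset]
  have h2 : ∫ t, (∫ s, (Iic t).indicator φ s ∂μ) ∂μ
      = ∫ s, (∫ t, (Iic t).indicator φ s ∂μ) ∂μ :=
    MeasureTheory.integral_integral_swap hker
  rw [h1, h2]
  have h3 : ∀ s : ℝ, (fun t => (Iic t).indicator φ s)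
      = fun t => (Ici s).indicator (fun _ => φ s) t := by
    intro s; funext t
    by_cases h : s ≤ t <;> simp [Set.indicator, h]
  rw [intervalIntegral.integral_of_le zero_le_one]
  refine setIntegral_congr_fun measurableSet_Ioc fun s hs => ?_
  rw [h3 s, MeasureTheory.integral_indicator_const (φ s) measurableSet_Ici, hμ, measureReal_def,
    Measure.restrict_apply measurableSet_Ici]
  have hset : Ici s ∩ Ioc 0 1 = Icc s 1 := by
    ext x
    simp only [mem_inter_iff, mem_Ici, mem_Ioc, mem_Icc]
    constructor
    · rintro ⟨h1, h2, h3⟩; exact ⟨h1, h3⟩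
    · rintro ⟨h1, h2⟩; exact ⟨h1, hs.1.trans_le h1, h2⟩
  rw [hset, Real.volume_Icc, ENNReal.toReal_ofReal (by linarith [hs.2])]
  simp [mul_comm, smul_eq_mul]

theorem stmt0 (I : Set ℝ) (η : ℝ → ℝ → ℝ) (f f' : ℝ → ℝ) (a b : ℝ)
    (hI : IsOpen I)
    (hinv : ∀ u ∈ I, ∀ v ∈ I, ∀ t ∈ Set.Icc (0:ℝ) 1, u + t * η v u ∈ I)
    (hηnn : ∀ u ∈ I, ∀ v ∈ I, 0 ≤ η v u)
    (ha : a ∈ I) (hb : b ∈ I) (hη : η b a ≠ 0)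
    (hint : IntervalIntegrable f' MeasureTheory.volume a (a + η b a))
    (hFTC : ∀ x ∈ Set.uIcc a (a + η b a), f x = f a + ∫ t in a..x, f' t)
    (hint' : IntervalIntegrable (fun t => f' (a + t * η b a)) MeasureTheory.volume 0 1)
    (m : ℝ → ℝ)
    (hm : ∀ t : ℝ, m t = if t < 1/2 then t - 1/6 else t - 5/6) :
    (1/6 : ℝ) * (f a + 4 * f (a + η b a / 2) + f (a + η b a)) -
      (1 / η b a) * (∫ x in a..(a + η b a), f x) =
    η b a * ∫ t in (0:ℝ)..1, m t * f' (a + t * η b a) := by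
  have hh : 0 < η b a := lt_of_le_of_ne (hηnn a ha b hb) (Ne.symm hη)
  set c := η b a with hc
  set φ : ℝ → ℝ := fun s => f' (a + s * c) with hφdef
  have hφ : IntervalIntegrable φ volume 0 1 := hint'
  set g : ℝ → ℝ := fun t => ∫ s in (0:ℝ)..t, φ s with hgdef
  -- change of variables
  have key : ∀ t : ℝ, g t = c⁻¹ * ∫ x in a..(a + t * c), f' x := by
    intro t
    have h1 : (fun s => f' (a + s * c)) = fun s => f' (c * s + a) := by
      funext s; ring_nf
    have h2 := intervalIntegral.integral_comp_mul_add (a := (0:ℝ)) (b := t) f' hη a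
    rw [show c * 0 + a = a by ring, show c * t + a = a + t * c by ring] at h2
    have e : ∀ s : ℝ, a + s * c = c * s + a := fun s => by ring
    rw [hgdef]
    simp only [hφdef]
    simp_rw [e]
    rw [h2, smul_eq_mul]
    rw [show c * t + a = a + t * c from by ring]
  -- pointwise values of f
  have hmem : ∀ t : ℝ, 0 ≤ t → t ≤ 1 → a + t * c ∈ Set.uIcc a (a + c) := by
    intro t h0 h1
    rw [Set.uIcc_of_le (by linarith)]
    constructor <;> nlinarith
  have hfval : ∀ t : ℝ, 0 ≤ t → t ≤ 1 → f (a + t * c) = f a + c * g t := by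
    intro t h0 h1
    rw [hFTC _ (hmem t h0 h1), key t]
    field_simp
  have hval12 : f (a + c / 2) = f a + c * g (1/2) := by
    have := hfval (1/2) (by norm_num) (by norm_num)
    rw [show a + (1/2 : ℝ) * c = a + c / 2 by ring] at this
    exact this
  have hval1 : f (a + c) = f a + c * g 1 := by
    have := hfval 1 (by norm_num) le_rfl
    rw [show a + (1:ℝ) * c = a + c by ring] at this
    exact this
  -- integrability of g
  have hφIcc : IntegrableOn φ (Set.uIcc (0:ℝ) 1) volume := by
    rw [Set.uIcc_of_le zero_le_one, integrableOn_Icc_iff_integrableOn_Ioc]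
    exact hφ.1
  have hgcont : ContinuousOn g (Set.uIcc (0:ℝ) 1) :=
    intervalIntegral.continuousOn_primitive_interval hφIcc
  have hgint : IntervalIntegrable g volume 0 1 := hgcont.intervalIntegrable
  -- the integral of f
  have hIf : ∫ x in a..(a + c), f x = c * (f a + c * ∫ t in (0:ℝ)..1, g t) := by
    have e1 : ∫ x in a..(a + c), f x
        = ∫ x in a..(a + c), (f a + ∫ t in a..x, f' t) :=
      intervalIntegral.integral_congr fun x hx => hFTC x hx
    have e2 : ∫ t in (0:ℝ)..1, (fun x => f a + ∫ u in a..x, f' u) (c * t + a)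
        = c⁻¹ • ∫ x in (c * 0 + a)..(c * 1 + a), (f a + ∫ u in a..x, f' u) :=
      intervalIntegral.integral_comp_mul_add (a := (0:ℝ)) (b := 1)
        (fun x => f a + ∫ u in a..x, f' u) hη a
    have e3 : ∫ t in (0:ℝ)..1, (f a + ∫ u in a..(c * t + a), f' u)
        = ∫ t in (0:ℝ)..1, (f a + c * g t) := by
      refine intervalIntegral.integral_congr fun t ht => ?_
      rw [key t]
      have : a + t * c = c * t + a := by ring
      rw [this]
      field_simp
    have e4 : ∫ t in (0:ℝ)..1, (f a + c * g t) = f a + c * ∫ t in (0:ℝ)..1, g t := by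
      rw [intervalIntegral.integral_add (intervalIntegrable_const) (hgint.const_mul c),
        intervalIntegral.integral_const_mul]
      simp
    rw [e1]
    have e5 : (c : ℝ) * 0 + a = a := by ring
    have e6 : (c : ℝ) * 1 + a = a + c := by ring
    rw [e5, e6] at e2
    have := e2
    rw [e3, e4] at this
    have hcne : (c:ℝ) ≠ 0 := hη
    rw [smul_eq_mul] at this
    field_simp at this ⊢
    linarith [this]
  -- Fubini
  have hfub : ∫ t in (0:ℝ)..1, g t = ∫ s in (0:ℝ)..1, (1 - s) * φ s :=
    fubini_aux φ hφ
  -- split integrals at 1/2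
  have hsub1 : Set.uIcc (0:ℝ) (1/2) ⊆ Set.uIcc (0:ℝ) 1 := by
    rw [Set.uIcc_of_le (by norm_num : (0:ℝ) ≤ 1/2), Set.uIcc_of_le zero_le_one]
    exact Set.Icc_subset_Icc le_rfl (by norm_num)
  have hsub2 : Set.uIcc (1/2 : ℝ) 1 ⊆ Set.uIcc (0:ℝ) 1 := by
    rw [Set.uIcc_of_le (by norm_num : (1/2:ℝ) ≤ 1), Set.uIcc_of_le zero_le_one]
    exact Set.Icc_subset_Icc (by norm_num) le_rfl
  have hφ1 : IntervalIntegrable φ volume 0 (1/2) := hφ.mono_set hsub1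
  have hφ2 : IntervalIntegrable φ volume (1/2) 1 := hφ.mono_set hsub2
  have htφ1 : IntervalIntegrable (fun t => t * φ t) volume 0 (1/2) :=
    hφ1.continuousOn_mul continuousOn_id
  have htφ2 : IntervalIntegrable (fun t => t * φ t) volume (1/2) 1 :=
    hφ2.continuousOn_mul continuousOn_id
  set A := ∫ s in (0:ℝ)..(1/2), φ s with hA
  set B := ∫ s in (1/2 : ℝ)..1, φ s with hB
  set P := ∫ s in (0:ℝ)..(1/2), s * φ s with hP
  set Q := ∫ s in (1/2 : ℝ)..1, s * φ s with hQ
  have hg12 : g (1/2) = A := rfl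
  have hg1 : g 1 = A + B := (intervalIntegral.integral_add_adjacent_intervals hφ1 hφ2).symm
  have hlin : ∀ (u v : ℝ) (k : ℝ), IntervalIntegrable φ volume u v →
      IntervalIntegrable (fun t => t * φ t) volume u v →
      ∫ s in u..v, (s - k) * φ s = (∫ s in u..v, s * φ s) - k * ∫ s in u..v, φ s := by
    intro u v k h1 h2
    have : ∀ s, (s - k) * φ s = s * φ s - k * φ s := fun s => by ring
    simp_rw [this]
    rw [intervalIntegral.integral_sub h2 (h1.const_mul k),
      intervalIntegral.integral_const_mul]
  have hlin' : ∀ (u v : ℝ) (k : ℝ), IntervalIntegrable φ volume u v →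
      IntervalIntegrable (fun t => t * φ t) volume u v →
      ∫ s in u..v, (k - s) * φ s = k * (∫ s in u..v, φ s) - ∫ s in u..v, s * φ s := by
    intro u v k h1 h2
    have : ∀ s, (k - s) * φ s = k * φ s - s * φ s := fun s => by ring
    simp_rw [this]
    rw [intervalIntegral.integral_sub (h1.const_mul k) h2,
      intervalIntegral.integral_const_mul]
  have hfub' : ∫ t in (0:ℝ)..1, g t = (A - P) + (B - Q) := by
    rw [hfub, ← intervalIntegral.integral_add_adjacent_intervals
      (a := (0:ℝ)) (b := (1/2:ℝ)) (c := (1:ℝ))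
      (by
        have : ∀ s:ℝ, (1 - s) * φ s = (1:ℝ) * φ s - s * φ s := fun s => by ring
        simp_rw [this]
        exact ((hφ1.const_mul 1).sub htφ1))
      (by
        have : ∀ s:ℝ, (1 - s) * φ s = (1:ℝ) * φ s - s * φ s := fun s => by ring
        simp_rw [this]
        exact ((hφ2.const_mul 1).sub htφ2)),
      hlin' 0 (1/2) 1 hφ1 htφ1, hlin' (1/2) 1 1 hφ2 htφ2]
    ring_nf
    rw [hA, hB, hP, hQ]
  -- the m integral
  have hmφ1 : IntervalIntegrable (fun t => (t - 1/6) * φ t) volume 0 (1/2) := by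
    have : ∀ s:ℝ, (s - 1/6) * φ s = s * φ s - (1/6) * φ s := fun s => by ring
    simp_rw [this]
    exact htφ1.sub (hφ1.const_mul _)
  have hmφ2 : IntervalIntegrable (fun t => (t - 5/6) * φ t) volume (1/2) 1 := by
    have : ∀ s:ℝ, (s - 5/6) * φ s = s * φ s - (5/6) * φ s := fun s => by ring
    simp_rw [this]
    exact htφ2.sub (hφ2.const_mul _)
  have hae1 : ∀ᵐ t ∂(volume : Measure ℝ), t ∈ Set.uIoc (0:ℝ) (1/2) →
      m t * φ t = (t - 1/6) * φ t := by
    have hne : ∀ᵐ t : ℝ ∂volume, t ≠ (1/2 : ℝ) := by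
      rw [MeasureTheory.ae_iff]
      have : {t : ℝ | ¬ t ≠ (1/2:ℝ)} = {(1/2 : ℝ)} := by
        ext t; simp
      rw [this]
      exact Real.volume_singleton
    filter_upwards [hne] with t htne ht
    rw [Set.uIoc_of_le (by norm_num : (0:ℝ) ≤ 1/2)] at ht
    have : t < 1/2 := lt_of_le_of_ne ht.2 htne
    rw [hm t, if_pos this]
  have hae2 : ∀ t ∈ Set.uIoc (1/2:ℝ) 1, m t * φ t = (t - 5/6) * φ t := by
    intro t ht
    rw [Set.uIoc_of_le (by norm_num : (1/2:ℝ) ≤ 1)] at ht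
    rw [hm t, if_neg (not_lt.mpr ht.1.le)]
  have hmint1 : IntervalIntegrable (fun t => m t * φ t) volume 0 (1/2) := by
    rw [intervalIntegrable_iff] at hmφ1 ⊢
    refine hmφ1.congr ?_
    exact (ae_restrict_iff' measurableSet_uIoc).mpr
      (hae1.mono fun t h ht => (h ht).symm)
  have hmint2 : IntervalIntegrable (fun t => m t * φ t) volume (1/2) 1 := by
    rw [intervalIntegrable_iff] at hmφ2 ⊢
    refine hmφ2.congr ?_
    refine (ae_restrict_iff' measurableSet_uIoc).mpr ?_
    exact Filter.Eventually.of_forall fun t ht => (hae2 t ht).symm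
  have hmI : ∫ t in (0:ℝ)..1, m t * φ t = (P - 1/6 * A) + (Q - 5/6 * B) := by
    rw [← intervalIntegral.integral_add_adjacent_intervals hmint1 hmint2]
    have e1 : ∫ t in (0:ℝ)..(1/2), m t * φ t = P - 1/6 * A := by
      rw [intervalIntegral.integral_congr_ae hae1, hlin 0 (1/2) (1/6) hφ1 htφ1]
    have e2 : ∫ t in (1/2:ℝ)..1, m t * φ t = Q - 5/6 * B := by
      rw [intervalIntegral.integral_congr_ae
        (Filter.Eventually.of_forall hae2), hlin (1/2) 1 (5/6) hφ2 htφ2]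
    rw [e1, e2]
  -- conclude
  rw [hval12, hval1, hIf, hg12, hg1, hfub']
  have : ∫ t in (0:ℝ)..1, m t * f' (a + t * c) = (P - 1/6 * A) + (Q - 5/6 * B) := hmI
  rw [this]
  have hcne : (c:ℝ) ≠ 0 := hη
  field_simp
  ring
end

section
/- Let I ⊆ ℝ be an open invex set with respect to η : I × I → ℝ₊, and let f : I → ℝ be differentiable with a, b ∈ I and η(b,a) ≠ 0. If |f'| is preinvex on I (i.e., |f'(u + t·η(v,u))| ≤ (1−t)|f'(u)| + t|f'(v)| for all u, v ∈ I, t ∈ [0,1]), then |(1/6)[f(a) + 4f(a + η(b,a)/2) + f(a + η(b,a))] − (1/η(b,a)) ∫_a^{a+η(b,a)} f(x) dx| ≤ (5/72)·η(b,a)·(|f'(a)| + |f'(b)|). -/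
open Real MeasureTheory intervalIntegral Set

lemma poly_int (c d e u v : ℝ) :
    ∫ t in u..v, (c + d * t + e * t ^ 2) =
      c * (v - u) + d * (v ^ 2 - u ^ 2) / 2 + e * (v ^ 3 - u ^ 3) / 3 := by
  have h : ∀ t : ℝ, HasDerivAt (fun s : ℝ => c * s + d * s ^ 2 / 2 + e * s ^ 3 / 3)
      (c + d * t + e * t ^ 2) t := by
    intro t
    have := (((hasDerivAt_id t).const_mul c).add
      (((hasDerivAt_pow 2 t).const_mul d).div_const 2)).add
      (((hasDerivAt_pow 3 t).const_mul e).div_const 3)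
    refine this.congr_deriv ?_
    ring
  rw [intervalIntegral.integral_eq_sub_of_hasDerivAt (fun t _ => h t)
    (by apply Continuous.intervalIntegrable; continuity)]
  ring

theorem stmt1 (I : Set ℝ) (η : ℝ → ℝ → ℝ) (f : ℝ → ℝ) (a b : ℝ)
    (hI : IsOpen I)
    (hinv : ∀ u ∈ I, ∀ v ∈ I, ∀ t ∈ Set.Icc (0:ℝ) 1, u + t * η v u ∈ I)
    (hηnn : ∀ u ∈ I, ∀ v ∈ I, 0 ≤ η v u)
    (ha : a ∈ I) (hb : b ∈ I) (hη : η b a ≠ 0)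
    (hf : DifferentiableOn ℝ f I)
    (hpre : ∀ u ∈ I, ∀ v ∈ I, ∀ t ∈ Set.Icc (0:ℝ) 1,
      |deriv f (u + t * η v u)| ≤ (1 - t) * |deriv f u| + t * |deriv f v|) :
    |(1/6 : ℝ) * (f a + 4 * f (a + η b a / 2) + f (a + η b a)) -
      (1 / η b a) * ∫ x in a..(a + η b a), f x| ≤ (5/72) * η b a * (|deriv f a| + |deriv f b|) := by
  set h := η b a with hh
  have hpos : 0 < h := lt_of_le_of_ne (hηnn a ha b hb) (Ne.symm hη)
  set A := |deriv f a| with hA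
  set B := |deriv f b| with hB
  have hAnn : 0 ≤ A := abs_nonneg _
  have hBnn : 0 ≤ B := abs_nonneg _
  have hmem : ∀ t ∈ Icc (0:ℝ) 1, a + t * h ∈ I := fun t ht => hinv a ha b hb t ht
  set g : ℝ → ℝ := fun t => f (a + t * h) with hg
  set D : ℝ → ℝ := fun t => h * deriv f (a + t * h) with hD
  -- derivative of g
  have haff : ∀ t : ℝ, HasDerivAt (fun s : ℝ => a + s * h) h t := fun t => by
    simpa using ((hasDerivAt_id t).mul_const h).const_add a
  have hgD : ∀ t ∈ Icc (0:ℝ) 1, HasDerivAt g (D t) t := by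
    intro t ht
    have hx : a + t * h ∈ I := hmem t ht
    have hfd : HasDerivAt f (deriv f (a + t * h)) (a + t * h) :=
      (hf.differentiableAt (hI.mem_nhds hx)).hasDerivAt
    have := hfd.comp t (haff t)
    exact this.congr_deriv (mul_comm _ _)
  -- pointwise bound on D
  have hDle : ∀ t ∈ Icc (0:ℝ) 1, |D t| ≤ h * ((1 - t) * A + t * B) := by
    intro t ht
    have := hpre a ha b hb t ht
    calc |D t| = h * |deriv f (a + t * h)| := by
          rw [hD]; simp [abs_mul, abs_of_pos hpos]
      _ ≤ h * ((1 - t) * A + t * B) := by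
          exact mul_le_mul_of_nonneg_left this hpos.le
  -- integrability of D
  have hDmeas : Measurable D :=
    ((measurable_deriv f).comp ((measurable_id.mul_const h).const_add a)).const_mul h
  have hDint : ∀ u v : ℝ, 0 ≤ u → u ≤ v → v ≤ 1 → IntervalIntegrable D volume u v := by
    intro u v hu huv hv1
    rw [intervalIntegrable_iff_integrableOn_Icc_of_le huv]
    apply Measure.integrableOn_of_bounded (M := h * (A + B)) (by simp)
      hDmeas.aestronglyMeasurable
    filter_upwards [ae_restrict_mem measurableSet_Icc] with t ht
    have ht' : t ∈ Icc (0:ℝ) 1 := ⟨le_trans hu ht.1, le_trans ht.2 hv1⟩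
    have := hDle t ht'
    have h2 : h * ((1 - t) * A + t * B) ≤ h * (A + B) := by
      apply mul_le_mul_of_nonneg_left _ hpos.le
      nlinarith [ht'.1, ht'.2]
    calc ‖D t‖ = |D t| := rfl
      _ ≤ h * (A + B) := le_trans this h2
  -- continuity / integrability of g
  have hgcont : ContinuousOn g (Icc (0:ℝ) 1) :=
    fun t ht => (hgD t ht).continuousAt.continuousWithinAt
  have hgint : ∀ u v : ℝ, 0 ≤ u → u ≤ v → v ≤ 1 → IntervalIntegrable g volume u v := by
    intro u v hu huv hv1
    exact (hgcont.mono (Icc_subset_Icc hu hv1)).intervalIntegrable_of_Icc huv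
  -- FTC pieces
  have int1 : IntervalIntegrable (fun t => (t - 1/6) * D t) volume 0 (1/2) :=
    (hDint 0 (1/2) le_rfl (by norm_num) (by norm_num)).continuousOn_mul
      (by fun_prop)
  have int2 : IntervalIntegrable (fun t => (t - 5/6) * D t) volume (1/2) 1 :=
    (hDint (1/2) 1 (by norm_num) (by norm_num) le_rfl).continuousOn_mul
      (by fun_prop)
  have hd1 : ∀ t ∈ uIcc (0:ℝ) (1/2),
      HasDerivAt (fun t : ℝ => (t - 1/6) * g t) (g t + (t - 1/6) * D t) t := by
    intro t ht
    rw [uIcc_of_le (by norm_num : (0:ℝ) ≤ 1/2)] at ht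
    have ht' : t ∈ Icc (0:ℝ) 1 := ⟨ht.1, le_trans ht.2 (by norm_num)⟩
    have := ((hasDerivAt_id t).sub_const (1/6)).mul (hgD t ht')
    refine this.congr_deriv ?_
    simp only [id_eq]
    ring
  have e1 : ∫ t in (0:ℝ)..(1/2), (g t + (t - 1/6) * D t)
      = ((1:ℝ)/2 - 1/6) * g (1/2) - ((0:ℝ) - 1/6) * g 0 := by
    rw [intervalIntegral.integral_eq_sub_of_hasDerivAt hd1
      ((hgint 0 (1/2) le_rfl (by norm_num) (by norm_num)).add int1)]
  have hd2 : ∀ t ∈ uIcc (1/2:ℝ) 1,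
      HasDerivAt (fun t : ℝ => (t - 5/6) * g t) (g t + (t - 5/6) * D t) t := by
    intro t ht
    rw [uIcc_of_le (by norm_num : (1/2:ℝ) ≤ 1)] at ht
    have ht' : t ∈ Icc (0:ℝ) 1 := ⟨le_trans (by norm_num) ht.1, ht.2⟩
    have := ((hasDerivAt_id t).sub_const (5/6)).mul (hgD t ht')
    refine this.congr_deriv ?_
    simp only [id_eq]
    ring
  have e2 : ∫ t in (1/2:ℝ)..1, (g t + (t - 5/6) * D t)
      = ((1:ℝ) - 5/6) * g 1 - ((1:ℝ)/2 - 5/6) * g (1/2) := by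
    rw [intervalIntegral.integral_eq_sub_of_hasDerivAt hd2
      ((hgint (1/2) 1 (by norm_num) (by norm_num) le_rfl).add int2)]
  rw [intervalIntegral.integral_add (hgint 0 (1/2) le_rfl (by norm_num) (by norm_num)) int1] at e1
  rw [intervalIntegral.integral_add (hgint (1/2) 1 (by norm_num) (by norm_num) le_rfl) int2] at e2
  have split : ∫ t in (0:ℝ)..1, g t
      = (∫ t in (0:ℝ)..(1/2), g t) + ∫ t in (1/2:ℝ)..1, g t :=
    (intervalIntegral.integral_add_adjacent_intervals
      (hgint 0 (1/2) le_rfl (by norm_num) (by norm_num))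
      (hgint (1/2) 1 (by norm_num) (by norm_num) le_rfl)).symm
  have key : (1/6 : ℝ) * (g 0 + 4 * g (1/2) + g 1) - ∫ t in (0:ℝ)..1, g t
      = (∫ t in (0:ℝ)..(1/2), (t - 1/6) * D t) + ∫ t in (1/2:ℝ)..1, (t - 5/6) * D t := by
    rw [split]; linarith [e1, e2]
  -- change of variables
  have hchg : ∫ t in (0:ℝ)..1, g t = (1/h) * ∫ x in a..(a + h), f x := by
    have h1 : ∫ t in (0:ℝ)..1, g t = ∫ t in (0:ℝ)..1, f (h * t + a) :=
      intervalIntegral.integral_congr fun t _ => by rw [hg]; ring_nf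
    rw [h1, intervalIntegral.integral_comp_mul_add f hη a]
    simp [smul_eq_mul, add_comm, one_div]
  -- bounds
  have habs1 : |∫ t in (0:ℝ)..(1/2), (t - 1/6) * D t|
      ≤ ∫ t in (0:ℝ)..(1/2), |t - 1/6| * (h * ((1 - t) * A + t * B)) := by
    calc |∫ t in (0:ℝ)..(1/2), (t - 1/6) * D t|
        ≤ ∫ t in (0:ℝ)..(1/2), |(t - 1/6) * D t| :=
          intervalIntegral.abs_integral_le_integral_abs (by norm_num)
      _ ≤ _ := by
          apply intervalIntegral.integral_mono_on (by norm_num) int1.abs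
            (by apply Continuous.intervalIntegrable; fun_prop)
          intro t ht
          have ht' : t ∈ Icc (0:ℝ) 1 := ⟨ht.1, le_trans ht.2 (by norm_num)⟩
          rw [abs_mul]
          exact mul_le_mul_of_nonneg_left (hDle t ht') (abs_nonneg _)
  have habs2 : |∫ t in (1/2:ℝ)..1, (t - 5/6) * D t|
      ≤ ∫ t in (1/2:ℝ)..1, |t - 5/6| * (h * ((1 - t) * A + t * B)) := by
    calc |∫ t in (1/2:ℝ)..1, (t - 5/6) * D t|
        ≤ ∫ t in (1/2:ℝ)..1, |(t - 5/6) * D t| :=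
          intervalIntegral.abs_integral_le_integral_abs (by norm_num)
      _ ≤ _ := by
          apply intervalIntegral.integral_mono_on (by norm_num) int2.abs
            (by apply Continuous.intervalIntegrable; fun_prop)
          intro t ht
          have ht' : t ∈ Icc (0:ℝ) 1 := ⟨le_trans (by norm_num) ht.1, ht.2⟩
          rw [abs_mul]
          exact mul_le_mul_of_nonneg_left (hDle t ht') (abs_nonneg _)
  -- compute the explicit integrals
  have c1 : ∫ t in (0:ℝ)..(1/2), |t - 1/6| * (h * ((1 - t) * A + t * B))
      = h * ((61/1296) * A + (29/1296) * B) := by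
    have s1 : ∫ t in (0:ℝ)..(1/6), |t - 1/6| * (h * ((1 - t) * A + t * B))
        = ∫ t in (0:ℝ)..(1/6), (h * A / 6 + (h * (B - 7 * A) / 6) * t + (h * (A - B)) * t ^ 2) := by
      apply intervalIntegral.integral_congr
      intro t ht
      rw [uIcc_of_le (by norm_num : (0:ℝ) ≤ 1/6)] at ht
      beta_reduce
      rw [abs_of_nonpos (by linarith [ht.2])]
      ring
    have s2 : ∫ t in (1/6:ℝ)..(1/2), |t - 1/6| * (h * ((1 - t) * A + t * B))
        = ∫ t in (1/6:ℝ)..(1/2), (-(h * A / 6) + (-(h * (B - 7 * A) / 6)) * t + (-(h * (A - B))) * t ^ 2) := by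
      apply intervalIntegral.integral_congr
      intro t ht
      rw [uIcc_of_le (by norm_num : (1/6:ℝ) ≤ 1/2)] at ht
      beta_reduce
      rw [abs_of_nonneg (by linarith [ht.1])]
      ring
    have hsplit : ∫ t in (0:ℝ)..(1/2), |t - 1/6| * (h * ((1 - t) * A + t * B))
        = (∫ t in (0:ℝ)..(1/6), |t - 1/6| * (h * ((1 - t) * A + t * B)))
          + ∫ t in (1/6:ℝ)..(1/2), |t - 1/6| * (h * ((1 - t) * A + t * B)) :=
      (intervalIntegral.integral_add_adjacent_intervals
        (by apply Continuous.intervalIntegrable; fun_prop)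
        (by apply Continuous.intervalIntegrable; fun_prop)).symm
    rw [hsplit, s1, s2, poly_int, poly_int]
    ring
  have c2 : ∫ t in (1/2:ℝ)..1, |t - 5/6| * (h * ((1 - t) * A + t * B))
      = h * ((29/1296) * A + (61/1296) * B) := by
    have s1 : ∫ t in (1/2:ℝ)..(5/6), |t - 5/6| * (h * ((1 - t) * A + t * B))
        = ∫ t in (1/2:ℝ)..(5/6), (5 * h * A / 6 + (h * (5 * B - 11 * A) / 6) * t + (h * (A - B)) * t ^ 2) := by
      apply intervalIntegral.integral_congr
      intro t ht
      rw [uIcc_of_le (by norm_num : (1/2:ℝ) ≤ 5/6)] at ht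
      beta_reduce
      rw [abs_of_nonpos (by linarith [ht.2])]
      ring
    have s2 : ∫ t in (5/6:ℝ)..1, |t - 5/6| * (h * ((1 - t) * A + t * B))
        = ∫ t in (5/6:ℝ)..1, (-(5 * h * A / 6) + (-(h * (5 * B - 11 * A) / 6)) * t + (-(h * (A - B))) * t ^ 2) := by
      apply intervalIntegral.integral_congr
      intro t ht
      rw [uIcc_of_le (by norm_num : (5/6:ℝ) ≤ 1)] at ht
      beta_reduce
      rw [abs_of_nonneg (by linarith [ht.1])]
      ring
    have hsplit : ∫ t in (1/2:ℝ)..1, |t - 5/6| * (h * ((1 - t) * A + t * B))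
        = (∫ t in (1/2:ℝ)..(5/6), |t - 5/6| * (h * ((1 - t) * A + t * B)))
          + ∫ t in (5/6:ℝ)..1, |t - 5/6| * (h * ((1 - t) * A + t * B)) :=
      (intervalIntegral.integral_add_adjacent_intervals
        (by apply Continuous.intervalIntegrable; fun_prop)
        (by apply Continuous.intervalIntegrable; fun_prop)).symm
    rw [hsplit, s1, s2, poly_int, poly_int]
    ring
  -- finish
  have hg0 : g 0 = f a := by rw [hg]; norm_num
  have hghalf : g (1/2) = f (a + h / 2) := by rw [hg]; ring_nf
  have hg1 : g 1 = f (a + h) := by rw [hg]; norm_num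
  rw [← hg0, ← hghalf, ← hg1, ← hchg, key]
  calc |(∫ t in (0:ℝ)..(1/2), (t - 1/6) * D t) + ∫ t in (1/2:ℝ)..1, (t - 5/6) * D t|
      ≤ |∫ t in (0:ℝ)..(1/2), (t - 1/6) * D t| + |∫ t in (1/2:ℝ)..1, (t - 5/6) * D t| :=
        abs_add_le _ _
    _ ≤ h * ((61/1296) * A + (29/1296) * B) + h * ((29/1296) * A + (61/1296) * B) := by
        rw [← c1, ← c2]; exact add_le_add habs1 habs2
    _ = 5/72 * h * (A + B) := by ring
end

section
/- Let I ⊆ ℝ be an open invex set with respect to η : I × I → ℝ₊, let f : I → ℝ be differentiable, a, b ∈ I with η(b,a) ≠ 0, and let q > 1 with p = q/(q−1). If |f'|^q is preinvex on I, then |(1/6)[f(a) + 4f(a + η(b,a)/2) + f(a + η(b,a))] − (1/η(b,a)) ∫_a^{a+η(b,a)} f(x) dx| ≤ η(b,a)·((1 + 2^{p+1})/(6^{p+1}(p+1)))^{1/p} · [ ((3/8)|f'(a)|^q + (1/8)|f'(b)|^q)^{1/q} + ((1/8)|f'(a)|^q + (3/8)|f'(b)|^q)^{1/q} ]. -/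
open Real MeasureTheory intervalIntegral Set

lemma aux_II {c d M : ℝ} {φ : ℝ → ℝ} (hm : Measurable φ) (hcd : c ≤ d)
    (hb : ∀ t ∈ Set.Icc c d, |φ t| ≤ M) : IntervalIntegrable φ volume c d := by
  rw [intervalIntegrable_iff, uIoc_of_le hcd]
  haveI : IsFiniteMeasure (volume.restrict (Set.Ioc c d)) :=
    ⟨by rw [Measure.restrict_apply_univ, Real.volume_Ioc]; exact ENNReal.ofReal_lt_top⟩
  refine (integrable_const M).mono' hm.aestronglyMeasurable.restrict ?_
  refine (ae_restrict_iff' measurableSet_Ioc).2 (Filter.Eventually.of_forall fun t ht => ?_)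
  simpa [Real.norm_eq_abs] using hb t ⟨ht.1.le, ht.2⟩

lemma aux_memLp {c d M : ℝ} {φ : ℝ → ℝ} {r : ENNReal}
    (hm : AEStronglyMeasurable φ (volume.restrict (Set.Ioc c d)))
    (hb : ∀ t ∈ Set.Ioc c d, |φ t| ≤ M) : MemLp φ r (volume.restrict (Set.Ioc c d)) := by
  haveI : IsFiniteMeasure (volume.restrict (Set.Ioc c d)) :=
    ⟨by rw [Measure.restrict_apply_univ, Real.volume_Ioc]; exact ENNReal.ofReal_lt_top⟩
  exact MemLp.of_bound hm M ((ae_restrict_iff' measurableSet_Ioc).2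
    (Filter.Eventually.of_forall fun t ht => by simpa [Real.norm_eq_abs] using hb t ht))

lemma aux_holder {c d pp qq M : ℝ} (hcd : c ≤ d) (hpq : pp.HolderConjugate qq)
    {u v : ℝ → ℝ} (hu : Continuous u) (hv : Measurable v)
    (hM : ∀ t ∈ Set.Icc c d, |v t| ≤ M) :
    ∫ t in c..d, |u t| * |v t| ≤
      (∫ t in c..d, |u t| ^ pp) ^ (1/pp) * (∫ t in c..d, |v t| ^ qq) ^ (1/qq) := by
  rw [integral_of_le hcd, integral_of_le hcd, integral_of_le hcd]
  obtain ⟨C, hC⟩ := (isCompact_Icc (a := c) (b := d)).exists_bound_of_continuousOn hu.continuousOn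
  refine integral_mul_le_Lp_mul_Lq_of_nonneg hpq (Filter.Eventually.of_forall fun t => abs_nonneg _)
    (Filter.Eventually.of_forall fun t => abs_nonneg _) ?_ ?_
  · exact aux_memLp hu.abs.aestronglyMeasurable.restrict
      (fun t ht => by rw [abs_abs]; simpa [Real.norm_eq_abs] using hC t (Ioc_subset_Icc_self ht))
  · exact aux_memLp hv.abs.aestronglyMeasurable.restrict
      (fun t ht => by rw [abs_abs]; exact hM t (Ioc_subset_Icc_self ht))

lemma aux_abs_rpow {c d e r : ℝ} (hr : 0 < r) (h1 : c ≤ e) (h2 : e ≤ d) :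
    ∫ t in c..d, |t - e| ^ r = ((e - c) ^ (r+1) + (d - e) ^ (r+1)) / (r+1) := by
  have hr1 : r + 1 ≠ 0 := by positivity
  have hcont : Continuous fun t : ℝ => |t - e| ^ r :=
    ((continuous_id.sub continuous_const).abs).rpow_const fun x => Or.inr hr.le
  rw [← integral_add_adjacent_intervals (b := e) (hcont.intervalIntegrable _ _)
    (hcont.intervalIntegrable _ _)]
  have hA : ∫ t in c..e, |t - e| ^ r = (e - c) ^ (r+1) / (r+1) := by
    have he : ∫ t in c..e, |t - e| ^ r = ∫ t in c..e, (e - t) ^ r := by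
      refine integral_congr fun t ht => ?_
      rw [uIcc_of_le h1] at ht
      rw [abs_of_nonpos (by linarith [ht.2]), neg_sub]
    rw [he, integral_comp_sub_left (fun x => x ^ r) e, sub_self,
      integral_rpow (Or.inl (by linarith)), Real.zero_rpow hr1, sub_zero]
  have hB : ∫ t in e..d, |t - e| ^ r = (d - e) ^ (r+1) / (r+1) := by
    have he : ∫ t in e..d, |t - e| ^ r = ∫ t in e..d, (t - e) ^ r := by
      refine integral_congr fun t ht => ?_
      rw [uIcc_of_le h2] at ht
      rw [abs_of_nonneg (by linarith [ht.1])]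
    rw [he, integral_comp_sub_right (fun x => x ^ r) e, sub_self,
      integral_rpow (Or.inl (by linarith)), Real.zero_rpow hr1, sub_zero]
  rw [hA, hB]; ring

theorem stmt2 (I : Set ℝ) (η : ℝ → ℝ → ℝ) (f : ℝ → ℝ) (a b : ℝ)
    (hI : IsOpen I)
    (hinv : ∀ u ∈ I, ∀ v ∈ I, ∀ t ∈ Set.Icc (0:ℝ) 1, u + t * η v u ∈ I)
    (hηnn : ∀ u ∈ I, ∀ v ∈ I, 0 ≤ η v u)
    (ha : a ∈ I) (hb : b ∈ I) (hη : η b a ≠ 0)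
    (hf : DifferentiableOn ℝ f I)
    (q p : ℝ) (hq : 1 < q) (hp : p = q / (q - 1))
    (hpre : ∀ u ∈ I, ∀ v ∈ I, ∀ t ∈ Set.Icc (0:ℝ) 1,
      |deriv f (u + t * η v u)| ^ q ≤ (1 - t) * |deriv f u| ^ q + t * |deriv f v| ^ q) :
    |(1/6 : ℝ) * (f a + 4 * f (a + η b a / 2) + f (a + η b a)) -
      (1 / η b a) * ∫ x in a..(a + η b a), f x| ≤ η b a * ((1 + 2 ^ (p + 1)) / (6 ^ (p + 1) * (p + 1))) ^ (1/p) *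
      (((3/8) * |deriv f a| ^ q + (1/8) * |deriv f b| ^ q) ^ (1/q) +
       ((1/8) * |deriv f a| ^ q + (3/8) * |deriv f b| ^ q) ^ (1/q)) := by
  have hq0 : q ≠ 0 := by positivity
  have hqnn : (0:ℝ) ≤ 1/q := by positivity
  have hpq : p.HolderConjugate q := hp ▸ (Real.HolderConjugate.conjExponent hq).symm
  have hp1 : 1 < p := hpq.lt
  have hp0 : 0 < p := by linarith
  have hpos : 0 < η b a := lt_of_le_of_ne (hηnn a ha b hb) (Ne.symm hη)
  set h : ℝ := η b a with hh
  set A : ℝ := |deriv f a| ^ q with hA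
  set B : ℝ := |deriv f b| ^ q with hB
  have hAnn : 0 ≤ A := Real.rpow_nonneg (abs_nonneg _) q
  have hBnn : 0 ≤ B := Real.rpow_nonneg (abs_nonneg _) q
  have mem : ∀ t ∈ Set.Icc (0:ℝ) 1, a + t * h ∈ I := fun t ht => hinv a ha b hb t ht
  set g : ℝ → ℝ := fun t => f (a + t * h) with hg_def
  set g' : ℝ → ℝ := fun t => deriv f (a + t * h) * h with hg'_def
  -- derivative of g
  have hg : ∀ t ∈ Set.Icc (0:ℝ) 1, HasDerivAt g (g' t) t := by
    intro t ht
    have h1 : HasDerivAt (fun t : ℝ => a + t * h) h t := by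
      simpa using ((hasDerivAt_id t).mul_const h).const_add a
    have h2 : DifferentiableAt ℝ f (a + t * h) := hf.differentiableAt (hI.mem_nhds (mem t ht))
    exact (h2.hasDerivAt.comp t h1)
  -- preinvexity bound along the path
  have hpre' : ∀ t ∈ Set.Icc (0:ℝ) 1, |deriv f (a + t * h)| ^ q ≤ (1 - t) * A + t * B :=
    fun t ht => hpre a ha b hb t ht
  -- uniform bound on |deriv f| along the path
  have hbd : ∀ t ∈ Set.Icc (0:ℝ) 1, |deriv f (a + t * h)| ≤ (A + B) ^ (1/q) := by
    intro t ht
    have h1 := hpre' t ht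
    have h2 : |deriv f (a + t * h)| ^ q ≤ A + B := by nlinarith [ht.1, ht.2]
    calc |deriv f (a + t * h)| = (|deriv f (a + t * h)| ^ q) ^ (1/q) := by
          rw [← Real.rpow_mul (abs_nonneg _), mul_one_div_cancel hq0, Real.rpow_one]
      _ ≤ (A + B) ^ (1/q) := Real.rpow_le_rpow (Real.rpow_nonneg (abs_nonneg _) q) h2 hqnn
  have hg'bd : ∀ t ∈ Set.Icc (0:ℝ) 1, |g' t| ≤ (A + B) ^ (1/q) * h := by
    intro t ht
    rw [hg'_def]
    simp only [abs_mul, abs_of_pos hpos]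
    exact mul_le_mul_of_nonneg_right (hbd t ht) hpos.le
  have hmeas : Measurable g' :=
    ((measurable_deriv f).comp ((measurable_id.mul_const h).const_add a)).mul_const h
  -- integrability of g'
  have hII1 : IntervalIntegrable g' volume 0 (1/2) :=
    aux_II hmeas (by norm_num) (fun t ht => hg'bd t ⟨ht.1, by linarith [ht.2]⟩)
  have hII2 : IntervalIntegrable g' volume (1/2) 1 :=
    aux_II hmeas (by norm_num) (fun t ht => hg'bd t ⟨by linarith [ht.1], ht.2⟩)
  -- continuity / integrability of g
  have hgc : ContinuousOn g (Set.Icc 0 1) := fun t ht => (hg t ht).continuousAt.continuousWithinAt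
  have hgint1 : IntervalIntegrable g volume 0 (1/2) := by
    apply ContinuousOn.intervalIntegrable
    apply hgc.mono
    rw [uIcc_of_le (by norm_num)]
    exact Icc_subset_Icc (le_refl _) (by norm_num)
  have hgint2 : IntervalIntegrable g volume (1/2) 1 := by
    apply ContinuousOn.intervalIntegrable
    apply hgc.mono
    rw [uIcc_of_le (by norm_num)]
    exact Icc_subset_Icc (by norm_num) (le_refl _)
  -- integration by parts on each half
  have ibp1 : ∫ t in (0:ℝ)..(1/2), (t - 1/6) * g' t
      = (1/3) * g (1/2) + (1/6) * g 0 - ∫ t in (0:ℝ)..(1/2), g t := by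
    have := intervalIntegral.integral_mul_deriv_eq_deriv_mul
      (u := fun t : ℝ => t - 1/6) (u' := fun _ => (1:ℝ)) (v := g) (v' := g')
      (fun x _ => (hasDerivAt_id x).sub_const _)
      (fun x hx => hg x (by rw [uIcc_of_le (by norm_num)] at hx; exact ⟨hx.1, by linarith [hx.2]⟩))
      intervalIntegrable_const hII1
    rw [this]
    simp only [one_mul]
    ring
  have ibp2 : ∫ t in (1/2:ℝ)..1, (t - 5/6) * g' t
      = (1/6) * g 1 + (1/3) * g (1/2) - ∫ t in (1/2:ℝ)..1, g t := by
    have := intervalIntegral.integral_mul_deriv_eq_deriv_mul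
      (u := fun t : ℝ => t - 5/6) (u' := fun _ => (1:ℝ)) (v := g) (v' := g')
      (fun x _ => (hasDerivAt_id x).sub_const _)
      (fun x hx => hg x (by rw [uIcc_of_le (by norm_num)] at hx; exact ⟨by linarith [hx.1], hx.2⟩))
      intervalIntegrable_const hII2
    rw [this]
    simp only [one_mul]
    ring
  -- key identity
  have key : (1/6) * (g 0 + 4 * g (1/2) + g 1) - ∫ t in (0:ℝ)..1, g t
      = (∫ t in (0:ℝ)..(1/2), (t - 1/6) * g' t) + ∫ t in (1/2:ℝ)..1, (t - 5/6) * g' t := by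
    rw [ibp1, ibp2, ← integral_add_adjacent_intervals hgint1 hgint2]
    ring
  -- change of variables
  have hcv : ∫ t in (0:ℝ)..1, g t = (1 / h) * ∫ x in a..(a + h), f x := by
    have e : g = fun t => f (a + h * t) := by funext t; rw [hg_def]; ring_nf
    rw [e, integral_comp_add_mul f (ne_of_gt hpos) a]
    norm_num
  -- endpoint values
  have e0 : g 0 = f a := by rw [hg_def]; norm_num
  have eh : g (1/2) = f (a + h / 2) := by rw [hg_def]; ring_nf
  have e1 : g 1 = f (a + h) := by rw [hg_def]; norm_num
  set X : ℝ := (3/8) * A + (1/8) * B with hX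
  set Y : ℝ := (1/8) * A + (3/8) * B with hY
  set Cp : ℝ := (1 + 2 ^ (p + 1)) / (6 ^ (p + 1) * (p + 1)) with hCp
  have hXnn : 0 ≤ X := by rw [hX]; positivity
  have hYnn : 0 ≤ Y := by rw [hY]; positivity
  have h6 : ((1:ℝ)/6) ^ (p+1) = 1 / 6 ^ (p+1) := by
    rw [Real.div_rpow zero_le_one (by norm_num : (0:ℝ) ≤ 6), Real.one_rpow]
  have h3 : ((1:ℝ)/3) ^ (p+1) = 2 ^ (p+1) / 6 ^ (p+1) := by
    rw [show (1:ℝ)/3 = 2/6 by norm_num, Real.div_rpow (by norm_num) (by norm_num)]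
  have h6pos : (0:ℝ) < 6 ^ (p+1) := Real.rpow_pos_of_pos (by norm_num) _
  have hCpnn : 0 ≤ Cp ^ (1/p) := Real.rpow_nonneg (by rw [hCp]; positivity) _
  have hP1 : ∫ t in (0:ℝ)..(1/2), |t - 1/6| ^ p = Cp := by
    rw [aux_abs_rpow hp0 (by norm_num) (by norm_num),
      show (1/6 - 0 : ℝ) = 1/6 by norm_num, show (1/2 - 1/6 : ℝ) = 1/3 by norm_num,
      h6, h3, hCp]
    field_simp
  have hP2 : ∫ t in (1/2:ℝ)..1, |t - 5/6| ^ p = Cp := by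
    rw [aux_abs_rpow hp0 (by norm_num) (by norm_num),
      show (5/6 - 1/2 : ℝ) = 1/3 by norm_num, show (1 - 5/6 : ℝ) = 1/6 by norm_num,
      h6, h3, hCp]
    field_simp
    ring
  -- pointwise bound for |g'|^q
  have hptw : ∀ t ∈ Set.Icc (0:ℝ) 1, |g' t| ^ q ≤ ((1 - t) * A + t * B) * h ^ q := by
    intro t ht
    have h1 : |g' t| ^ q = |deriv f (a + t * h)| ^ q * h ^ q := by
      rw [hg'_def]
      simp only [abs_mul, abs_of_pos hpos]
      exact Real.mul_rpow (abs_nonneg _) hpos.le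
    rw [h1]
    exact mul_le_mul_of_nonneg_right (hpre' t ht) (Real.rpow_nonneg hpos.le q)
  have hq_int : IntervalIntegrable (fun t => |g' t| ^ q) volume 0 (1/2) := by
    refine aux_II (M := ((A + B) ^ (1/q) * h) ^ q) (hmeas.abs.pow measurable_const) (by norm_num) ?_
    intro t ht
    rw [abs_of_nonneg (Real.rpow_nonneg (abs_nonneg _) q)]
    exact Real.rpow_le_rpow (abs_nonneg _) (hg'bd t ⟨ht.1, by linarith [ht.2]⟩) (by positivity)
  have hq_int2 : IntervalIntegrable (fun t => |g' t| ^ q) volume (1/2) 1 := by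
    refine aux_II (M := ((A + B) ^ (1/q) * h) ^ q) (hmeas.abs.pow measurable_const) (by norm_num) ?_
    intro t ht
    rw [abs_of_nonneg (Real.rpow_nonneg (abs_nonneg _) q)]
    exact Real.rpow_le_rpow (abs_nonneg _) (hg'bd t ⟨by linarith [ht.1], ht.2⟩) (by positivity)
  have hw1 : ∫ t in (0:ℝ)..(1/2), |g' t| ^ q ≤ h ^ q * X := by
    have step : ∫ t in (0:ℝ)..(1/2), |g' t| ^ q
        ≤ ∫ t in (0:ℝ)..(1/2), ((1 - t) * A + t * B) * h ^ q := by
      refine intervalIntegral.integral_mono_on (by norm_num) hq_int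
        (Continuous.intervalIntegrable ((((continuous_const.sub continuous_id).mul continuous_const).add (continuous_id.mul continuous_const)).mul continuous_const) _ _) ?_
      exact fun t ht => hptw t ⟨ht.1, by linarith [ht.2]⟩
    refine step.trans (le_of_eq ?_)
    have e : (fun t : ℝ => ((1 - t) * A + t * B) * h ^ q)
        = fun t : ℝ => A * h ^ q + t * ((B - A) * h ^ q) := by funext t; ring
    rw [e, intervalIntegral.integral_add intervalIntegrable_const
      (Continuous.intervalIntegrable (by fun_prop : Continuous fun t : ℝ => t * ((B - A) * h ^ q)) _ _),
      intervalIntegral.integral_const, intervalIntegral.integral_mul_const, integral_id, hX]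
    simp only [smul_eq_mul]
    ring
  have hw2 : ∫ t in (1/2:ℝ)..1, |g' t| ^ q ≤ h ^ q * Y := by
    have step : ∫ t in (1/2:ℝ)..1, |g' t| ^ q
        ≤ ∫ t in (1/2:ℝ)..1, ((1 - t) * A + t * B) * h ^ q := by
      refine intervalIntegral.integral_mono_on (by norm_num) hq_int2
        (Continuous.intervalIntegrable ((((continuous_const.sub continuous_id).mul continuous_const).add (continuous_id.mul continuous_const)).mul continuous_const) _ _) ?_
      exact fun t ht => hptw t ⟨by linarith [ht.1], ht.2⟩
    refine step.trans (le_of_eq ?_)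
    have e : (fun t : ℝ => ((1 - t) * A + t * B) * h ^ q)
        = fun t : ℝ => A * h ^ q + t * ((B - A) * h ^ q) := by funext t; ring
    rw [e, intervalIntegral.integral_add intervalIntegrable_const
      (Continuous.intervalIntegrable (by fun_prop : Continuous fun t : ℝ => t * ((B - A) * h ^ q)) _ _),
      intervalIntegral.integral_const, intervalIntegral.integral_mul_const, integral_id, hY]
    simp only [smul_eq_mul]
    ring
  have hpow : ∀ Z : ℝ, 0 ≤ Z → (h ^ q * Z) ^ (1/q) = h * Z ^ (1/q) := by
    intro Z hZ
    rw [Real.mul_rpow (Real.rpow_nonneg hpos.le q) hZ, ← Real.rpow_mul hpos.le,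
      mul_one_div_cancel hq0, Real.rpow_one]
  have hr1 : (∫ t in (0:ℝ)..(1/2), |g' t| ^ q) ^ (1/q) ≤ h * X ^ (1/q) := by
    rw [← hpow X hXnn]
    refine Real.rpow_le_rpow ?_ hw1 hqnn
    exact intervalIntegral.integral_nonneg (by norm_num)
      (fun t _ => Real.rpow_nonneg (abs_nonneg _) q)
  have hr2 : (∫ t in (1/2:ℝ)..1, |g' t| ^ q) ^ (1/q) ≤ h * Y ^ (1/q) := by
    rw [← hpow Y hYnn]
    refine Real.rpow_le_rpow ?_ hw2 hqnn
    exact intervalIntegral.integral_nonneg (by norm_num)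
      (fun t _ => Real.rpow_nonneg (abs_nonneg _) q)
  -- Hölder on each half
  have hH1 : ∫ t in (0:ℝ)..(1/2), |t - 1/6| * |g' t|
      ≤ Cp ^ (1/p) * (∫ t in (0:ℝ)..(1/2), |g' t| ^ q) ^ (1/q) := by
    rw [← hP1]
    exact aux_holder (by norm_num) hpq (continuous_id.sub continuous_const) hmeas
      (fun t ht => hg'bd t ⟨ht.1, by linarith [ht.2]⟩)
  have hH2 : ∫ t in (1/2:ℝ)..1, |t - 5/6| * |g' t|
      ≤ Cp ^ (1/p) * (∫ t in (1/2:ℝ)..1, |g' t| ^ q) ^ (1/q) := by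
    rw [← hP2]
    exact aux_holder (by norm_num) hpq (continuous_id.sub continuous_const) hmeas
      (fun t ht => hg'bd t ⟨by linarith [ht.1], ht.2⟩)
  have habs1 : |∫ t in (0:ℝ)..(1/2), (t - 1/6) * g' t|
      ≤ ∫ t in (0:ℝ)..(1/2), |t - 1/6| * |g' t| := by
    refine (intervalIntegral.abs_integral_le_integral_abs (by norm_num)).trans (le_of_eq ?_)
    simp_rw [abs_mul]
  have habs2 : |∫ t in (1/2:ℝ)..1, (t - 5/6) * g' t|
      ≤ ∫ t in (1/2:ℝ)..1, |t - 5/6| * |g' t| := by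
    refine (intervalIntegral.abs_integral_le_integral_abs (by norm_num)).trans (le_of_eq ?_)
    simp_rw [abs_mul]
  calc |(1/6 : ℝ) * (f a + 4 * f (a + h / 2) + f (a + h)) - (1 / h) * ∫ x in a..(a + h), f x|
      = |(1/6) * (g 0 + 4 * g (1/2) + g 1) - ∫ t in (0:ℝ)..1, g t| := by
        rw [e0, eh, e1, hcv]
    _ = |(∫ t in (0:ℝ)..(1/2), (t - 1/6) * g' t) + ∫ t in (1/2:ℝ)..1, (t - 5/6) * g' t| := by
        rw [key]
    _ ≤ |∫ t in (0:ℝ)..(1/2), (t - 1/6) * g' t| + |∫ t in (1/2:ℝ)..1, (t - 5/6) * g' t| :=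
        abs_add_le _ _
    _ ≤ (∫ t in (0:ℝ)..(1/2), |t - 1/6| * |g' t|) + ∫ t in (1/2:ℝ)..1, |t - 5/6| * |g' t| :=
        add_le_add habs1 habs2
    _ ≤ Cp ^ (1/p) * (∫ t in (0:ℝ)..(1/2), |g' t| ^ q) ^ (1/q)
        + Cp ^ (1/p) * (∫ t in (1/2:ℝ)..1, |g' t| ^ q) ^ (1/q) := add_le_add hH1 hH2
    _ ≤ Cp ^ (1/p) * (h * X ^ (1/q)) + Cp ^ (1/p) * (h * Y ^ (1/q)) :=
        add_le_add (mul_le_mul_of_nonneg_left hr1 hCpnn) (mul_le_mul_of_nonneg_left hr2 hCpnn)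
    _ = h * Cp ^ (1/p) * (X ^ (1/q) + Y ^ (1/q)) := by ring
end

section
/- Let I ⊆ ℝ be an open invex set with respect to η : I × I → ℝ₊, let f : I → ℝ be differentiable, a, b ∈ I with η(b,a) ≠ 0, and let q > 1 with p = q/(q−1). If |f'|^q is preinvex on I, then |(1/6)[f(a) + 4f(a + η(b,a)/2) + f(a + η(b,a))] − (1/η(b,a)) ∫_a^{a+η(b,a)} f(x) dx| ≤ η(b,a)·(2(1 + 2^{p+1})/(6^{p+1}(p+1)))^{1/p} · ((|f'(a)|^q + |f'(b)|^q)/2)^{1/q}. -/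
open Real MeasureTheory intervalIntegral Set
set_option maxHeartbeats 1000000

lemma my_intInt_bdd {f : ℝ → ℝ} (hm : Measurable f) {a b C : ℝ}
    (hC : ∀ x ∈ Set.uIcc a b, |f x| ≤ C) : IntervalIntegrable f volume a b := by
  rw [intervalIntegrable_iff]
  refine Integrable.mono' (g := fun _ => C)
    (integrableOn_const measure_Ioc_lt_top.ne) hm.aestronglyMeasurable.restrict ?_
  filter_upwards [ae_restrict_mem measurableSet_uIoc] with x hx
  simpa using hC x (uIoc_subset_uIcc hx)

lemma my_uIcc_sub {c d : ℝ} (hc : c ∈ Set.Icc (0:ℝ) 1) (hd : d ∈ Set.Icc (0:ℝ) 1) :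
    Set.uIcc c d ⊆ Set.Icc (0:ℝ) 1 := by
  have := Set.uIcc_subset_uIcc (Set.mem_uIcc.mpr (Or.inl ⟨hc.1, hc.2⟩))
    (Set.mem_uIcc.mpr (Or.inl ⟨hd.1, hd.2⟩))
  rwa [Set.uIcc_of_le (by norm_num : (0:ℝ) ≤ 1)] at this

lemma kernel_piece (c d e : ℝ) (hp : 0 ≤ e) (hcd : c ≤ d) :
    ∫ t in c..d, |t - c| ^ e = (d - c) ^ (e + 1) / (e + 1) := by
  have : ∀ t ∈ Set.uIcc c d, |t - c| ^ e = (t - c) ^ e := by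
    intro t ht
    rw [Set.uIcc_of_le hcd] at ht
    rw [abs_of_nonneg (by linarith [ht.1])]
  rw [intervalIntegral.integral_congr this,
    intervalIntegral.integral_comp_sub_right (fun x => x ^ e) c]
  rw [integral_rpow (Or.inl (by linarith))]
  simp [Real.zero_rpow (by positivity : e + 1 ≠ 0)]

lemma kernel_piece' (c d e : ℝ) (hp : 0 ≤ e) (hcd : c ≤ d) :
    ∫ t in c..d, |t - d| ^ e = (d - c) ^ (e + 1) / (e + 1) := by
  have : ∀ t ∈ Set.uIcc c d, |t - d| ^ e = |d - t| ^ e := by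
    intro t _; rw [abs_sub_comm]
  rw [intervalIntegral.integral_congr this,
    intervalIntegral.integral_comp_sub_left (fun x => |x| ^ e) d]
  have := kernel_piece 0 (d - c) e hp (by linarith)
  simpa using this

noncomputable def simpK : ℝ → ℝ := fun t => if t ≤ 1/2 then t - 1/6 else t - 5/6

lemma simpK_meas : Measurable simpK := by
  unfold simpK
  exact Measurable.ite (measurableSet_le measurable_id measurable_const)
    (by fun_prop) (by fun_prop)

lemma simpK_abs_le {t : ℝ} (ht : t ∈ Set.Icc (0:ℝ) 1) : |simpK t| ≤ 1 := by
  unfold simpK; obtain ⟨h0, h1⟩ := ht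
  split_ifs with h <;> rw [abs_le] <;> constructor <;> linarith

lemma simpK_integral (p : ℝ) (hp1 : 1 < p) :
    ∫ t in (0:ℝ)..1, |simpK t| ^ p = 2 * (1 + 2 ^ (p + 1)) / (6 ^ (p + 1) * (p + 1)) := by
  have hp0 : (0:ℝ) ≤ p := by linarith
  have hmeas : Measurable (fun t => |simpK t| ^ p) := by
    have := simpK_meas; fun_prop
  have hbd : ∀ (c d : ℝ), c ∈ Set.Icc (0:ℝ) 1 → d ∈ Set.Icc (0:ℝ) 1 →
      IntervalIntegrable (fun t => |simpK t| ^ p) volume c d := by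
    intro c d hc hd
    refine my_intInt_bdd hmeas (C := 1) ?_
    intro x hx
    have hx' : x ∈ Set.Icc (0:ℝ) 1 := my_uIcc_sub hc hd hx
    rw [abs_of_nonneg (by positivity)]
    exact Real.rpow_le_one (abs_nonneg _) (simpK_abs_le hx') hp0
  have e1 : ∫ t in (0:ℝ)..(1/6), |simpK t| ^ p = ((1:ℝ)/6) ^ (p + 1) / (p + 1) := by
    have : ∀ t ∈ Set.uIcc (0:ℝ) (1/6), |simpK t| ^ p = |t - 1/6| ^ p := by
      intro t ht
      rw [Set.uIcc_of_le (by norm_num)] at ht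
      unfold simpK; rw [if_pos (by linarith [ht.2])]
    rw [intervalIntegral.integral_congr this, kernel_piece' 0 (1/6) p hp0 (by norm_num)]
    norm_num
  have e2 : ∫ t in (1/6:ℝ)..(1/2), |simpK t| ^ p = ((1:ℝ)/3) ^ (p + 1) / (p + 1) := by
    have : ∀ t ∈ Set.uIcc (1/6:ℝ) (1/2), |simpK t| ^ p = |t - 1/6| ^ p := by
      intro t ht
      rw [Set.uIcc_of_le (by norm_num)] at ht
      unfold simpK; rw [if_pos (by linarith [ht.2])]
    rw [intervalIntegral.integral_congr this, kernel_piece (1/6) (1/2) p hp0 (by norm_num)]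
    norm_num
  have e3 : ∫ t in (1/2:ℝ)..(5/6), |simpK t| ^ p = ((1:ℝ)/3) ^ (p + 1) / (p + 1) := by
    have : ∀ t ∈ Set.uIcc (1/2:ℝ) (5/6), |simpK t| ^ p = |t - 5/6| ^ p := by
      intro t ht
      rw [Set.uIcc_of_le (by norm_num)] at ht
      unfold simpK
      split_ifs with h
      · have : t = 1/2 := le_antisymm h ht.1
        subst this; norm_num
      · rfl
    rw [intervalIntegral.integral_congr this, kernel_piece' (1/2) (5/6) p hp0 (by norm_num)]
    norm_num
  have e4 : ∫ t in (5/6:ℝ)..1, |simpK t| ^ p = ((1:ℝ)/6) ^ (p + 1) / (p + 1) := by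
    have : ∀ t ∈ Set.uIcc (5/6:ℝ) 1, |simpK t| ^ p = |t - 5/6| ^ p := by
      intro t ht
      rw [Set.uIcc_of_le (by norm_num)] at ht
      unfold simpK; rw [if_neg (by intro h; linarith [ht.1])]
    rw [intervalIntegral.integral_congr this, kernel_piece (5/6) 1 p hp0 (by norm_num)]
    norm_num
  have split1 := intervalIntegral.integral_add_adjacent_intervals
    (hbd 0 (1/6) (by norm_num) (by norm_num)) (hbd (1/6) (1/2) (by norm_num) (by norm_num))
  have split2 := intervalIntegral.integral_add_adjacent_intervals
    (hbd 0 (1/2) (by norm_num) (by norm_num)) (hbd (1/2) (5/6) (by norm_num) (by norm_num))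
  have split3 := intervalIntegral.integral_add_adjacent_intervals
    (hbd 0 (5/6) (by norm_num) (by norm_num)) (hbd (5/6) 1 (by norm_num) (by norm_num))
  rw [← split3, ← split2, ← split1, e1, e2, e3, e4]
  have h6 : ((1:ℝ)/6) ^ (p+1) = 1 / 6 ^ (p+1) := by
    rw [Real.div_rpow (by norm_num) (by norm_num), Real.one_rpow]
  have h3 : ((1:ℝ)/3) ^ (p+1) = 2 ^ (p+1) / 6 ^ (p+1) := by
    rw [show (1:ℝ)/3 = 2/6 by norm_num, Real.div_rpow (by norm_num) (by norm_num)]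
  rw [h6, h3]
  have hp1' : p + 1 ≠ 0 := by linarith
  have h6p : (6:ℝ) ^ (p+1) ≠ 0 := by positivity
  field_simp
  ring

lemma simpson_identity (f g : ℝ → ℝ) (a h : ℝ) (hh : 0 < h)
    (hder : ∀ t ∈ Set.Icc (0:ℝ) 1, HasDerivAt f (g t) (a + t * h))
    (hgint : ∀ c d : ℝ, c ∈ Set.Icc (0:ℝ) 1 → d ∈ Set.Icc (0:ℝ) 1 →
      IntervalIntegrable (fun t => simpK t * g t) volume c d)
    (hgint' : ∀ c d : ℝ, c ∈ Set.Icc (0:ℝ) 1 → d ∈ Set.Icc (0:ℝ) 1 →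
      IntervalIntegrable g volume c d) :
    h * ∫ t in (0:ℝ)..1, simpK t * g t
      = (1/6) * (f a + 4 * f (a + h/2) + f (a + h)) - (1/h) * ∫ x in a..(a + h), f x := by
  set v : ℝ → ℝ := fun t => f (a + t * h) with hv
  have hvd : ∀ t ∈ Set.Icc (0:ℝ) 1, HasDerivAt v (h * g t) t := by
    intro t ht
    have haff : HasDerivAt (fun t : ℝ => a + t * h) h t := by
      simpa using ((hasDerivAt_id t).mul_const h).const_add a
    have H := (hder t ht).comp t haff
    rw [show h * g t = g t * h from mul_comm _ _]
    exact H
  have hvcont : ContinuousOn v (Set.Icc (0:ℝ) 1) :=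
    fun t ht => ((hvd t ht).continuousAt).continuousWithinAt
  have hvint : ∀ c d : ℝ, c ∈ Set.Icc (0:ℝ) 1 → d ∈ Set.Icc (0:ℝ) 1 →
      IntervalIntegrable v volume c d := by
    intro c d hc hd
    exact (hvcont.mono (my_uIcc_sub hc hd)).intervalIntegrable
  have sub01 : Set.uIcc (0:ℝ) (1/2) ⊆ Set.Icc (0:ℝ) 1 := my_uIcc_sub (by norm_num) (by norm_num)
  have sub12 : Set.uIcc (1/2:ℝ) 1 ⊆ Set.Icc (0:ℝ) 1 := my_uIcc_sub (by norm_num) (by norm_num)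
  have ibp1 : ∫ t in (0:ℝ)..(1/2), (t - 1/6) * (h * g t)
      = (1/3) * v (1/2) + (1/6) * v 0 - ∫ t in (0:ℝ)..(1/2), v t := by
    have := intervalIntegral.integral_mul_deriv_eq_deriv_mul
      (u := fun t => t - 1/6) (u' := fun _ => (1:ℝ)) (v := v) (v' := fun t => h * g t)
      (a := (0:ℝ)) (b := 1/2)
      (fun x hx => by simpa using ((hasDerivAt_id x).sub_const (1/6)))
      (fun x hx => hvd x (sub01 hx))
      (intervalIntegrable_const)
      (((hgint' 0 (1/2) (by norm_num) (by norm_num)).const_mul h))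
    rw [this]; simp only [one_mul]; norm_num
  have ibp2 : ∫ t in (1/2:ℝ)..1, (t - 5/6) * (h * g t)
      = (1/6) * v 1 + (1/3) * v (1/2) - ∫ t in (1/2:ℝ)..1, v t := by
    have := intervalIntegral.integral_mul_deriv_eq_deriv_mul
      (u := fun t => t - 5/6) (u' := fun _ => (1:ℝ)) (v := v) (v' := fun t => h * g t)
      (a := (1/2:ℝ)) (b := 1)
      (fun x hx => by simpa using ((hasDerivAt_id x).sub_const (5/6)))
      (fun x hx => hvd x (sub12 hx))
      (intervalIntegrable_const)
      (((hgint' (1/2) 1 (by norm_num) (by norm_num)).const_mul h))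
    rw [this]; simp only [one_mul]; norm_num
  have split : ∫ t in (0:ℝ)..1, simpK t * g t
      = (∫ t in (0:ℝ)..(1/2), (t - 1/6) * g t) + ∫ t in (1/2:ℝ)..1, (t - 5/6) * g t := by
    rw [← intervalIntegral.integral_add_adjacent_intervals
      (hgint 0 (1/2) (by norm_num) (by norm_num)) (hgint (1/2) 1 (by norm_num) (by norm_num))]
    congr 1
    · refine intervalIntegral.integral_congr fun t ht => ?_
      rw [Set.uIcc_of_le (by norm_num)] at ht
      unfold simpK; rw [if_pos ht.2]
    · refine intervalIntegral.integral_congr_ae ?_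
      filter_upwards [] with t
      intro ht
      rw [Set.uIoc_of_le (by norm_num)] at ht
      unfold simpK; rw [if_neg (not_le.mpr ht.1)]
  have hsub : ∫ t in (0:ℝ)..1, v t = (1/h) * ∫ x in a..(a + h), f x := by
    have : ∀ t : ℝ, v t = f (h * t + a) := fun t => by rw [hv]; ring_nf
    simp_rw [this]
    rw [intervalIntegral.integral_comp_mul_add f (ne_of_gt hh) a]
    simp [smul_eq_mul, one_div, add_comm]
  have vsplit : (∫ t in (0:ℝ)..(1/2), v t) + ∫ t in (1/2:ℝ)..1, v t = ∫ t in (0:ℝ)..1, v t :=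
    intervalIntegral.integral_add_adjacent_intervals
      (hvint 0 (1/2) (by norm_num) (by norm_num)) (hvint (1/2) 1 (by norm_num) (by norm_num))
  have hmul : ∀ c d k : ℝ, (h * ∫ t in c..d, (t - k) * g t) = ∫ t in c..d, (t - k) * (h * g t) := by
    intro c d k
    rw [← intervalIntegral.integral_const_mul]
    congr 1; ext t; ring
  have hv0 : v 0 = f a := by rw [hv]; norm_num
  have hvhalf : v (1/2) = f (a + h/2) := by rw [hv]; ring_nf
  have hv1 : v 1 = f (a + h) := by rw [hv]; norm_num
  rw [split, mul_add, hmul, hmul, ibp1, ibp2, ← hsub, ← vsplit, hv0, hvhalf, hv1]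
  ring

theorem stmt3 (I : Set ℝ) (η : ℝ → ℝ → ℝ) (f : ℝ → ℝ) (a b : ℝ)
    (hI : IsOpen I)
    (hinv : ∀ u ∈ I, ∀ v ∈ I, ∀ t ∈ Set.Icc (0:ℝ) 1, u + t * η v u ∈ I)
    (hηnn : ∀ u ∈ I, ∀ v ∈ I, 0 ≤ η v u)
    (ha : a ∈ I) (hb : b ∈ I) (hη : η b a ≠ 0)
    (hf : DifferentiableOn ℝ f I)
    (q p : ℝ) (hq : 1 < q) (hp : p = q / (q - 1))
    (hpre : ∀ u ∈ I, ∀ v ∈ I, ∀ t ∈ Set.Icc (0:ℝ) 1,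
      |deriv f (u + t * η v u)| ^ q ≤ (1 - t) * |deriv f u| ^ q + t * |deriv f v| ^ q) :
    |(1/6 : ℝ) * (f a + 4 * f (a + η b a / 2) + f (a + η b a)) -
      (1 / η b a) * ∫ x in a..(a + η b a), f x| ≤ η b a * (2 * (1 + 2 ^ (p + 1)) / (6 ^ (p + 1) * (p + 1))) ^ (1/p) *
      ((|deriv f a| ^ q + |deriv f b| ^ q) / 2) ^ (1/q) := by
  have hq0 : 0 < q := by linarith
  have hq1 : q - 1 > 0 := by linarith
  have hp1 : 1 < p := by
    rw [hp, lt_div_iff₀ hq1]; linarith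
  have hpq : Real.HolderConjugate p q := by
    refine Real.holderConjugate_iff.mpr ⟨hp1, ?_⟩
    rw [hp]
    field_simp
    ring
  set h : ℝ := η b a with hh_def
  have hh : 0 < h := lt_of_le_of_ne (hηnn a ha b hb) (Ne.symm hη)
  set g : ℝ → ℝ := fun t => deriv f (a + t * h) with hg_def
  set A : ℝ := |deriv f a| ^ q with hA_def
  set B : ℝ := |deriv f b| ^ q with hB_def
  have hA0 : 0 ≤ A := Real.rpow_nonneg (abs_nonneg _) q
  have hB0 : 0 ≤ B := Real.rpow_nonneg (abs_nonneg _) q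
  have hmem : ∀ t ∈ Set.Icc (0:ℝ) 1, a + t * h ∈ I := fun t ht => hinv a ha b hb t ht
  have hder : ∀ t ∈ Set.Icc (0:ℝ) 1, HasDerivAt f (g t) (a + t * h) := by
    intro t ht
    exact (hf.differentiableAt (hI.mem_nhds (hmem t ht))).hasDerivAt
  have hgm : Measurable g := by
    have := measurable_deriv f
    fun_prop
  have hgq : ∀ t ∈ Set.Icc (0:ℝ) 1, |g t| ^ q ≤ (1 - t) * A + t * B :=
    fun t ht => hpre a ha b hb t ht
  -- uniform bound for |g|
  set M : ℝ := (A ⊔ B) ^ (1/q) with hM_def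
  have hgM : ∀ t ∈ Set.Icc (0:ℝ) 1, |g t| ≤ M := by
    intro t ht
    have h1 : |g t| ^ q ≤ A ⊔ B := by
      refine (hgq t ht).trans ?_
      have h2 : (1 - t) * A + t * B ≤ (1 - t) * (A ⊔ B) + t * (A ⊔ B) := by
        gcongr
        · linarith [ht.2]
        · exact le_max_left _ _
        · exact ht.1
        · exact le_max_right _ _
      calc (1 - t) * A + t * B ≤ (1 - t) * (A ⊔ B) + t * (A ⊔ B) := h2
        _ = A ⊔ B := by ring
    have h3 : (|g t| ^ q) ^ (1/q) ≤ (A ⊔ B) ^ (1/q) :=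
      Real.rpow_le_rpow (Real.rpow_nonneg (abs_nonneg _) q) h1 (by positivity)
    rw [one_div, Real.rpow_rpow_inv (abs_nonneg _) (ne_of_gt hq0)] at h3
    rw [hM_def, one_div]
    exact h3
  have hkgint : ∀ c d : ℝ, c ∈ Set.Icc (0:ℝ) 1 → d ∈ Set.Icc (0:ℝ) 1 →
      IntervalIntegrable (fun t => simpK t * g t) volume c d := by
    intro c d hc hd
    refine my_intInt_bdd (simpK_meas.mul hgm) (C := 1 * M) fun x hx => ?_
    have hx' := my_uIcc_sub hc hd hx
    rw [Pi.mul_apply, abs_mul]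
    exact mul_le_mul (simpK_abs_le hx') (hgM x hx') (abs_nonneg _) zero_le_one
  have hgint : ∀ c d : ℝ, c ∈ Set.Icc (0:ℝ) 1 → d ∈ Set.Icc (0:ℝ) 1 →
      IntervalIntegrable g volume c d := by
    intro c d hc hd
    exact my_intInt_bdd hgm (C := M) fun x hx => hgM x (my_uIcc_sub hc hd hx)
  -- the identity
  have EQ := simpson_identity f g a h hh hder hkgint hgint
  rw [← EQ]
  -- finite measure instance
  haveI : IsFiniteMeasure (volume.restrict (Set.Ioc (0:ℝ) 1)) :=
    ⟨by rw [Measure.restrict_apply_univ]; exact measure_Ioc_lt_top⟩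
  -- Hölder
  have hKmem : MemLp simpK (ENNReal.ofReal p) (volume.restrict (Set.Ioc (0:ℝ) 1)) := by
    refine MemLp.of_bound simpK_meas.aestronglyMeasurable.restrict 1 ?_
    filter_upwards [ae_restrict_mem measurableSet_Ioc] with x hx
    rw [Real.norm_eq_abs]
    exact simpK_abs_le (Set.Ioc_subset_Icc_self hx)
  have hGmem : MemLp g (ENNReal.ofReal q) (volume.restrict (Set.Ioc (0:ℝ) 1)) := by
    refine MemLp.of_bound hgm.aestronglyMeasurable.restrict M ?_
    filter_upwards [ae_restrict_mem measurableSet_Ioc] with x hx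
    rw [Real.norm_eq_abs]
    exact hgM x (Set.Ioc_subset_Icc_self hx)
  have holder := MeasureTheory.integral_mul_norm_le_Lp_mul_Lq hpq hKmem hGmem
  -- translate interval integrals to set integrals
  have habs : |∫ t in (0:ℝ)..1, simpK t * g t|
      ≤ ∫ x in Set.Ioc (0:ℝ) 1, ‖simpK x‖ * ‖g x‖ := by
    refine (intervalIntegral.abs_integral_le_integral_abs (by norm_num)).trans ?_
    rw [intervalIntegral.integral_of_le (by norm_num : (0:ℝ) ≤ 1)]
    refine le_of_eq (integral_congr_ae ?_)
    filter_upwards [] with x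
    rw [abs_mul, Real.norm_eq_abs, Real.norm_eq_abs]
  -- first factor
  have hKval : ∫ x in Set.Ioc (0:ℝ) 1, ‖simpK x‖ ^ p
      = 2 * (1 + 2 ^ (p + 1)) / (6 ^ (p + 1) * (p + 1)) := by
    rw [← simpK_integral p hp1, intervalIntegral.integral_of_le (by norm_num : (0:ℝ) ≤ 1)]
    refine integral_congr_ae ?_
    filter_upwards [] with x
    rw [Real.norm_eq_abs]
  -- second factor bound
  have hGbound : ∫ x in Set.Ioc (0:ℝ) 1, ‖g x‖ ^ q ≤ (A + B) / 2 := by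
    have step1 : ∫ x in Set.Ioc (0:ℝ) 1, ‖g x‖ ^ q = ∫ t in (0:ℝ)..1, |g t| ^ q := by
      rw [intervalIntegral.integral_of_le (by norm_num : (0:ℝ) ≤ 1)]
      refine integral_congr_ae ?_
      filter_upwards [] with x
      rw [Real.norm_eq_abs]
    rw [step1]
    have hint1 : IntervalIntegrable (fun t => |g t| ^ q) volume 0 1 := by
      refine my_intInt_bdd (by fun_prop) (C := A ⊔ B) fun x hx => ?_
      have hx' := my_uIcc_sub (by norm_num) (by norm_num) hx
      rw [abs_of_nonneg (by positivity)]
      have h1 := hgq x hx'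
      refine h1.trans ?_
      nlinarith [hx'.1, hx'.2, le_max_left A B, le_max_right A B]
    have hint2 : IntervalIntegrable (fun t : ℝ => (1 - t) * A + t * B) volume 0 1 :=
      (Continuous.intervalIntegrable (by fun_prop) _ _)
    have mono := intervalIntegral.integral_mono_on (by norm_num : (0:ℝ) ≤ 1) hint1 hint2 hgq
    refine mono.trans (le_of_eq ?_)
    have reered : (fun t : ℝ => (1 - t) * A + t * B) = fun t : ℝ => t * (B - A) + A := by
      funext t; ring
    rw [reered, intervalIntegral.integral_add ((intervalIntegrable_id).mul_const _)
      (intervalIntegrable_const), intervalIntegral.integral_mul_const, integral_id,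
      intervalIntegral.integral_const]
    norm_num; ring
  -- put it together
  have hK0 : 0 ≤ ∫ x in Set.Ioc (0:ℝ) 1, ‖simpK x‖ ^ p :=
    integral_nonneg fun x => by positivity
  have hG0 : 0 ≤ ∫ x in Set.Ioc (0:ℝ) 1, ‖g x‖ ^ q :=
    integral_nonneg fun x => by positivity
  have final : |∫ t in (0:ℝ)..1, simpK t * g t|
      ≤ (2 * (1 + 2 ^ (p + 1)) / (6 ^ (p + 1) * (p + 1))) ^ (1/p) * ((A + B) / 2) ^ (1/q) := by
    refine habs.trans (holder.trans ?_)
    rw [hKval]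
    exact mul_le_mul_of_nonneg_left (Real.rpow_le_rpow hG0 hGbound (by positivity))
      (Real.rpow_nonneg (by rw [← hKval]; exact hK0) _)
  calc |h * ∫ t in (0:ℝ)..1, simpK t * g t| = h * |∫ t in (0:ℝ)..1, simpK t * g t| := by
        rw [abs_mul, abs_of_pos hh]
    _ ≤ h * ((2 * (1 + 2 ^ (p + 1)) / (6 ^ (p + 1) * (p + 1))) ^ (1/p) * ((A + B) / 2) ^ (1/q)) := by
        exact mul_le_mul_of_nonneg_left final (le_of_lt hh)
    _ = h * (2 * (1 + 2 ^ (p + 1)) / (6 ^ (p + 1) * (p + 1))) ^ (1/p) * ((A + B) / 2) ^ (1/q) := by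
        ring
end

section
/- Let I ⊆ ℝ be an open invex set with respect to η : I × I → ℝ₊, let f : I → ℝ be differentiable, a, b ∈ I with η(b,a) ≠ 0, and let q ≥ 1. If |f'|^q is preinvex on I, then |(1/6)[f(a) + 4f(a + η(b,a)/2) + f(a + η(b,a))] − (1/η(b,a)) ∫_a^{a+η(b,a)} f(x) dx| ≤ η(b,a)·(5/72)^{1−1/q} · [ ((61|f'(a)|^q + 29|f'(b)|^q)/1296)^{1/q} + ((29|f'(a)|^q + 61|f'(b)|^q)/1296)^{1/q} ]. -/
open Real MeasureTheory intervalIntegral Set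



lemma integral_quad (c0 c1 c2 x y : ℝ) :
    ∫ t in x..y, (c0 + c1 * t + c2 * t ^ 2) =
      (c0 * y + c1 / 2 * y ^ 2 + c2 / 3 * y ^ 3) - (c0 * x + c1 / 2 * x ^ 2 + c2 / 3 * x ^ 3) := by
  refine intervalIntegral.integral_eq_sub_of_hasDerivAt
    (f := fun t => c0 * t + c1 / 2 * t ^ 2 + c2 / 3 * t ^ 3) (fun t ht => ?_) ?_
  · have h := ((hasDerivAt_id t).const_mul c0).add
      (((hasDerivAt_pow 2 t).const_mul (c1 / 2)).add ((hasDerivAt_pow 3 t).const_mul (c2 / 3)))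
    convert h using 1
    · ext s; simp [id]; ring
    · push_cast; ring
  · exact (Continuous.intervalIntegrable (by continuity) _ _)

lemma split_abs (c x y : ℝ) (hx : x ≤ c) (hc : c ≤ y) (g : ℝ → ℝ) (hg : Continuous g) :
    ∫ t in x..y, |t - c| * g t = (∫ t in x..c, (c - t) * g t) + ∫ t in c..y, (t - c) * g t := by
  have hcont : Continuous fun t => |t - c| * g t := by continuity
  rw [← intervalIntegral.integral_add_adjacent_intervals (hcont.intervalIntegrable x c)
    (hcont.intervalIntegrable c y)]
  congr 1
  · refine intervalIntegral.integral_congr fun t ht => ?_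
    rw [Set.uIcc_of_le hx] at ht
    rw [abs_of_nonpos (by linarith [ht.2])]; ring
  · refine intervalIntegral.integral_congr fun t ht => ?_
    rw [Set.uIcc_of_le hc] at ht
    rw [abs_of_nonneg (by linarith [ht.1])]

lemma E1 : ∫ t in (0:ℝ)..(1/2), |t - 1/6| = 5/72 := by
  have : ∫ t in (0:ℝ)..(1/2), |t - 1/6| = ∫ t in (0:ℝ)..(1/2), |t - 1/6| * (fun _ => (1:ℝ)) t :=
    intervalIntegral.integral_congr fun t _ => by simp
  rw [this, split_abs (1/6) 0 (1/2) (by norm_num) (by norm_num) _ continuous_const]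
  have h1 : ∫ t in (0:ℝ)..(1/6), (1/6 - t) * (fun _ => (1:ℝ)) t
      = ∫ t in (0:ℝ)..(1/6), ((1/6:ℝ) + (-1) * t + 0 * t ^ 2) :=
    intervalIntegral.integral_congr fun t _ => by simp; ring
  have h2 : ∫ t in (1/6:ℝ)..(1/2), (t - 1/6) * (fun _ => (1:ℝ)) t
      = ∫ t in (1/6:ℝ)..(1/2), ((-(1/6):ℝ) + 1 * t + 0 * t ^ 2) :=
    intervalIntegral.integral_congr fun t _ => by simp; ring
  rw [h1, h2, integral_quad, integral_quad]
  norm_num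

lemma E2 (A B : ℝ) : ∫ t in (0:ℝ)..(1/2), |t - 1/6| * ((1 - t) * A + t * B)
    = (61 * A + 29 * B) / 1296 := by
  rw [split_abs (1/6) 0 (1/2) (by norm_num) (by norm_num) _ (by continuity)]
  have h1 : ∫ t in (0:ℝ)..(1/6), (1/6 - t) * ((1 - t) * A + t * B)
      = ∫ t in (0:ℝ)..(1/6), (A/6 + ((B - A)/6 - A) * t + (A - B) * t ^ 2) :=
    intervalIntegral.integral_congr fun t _ => by ring
  have h2 : ∫ t in (1/6:ℝ)..(1/2), (t - 1/6) * ((1 - t) * A + t * B)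
      = ∫ t in (1/6:ℝ)..(1/2), (-A/6 + (A - (B - A)/6) * t + (B - A) * t ^ 2) :=
    intervalIntegral.integral_congr fun t _ => by ring
  rw [h1, h2, integral_quad, integral_quad]
  ring

lemma E3 : ∫ t in (1/2:ℝ)..1, |t - 5/6| = 5/72 := by
  have : ∫ t in (1/2:ℝ)..1, |t - 5/6| = ∫ t in (1/2:ℝ)..1, |t - 5/6| * (fun _ => (1:ℝ)) t :=
    intervalIntegral.integral_congr fun t _ => by simp
  rw [this, split_abs (5/6) (1/2) 1 (by norm_num) (by norm_num) _ continuous_const]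
  have h1 : ∫ t in (1/2:ℝ)..(5/6), (5/6 - t) * (fun _ => (1:ℝ)) t
      = ∫ t in (1/2:ℝ)..(5/6), ((5/6:ℝ) + (-1) * t + 0 * t ^ 2) :=
    intervalIntegral.integral_congr fun t _ => by simp; ring
  have h2 : ∫ t in (5/6:ℝ)..1, (t - 5/6) * (fun _ => (1:ℝ)) t
      = ∫ t in (5/6:ℝ)..1, ((-(5/6):ℝ) + 1 * t + 0 * t ^ 2) :=
    intervalIntegral.integral_congr fun t _ => by simp; ring
  rw [h1, h2, integral_quad, integral_quad]
  norm_num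

lemma E4 (A B : ℝ) : ∫ t in (1/2:ℝ)..1, |t - 5/6| * ((1 - t) * A + t * B)
    = (29 * A + 61 * B) / 1296 := by
  rw [split_abs (5/6) (1/2) 1 (by norm_num) (by norm_num) _ (by continuity)]
  have h1 : ∫ t in (1/2:ℝ)..(5/6), (5/6 - t) * ((1 - t) * A + t * B)
      = ∫ t in (1/2:ℝ)..(5/6), (5*A/6 + (5*(B - A)/6 - A) * t + (A - B) * t ^ 2) :=
    intervalIntegral.integral_congr fun t _ => by ring
  have h2 : ∫ t in (5/6:ℝ)..1, (t - 5/6) * ((1 - t) * A + t * B)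
      = ∫ t in (5/6:ℝ)..1, (-5*A/6 + (A - 5*(B - A)/6) * t + (B - A) * t ^ 2) :=
    intervalIntegral.integral_congr fun t _ => by ring
  rw [h1, h2, integral_quad, integral_quad]
  ring


lemma holder_aux (c d : ℝ) (hcd : c ≤ d) (w g : ℝ → ℝ) (Cw Cg : ℝ)
    (hwm : Measurable w) (hgm : Measurable g)
    (hw0 : ∀ t, 0 ≤ w t) (hg0 : ∀ t, 0 ≤ g t)
    (hwb : ∀ t ∈ Set.Ioc c d, w t ≤ Cw) (hgb : ∀ t ∈ Set.Ioc c d, g t ≤ Cg)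
    (q : ℝ) (hq : 1 ≤ q) :
    (∫ t in c..d, w t * g t) ≤
      (∫ t in c..d, w t) ^ (1 - 1/q) * (∫ t in c..d, w t * g t ^ q) ^ (1/q) := by
  rcases eq_or_lt_of_le hq with hq1 | hq1
  · subst hq1
    rw [show (1:ℝ) - 1/1 = 0 by norm_num, Real.rpow_zero, one_mul, show (1:ℝ)/1 = 1 by norm_num,
      Real.rpow_one]
    exact le_of_eq (intervalIntegral.integral_congr fun t _ => by rw [Real.rpow_one])
  · -- q > 1
    have hq0 : (0:ℝ) < q := by linarith
    have hqne : q ≠ 0 := ne_of_gt hq0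
    have hq1' : q - 1 ≠ 0 := by intro h; rw [sub_eq_zero] at h; exact absurd h.symm (ne_of_lt hq1)
    set p : ℝ := q / (q - 1) with hp
    have hpq : p.HolderConjugate q := (Real.HolderConjugate.conjExponent hq1).symm
    have hp1 : 1 < p := hpq.lt
    have hp0 : 0 < p := by linarith
    set μ := (volume : Measure ℝ).restrict (Set.Ioc c d) with hμ
    have hμfin : IsFiniteMeasure μ := by
      constructor
      rw [hμ, Measure.restrict_apply_univ]
      exact measure_Ioc_lt_top
    set F : ℝ → ℝ := fun t => w t ^ ((q-1)/q) with hF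
    set G : ℝ → ℝ := fun t => w t ^ (1/q) * g t with hG
    have hFG : ∀ t, F t * G t = w t * g t := by
      intro t
      rw [hF, hG]
      show w t ^ ((q-1)/q) * (w t ^ (1/q) * g t) = w t * g t
      rw [← mul_assoc, ← Real.rpow_add' (hw0 t) (by rw [← add_div, sub_add_cancel, div_self hqne]; norm_num),
        show (q-1)/q + 1/q = 1 by field_simp; ring, Real.rpow_one]
    have hFp : ∀ t, F t ^ p = w t := by
      intro t
      show (w t ^ ((q-1)/q)) ^ p = w t
      rw [← Real.rpow_mul (hw0 t), show (q-1)/q * p = 1 by rw [hp]; field_simp,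
        Real.rpow_one]
    have hGq : ∀ t, G t ^ q = w t * g t ^ q := by
      intro t
      show (w t ^ (1/q) * g t) ^ q = w t * g t ^ q
      rw [Real.mul_rpow (Real.rpow_nonneg (hw0 t) _) (hg0 t), ← Real.rpow_mul (hw0 t),
        show 1/q * q = 1 by field_simp, Real.rpow_one]
    have hF0 : ∀ t, 0 ≤ F t := fun t => Real.rpow_nonneg (hw0 t) _
    have hG0 : ∀ t, 0 ≤ G t := fun t => mul_nonneg (Real.rpow_nonneg (hw0 t) _) (hg0 t)
    have hFm : Measurable F := (Real.continuous_rpow_const (div_nonneg (by linarith) hq0.le)).measurable.comp hwm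
    have hGm : Measurable G := ((Real.continuous_rpow_const (one_div_nonneg.2 hq0.le)).measurable.comp hwm).mul hgm
    set Cw' := max Cw 0 with hCw'
    set Cg' := max Cg 0 with hCg'
    have hwb' : ∀ t ∈ Set.Ioc c d, w t ≤ Cw' := fun t ht => (hwb t ht).trans (le_max_left _ _)
    have hgb' : ∀ t ∈ Set.Ioc c d, g t ≤ Cg' := fun t ht => (hgb t ht).trans (le_max_left _ _)
    have hFmem : MemLp F (ENNReal.ofReal p) μ := by
      refine MemLp.mono_exponent (q := ⊤) ?_ le_top
      refine memLp_top_of_bound hFm.aestronglyMeasurable (Cw' ^ ((q-1)/q)) ?_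
      filter_upwards [ae_restrict_mem measurableSet_Ioc] with t ht
      rw [Real.norm_of_nonneg (hF0 t)]
      exact Real.rpow_le_rpow (hw0 t) (hwb' t ht) (div_nonneg (by linarith) hq0.le)
    have hGmem : MemLp G (ENNReal.ofReal q) μ := by
      refine MemLp.mono_exponent (q := ⊤) ?_ le_top
      refine memLp_top_of_bound hGm.aestronglyMeasurable (Cw' ^ (1/q) * Cg') ?_
      filter_upwards [ae_restrict_mem measurableSet_Ioc] with t ht
      rw [Real.norm_of_nonneg (hG0 t)]
      exact mul_le_mul (Real.rpow_le_rpow (hw0 t) (hwb' t ht) (one_div_nonneg.2 hq0.le)) (hgb' t ht)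
        (hg0 t) (Real.rpow_nonneg (le_max_right _ _) _)
    have key := MeasureTheory.integral_mul_le_Lp_mul_Lq_of_nonneg hpq
      (Filter.Eventually.of_forall hF0) (Filter.Eventually.of_forall hG0) hFmem hGmem
    rw [intervalIntegral.integral_of_le hcd, intervalIntegral.integral_of_le hcd,
      intervalIntegral.integral_of_le hcd]
    calc ∫ t in Set.Ioc c d, w t * g t
        = ∫ t in Set.Ioc c d, F t * G t := by
          exact (setIntegral_congr_fun measurableSet_Ioc fun t _ => (hFG t).symm)
      _ ≤ (∫ t in Set.Ioc c d, F t ^ p) ^ (1/p) * (∫ t in Set.Ioc c d, G t ^ q) ^ (1/q) := key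
      _ = (∫ t in Set.Ioc c d, w t) ^ (1 - 1/q) * (∫ t in Set.Ioc c d, w t * g t ^ q) ^ (1/q) := by
          rw [show (1:ℝ)/p = 1 - 1/q by rw [hp]; field_simp]
          congr 1
          · congr 1
            exact setIntegral_congr_fun measurableSet_Ioc fun t _ => hFp t
          · congr 1
            exact setIntegral_congr_fun measurableSet_Ioc fun t _ => hGq t


lemma II_of_bound (c d : ℝ) (h : ℝ → ℝ) (hm : Measurable h) (C : ℝ)
    (hb : ∀ t ∈ Set.uIoc c d, |h t| ≤ C) : IntervalIntegrable h volume c d := by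
  rw [intervalIntegrable_iff]
  refine Measure.integrableOn_of_bounded (M := C) ?_ hm.aestronglyMeasurable ?_
  · rw [Set.uIoc]; exact measure_Ioc_lt_top.ne
  filter_upwards [ae_restrict_mem measurableSet_uIoc] with t ht
  exact hb t ht

set_option maxHeartbeats 1000000 in
theorem stmt4 (I : Set ℝ) (η : ℝ → ℝ → ℝ) (f : ℝ → ℝ) (a b : ℝ)
    (hI : IsOpen I)
    (hinv : ∀ u ∈ I, ∀ v ∈ I, ∀ t ∈ Set.Icc (0:ℝ) 1, u + t * η v u ∈ I)
    (hηnn : ∀ u ∈ I, ∀ v ∈ I, 0 ≤ η v u)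
    (ha : a ∈ I) (hb : b ∈ I) (hη : η b a ≠ 0)
    (hf : DifferentiableOn ℝ f I)
    (q : ℝ) (hq : 1 ≤ q)
    (hpre : ∀ u ∈ I, ∀ v ∈ I, ∀ t ∈ Set.Icc (0:ℝ) 1,
      |deriv f (u + t * η v u)| ^ q ≤ (1 - t) * |deriv f u| ^ q + t * |deriv f v| ^ q) :
    |(1/6 : ℝ) * (f a + 4 * f (a + η b a / 2) + f (a + η b a)) -
      (1 / η b a) * ∫ x in a..(a + η b a), f x| ≤ η b a * (5/72) ^ (1 - 1/q) *
      (((61 * |deriv f a| ^ q + 29 * |deriv f b| ^ q) / 1296) ^ (1/q) +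
       ((29 * |deriv f a| ^ q + 61 * |deriv f b| ^ q) / 1296) ^ (1/q)) := by
  have hq0 : (0:ℝ) < q := by linarith
  have hqne : q ≠ 0 := ne_of_gt hq0
  set L : ℝ := η b a with hLdef
  have hL : 0 < L := lt_of_le_of_ne (hηnn a ha b hb) (Ne.symm hη)
  set A : ℝ := |deriv f a| ^ q with hAdef
  set B : ℝ := |deriv f b| ^ q with hBdef
  have hA : 0 ≤ A := Real.rpow_nonneg (abs_nonneg _) _
  have hB : 0 ≤ B := Real.rpow_nonneg (abs_nonneg _) _
  set φ : ℝ → ℝ := fun t => deriv f (a + t * L) with hφdef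
  have hmem : ∀ t ∈ Set.Icc (0:ℝ) 1, a + t * L ∈ I := fun t ht => hinv a ha b hb t ht
  have hbound : ∀ t ∈ Set.Icc (0:ℝ) 1, |φ t| ^ q ≤ (1 - t) * A + t * B :=
    fun t ht => hpre a ha b hb t ht
  have hφm : Measurable φ := (measurable_deriv f).comp ((measurable_id.mul_const L).const_add a)
  set C : ℝ := (A + B) ^ (1/q) with hCdef
  have habs_q : ∀ x : ℝ, (|x| ^ q) ^ (1/q) = |x| := by
    intro x
    rw [← Real.rpow_mul (abs_nonneg x), mul_one_div, div_self hqne, Real.rpow_one]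
  have hφle : ∀ t ∈ Set.Icc (0:ℝ) 1, |φ t| ≤ C := by
    intro t ht
    have h1 : (|φ t| ^ q) ^ (1/q) ≤ ((1 - t) * A + t * B) ^ (1/q) :=
      Real.rpow_le_rpow (Real.rpow_nonneg (abs_nonneg _) _) (hbound t ht)
        (one_div_nonneg.2 hq0.le)
    have h2 : ((1 - t) * A + t * B) ^ (1/q) ≤ C := by
      refine Real.rpow_le_rpow (by nlinarith [ht.1, ht.2]) ?_ (one_div_nonneg.2 hq0.le)
      nlinarith [ht.1, ht.2]
    calc |φ t| = (|φ t| ^ q) ^ (1/q) := (habs_q _).symm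
      _ ≤ _ := h1.trans h2
  have hC : 0 ≤ C := Real.rpow_nonneg (by linarith) _
  -- derivative of t ↦ f (a + t * L)
  have hFd : ∀ t ∈ Set.Icc (0:ℝ) 1, HasDerivAt (fun s => f (a + s * L)) (L * φ t) t := by
    intro t ht
    have hdf : HasDerivAt f (deriv f (a + t * L)) (a + t * L) :=
      (hf.differentiableAt (hI.mem_nhds (hmem t ht))).hasDerivAt
    have hin : HasDerivAt (fun s : ℝ => a + s * L) L t := by
      simpa using ((hasDerivAt_id t).mul_const L).const_add a
    have := hdf.comp t hin
    rw [mul_comm L]; exact this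
  -- continuity of t ↦ f (a + t * L) on [0,1]
  have hmap : Set.MapsTo (fun t : ℝ => a + t * L) (Set.Icc 0 1) I := fun t ht => hmem t ht
  have hFcont : ContinuousOn (fun t : ℝ => f (a + t * L)) (Set.Icc 0 1) :=
    hf.continuousOn.comp (Continuous.continuousOn (by continuity)) hmap
  -- integrability of L * φ on subintervals of [0,1]
  have hLφint : ∀ c d : ℝ, Set.uIoc c d ⊆ Set.Icc (0:ℝ) 1 →
      IntervalIntegrable (fun t => L * φ t) volume c d := by
    intro c d hsub
    refine II_of_bound c d _ (hφm.const_mul L) (L * C) fun t ht => ?_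
    rw [abs_mul, abs_of_nonneg hL.le]
    exact mul_le_mul_of_nonneg_left (hφle t (hsub ht)) hL.le
  -- integration by parts on [0, 1/2]
  have hsub1 : Set.uIcc (0:ℝ) (1/2) ⊆ Set.Icc (0:ℝ) 1 := by
    rw [Set.uIcc_of_le (by norm_num)]; exact Set.Icc_subset_Icc (le_refl _) (by norm_num)
  have hsub2 : Set.uIcc (1/2:ℝ) 1 ⊆ Set.Icc (0:ℝ) 1 := by
    rw [Set.uIcc_of_le (by norm_num)]; exact Set.Icc_subset_Icc (by norm_num) (le_refl _)
  have hsub1' : Set.uIoc (0:ℝ) (1/2) ⊆ Set.Icc (0:ℝ) 1 := by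
    rw [Set.uIoc_of_le (by norm_num)]
    exact Set.Ioc_subset_Icc_self.trans (Set.Icc_subset_Icc (le_refl _) (by norm_num))
  have hsub2' : Set.uIoc (1/2:ℝ) 1 ⊆ Set.Icc (0:ℝ) 1 := by
    rw [Set.uIoc_of_le (by norm_num)]
    exact Set.Ioc_subset_Icc_self.trans (Set.Icc_subset_Icc (by norm_num) (le_refl _))
  have ibp1 := intervalIntegral.integral_mul_deriv_eq_deriv_mul
    (u := fun t : ℝ => t - 1/6) (u' := fun _ => (1:ℝ))
    (v := fun t => f (a + t * L)) (v' := fun t => L * φ t)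
    (a := (0:ℝ)) (b := (1/2:ℝ))
    (fun x hx => (hasDerivAt_id x).sub_const _)
    (fun x hx => hFd x (hsub1 hx))
    intervalIntegrable_const
    (hLφint 0 (1/2) hsub1')
  have ibp2 := intervalIntegral.integral_mul_deriv_eq_deriv_mul
    (u := fun t : ℝ => t - 5/6) (u' := fun _ => (1:ℝ))
    (v := fun t => f (a + t * L)) (v' := fun t => L * φ t)
    (a := (1/2:ℝ)) (b := (1:ℝ))
    (fun x hx => (hasDerivAt_id x).sub_const _)
    (fun x hx => hFd x (hsub2 hx))
    intervalIntegrable_const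
    (hLφint (1/2) 1 hsub2')
  -- the two J integrals
  set J₁ : ℝ := ∫ t in (0:ℝ)..(1/2), (t - 1/6) * φ t with hJ1def
  set J₂ : ℝ := ∫ t in (1/2:ℝ)..1, (t - 5/6) * φ t with hJ2def
  have hpull1 : ∫ x in (0:ℝ)..(1/2), (x - 1/6) * (L * φ x) = L * J₁ := by
    rw [hJ1def, ← intervalIntegral.integral_const_mul]
    exact intervalIntegral.integral_congr fun x _ => by ring
  have hpull2 : ∫ x in (1/2:ℝ)..1, (x - 5/6) * (L * φ x) = L * J₂ := by
    rw [hJ2def, ← intervalIntegral.integral_const_mul]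
    exact intervalIntegral.integral_congr fun x _ => by ring
  set P₁ : ℝ := ∫ x in (0:ℝ)..(1/2), f (a + x * L) with hP1def
  set P₂ : ℝ := ∫ x in (1/2:ℝ)..1, f (a + x * L) with hP2def
  have hone1 : ∫ x in (0:ℝ)..(1/2), (fun _ => (1:ℝ)) x * f (a + x * L) = P₁ := by
    rw [hP1def]; exact intervalIntegral.integral_congr fun x _ => by simp
  have hone2 : ∫ x in (1/2:ℝ)..1, (fun _ => (1:ℝ)) x * f (a + x * L) = P₂ := by
    rw [hP2def]; exact intervalIntegral.integral_congr fun x _ => by simp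
  rw [hpull1, hone1] at ibp1
  rw [hpull2, hone2] at ibp2
  -- substitution
  have hadj : P₁ + P₂ = ∫ x in (0:ℝ)..1, f (a + x * L) := by
    refine intervalIntegral.integral_add_adjacent_intervals ?_ ?_
    · exact ((hFcont.mono hsub1).intervalIntegrable)
    · exact ((hFcont.mono hsub2).intervalIntegrable)
  have hsubst : ∫ x in a..(a + L), f x = L * ∫ x in (0:ℝ)..1, f (a + x * L) := by
    have h := intervalIntegral.smul_integral_comp_add_mul f (a := (0:ℝ)) (b := 1) L a
    rw [smul_eq_mul] at h
    have h2 : ∫ x in (0:ℝ)..1, f (a + x * L) = ∫ x in (0:ℝ)..1, f (a + L * x) :=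
      intervalIntegral.integral_congr fun x _ => by rw [mul_comm]
    rw [h2, h]
    norm_num
  -- endpoints normalization
  beta_reduce at ibp1 ibp2
  rw [show a + (1/2:ℝ) * L = a + L/2 by ring, show a + (0:ℝ) * L = a by ring] at ibp1
  rw [show a + (1/2:ℝ) * L = a + L/2 by ring, show a + (1:ℝ) * L = a + L by ring] at ibp2
  -- the Simpson identity
  have hid : (1/6 : ℝ) * (f a + 4 * f (a + L / 2) + f (a + L)) -
      (1 / L) * ∫ x in a..(a + L), f x = L * (J₁ + J₂) := by
    have h3 : (1 / L) * ∫ x in a..(a + L), f x = P₁ + P₂ := by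
      rw [hsubst, ← hadj]
      field_simp
    rw [h3]
    linarith [ibp1, ibp2]
  -- final estimates
  set g : ℝ → ℝ := fun t => |φ t| with hgdef
  have hgm : Measurable g := hφm.abs
  have hgqm : Measurable fun t => g t ^ q :=
    (Real.continuous_rpow_const hq0.le).measurable.comp hgm
  have habs1 : |J₁| ≤ ∫ t in (0:ℝ)..(1/2), |t - 1/6| * g t := by
    rw [hJ1def]
    refine le_trans (intervalIntegral.abs_integral_le_integral_abs (by norm_num)) (le_of_eq ?_)
    exact intervalIntegral.integral_congr fun t _ => abs_mul _ _
  have habs2 : |J₂| ≤ ∫ t in (1/2:ℝ)..1, |t - 5/6| * g t := by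
    rw [hJ2def]
    refine le_trans (intervalIntegral.abs_integral_le_integral_abs (by norm_num)) (le_of_eq ?_)
    exact intervalIntegral.integral_congr fun t _ => abs_mul _ _
  have hh1 := holder_aux 0 (1/2) (by norm_num) (fun t => |t - 1/6|) g 1 C
    ((continuous_id.sub continuous_const).abs.measurable) hgm
    (fun t => abs_nonneg _) (fun t => abs_nonneg _)
    (fun t ht => by rw [abs_le]; constructor <;> [linarith [ht.1]; linarith [ht.2]])
    (fun t ht => hφle t ⟨ht.1.le, by linarith [ht.2]⟩) q hq
  have hh2 := holder_aux (1/2) 1 (by norm_num) (fun t => |t - 5/6|) g 1 C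
    ((continuous_id.sub continuous_const).abs.measurable) hgm
    (fun t => abs_nonneg _) (fun t => abs_nonneg _)
    (fun t ht => by rw [abs_le]; constructor <;> [linarith [ht.1]; linarith [ht.2]])
    (fun t ht => hφle t ⟨by linarith [ht.1], ht.2⟩) q hq
  have hgq : ∀ t ∈ Set.Icc (0:ℝ) 1, g t ^ q ≤ (1 - t) * A + t * B := fun t ht => hbound t ht
  have hmono1 : (∫ t in (0:ℝ)..(1/2), |t - 1/6| * g t ^ q) ≤ (61 * A + 29 * B) / 1296 := by
    rw [← E2 A B]
    refine intervalIntegral.integral_mono_on (by norm_num) ?_ ?_ ?_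
    · refine II_of_bound _ _ _ (((continuous_id.sub continuous_const).abs.measurable).mul hgqm)
        (1 * (A + B)) fun t ht => ?_
      have ht' : t ∈ Set.Icc (0:ℝ) 1 := hsub1' ht
      rw [abs_mul, abs_abs, abs_of_nonneg (Real.rpow_nonneg (abs_nonneg _) _)]
      refine mul_le_mul ?_ ((hgq t ht').trans (by nlinarith [ht'.1, ht'.2])) 
        (Real.rpow_nonneg (abs_nonneg _) _) (by norm_num)
      rw [abs_le]; constructor <;> [linarith [ht'.1]; linarith [ht'.2]]
    · exact Continuous.intervalIntegrable ((continuous_id.sub continuous_const).abs.mul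
        (((continuous_const.sub continuous_id).mul continuous_const).add
          (continuous_id.mul continuous_const))) _ _
    · intro t ht
      exact mul_le_mul_of_nonneg_left (hgq t ⟨ht.1, by linarith [ht.2]⟩) (abs_nonneg _)
  have hmono2 : (∫ t in (1/2:ℝ)..1, |t - 5/6| * g t ^ q) ≤ (29 * A + 61 * B) / 1296 := by
    rw [← E4 A B]
    refine intervalIntegral.integral_mono_on (by norm_num) ?_ ?_ ?_
    · refine II_of_bound _ _ _ (((continuous_id.sub continuous_const).abs.measurable).mul hgqm)
        (1 * (A + B)) fun t ht => ?_
      have ht' : t ∈ Set.Icc (0:ℝ) 1 := hsub2' ht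
      rw [abs_mul, abs_abs, abs_of_nonneg (Real.rpow_nonneg (abs_nonneg _) _)]
      refine mul_le_mul ?_ ((hgq t ht').trans (by nlinarith [ht'.1, ht'.2]))
        (Real.rpow_nonneg (abs_nonneg _) _) (by norm_num)
      rw [abs_le]; constructor <;> [linarith [ht'.1]; linarith [ht'.2]]
    · exact Continuous.intervalIntegrable ((continuous_id.sub continuous_const).abs.mul
        (((continuous_const.sub continuous_id).mul continuous_const).add
          (continuous_id.mul continuous_const))) _ _
    · intro t ht
      exact mul_le_mul_of_nonneg_left (hgq t ⟨by linarith [ht.1], ht.2⟩) (abs_nonneg _)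
  have hb1 : |J₁| ≤ (5/72 : ℝ) ^ (1 - 1/q) * ((61 * A + 29 * B) / 1296) ^ (1/q) := by
    refine habs1.trans (hh1.trans ?_)
    rw [E1]
    refine mul_le_mul_of_nonneg_left
      (Real.rpow_le_rpow ?_ hmono1 (one_div_nonneg.2 hq0.le)) (Real.rpow_nonneg (by norm_num) _)
    exact intervalIntegral.integral_nonneg (by norm_num)
      fun t ht => mul_nonneg (abs_nonneg _) (Real.rpow_nonneg (abs_nonneg _) _)
  have hb2 : |J₂| ≤ (5/72 : ℝ) ^ (1 - 1/q) * ((29 * A + 61 * B) / 1296) ^ (1/q) := by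
    refine habs2.trans (hh2.trans ?_)
    rw [E3]
    refine mul_le_mul_of_nonneg_left
      (Real.rpow_le_rpow ?_ hmono2 (one_div_nonneg.2 hq0.le)) (Real.rpow_nonneg (by norm_num) _)
    exact intervalIntegral.integral_nonneg (by norm_num)
      fun t ht => mul_nonneg (abs_nonneg _) (Real.rpow_nonneg (abs_nonneg _) _)
  rw [hid, abs_mul, abs_of_nonneg hL.le]
  calc L * |J₁ + J₂| ≤ L * ((5/72 : ℝ) ^ (1 - 1/q) * ((61 * A + 29 * B) / 1296) ^ (1/q) +
        (5/72 : ℝ) ^ (1 - 1/q) * ((29 * A + 61 * B) / 1296) ^ (1/q)) :=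
      mul_le_mul_of_nonneg_left ((abs_add_le _ _).trans (add_le_add hb1 hb2)) hL.le
    _ = L * (5/72) ^ (1 - 1/q) *
        (((61 * A + 29 * B) / 1296) ^ (1/q) + ((29 * A + 61 * B) / 1296) ^ (1/q)) := by ring
end

section
/- Let I ⊆ ℝ be an open invex set with respect to η : I × I → ℝ₊, let f : I → ℝ be differentiable, a, b ∈ I with η(b,a) ≠ 0, and let q ≥ 1. If |f'|^q is prequasiinvex on I, then |(1/6)[f(a) + 4f(a + η(b,a)/2) + f(a + η(b,a))] − (1/η(b,a)) ∫_a^{a+η(b,a)} f(x) dx| ≤ (5/36)·η(b,a)·(max{|f'(a)|^q, |f'(b)|^q})^{1/q}. -/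
open Real MeasureTheory intervalIntegral Set

theorem stmt5 (I : Set ℝ) (η : ℝ → ℝ → ℝ) (f : ℝ → ℝ) (a b : ℝ)
    (hI : IsOpen I)
    (hinv : ∀ u ∈ I, ∀ v ∈ I, ∀ t ∈ Set.Icc (0:ℝ) 1, u + t * η v u ∈ I)
    (hηnn : ∀ u ∈ I, ∀ v ∈ I, 0 ≤ η v u)
    (ha : a ∈ I) (hb : b ∈ I) (hη : η b a ≠ 0)
    (hf : DifferentiableOn ℝ f I)
    (q : ℝ) (hq : 1 ≤ q)
    (hpre : ∀ u ∈ I, ∀ v ∈ I, ∀ t ∈ Set.Icc (0:ℝ) 1,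
      |deriv f (u + t * η v u)| ^ q ≤ max (|deriv f u| ^ q) (|deriv f v| ^ q)) :
    |(1/6 : ℝ) * (f a + 4 * f (a + η b a / 2) + f (a + η b a)) -
      (1 / η b a) * ∫ x in a..(a + η b a), f x| ≤ (5/36) * η b a * (max (|deriv f a| ^ q) (|deriv f b| ^ q)) ^ (1/q) := by
  set h := η b a with hhdef
  have hh : 0 < h := lt_of_le_of_ne (hηnn a ha b hb) (Ne.symm hη)
  set M := max (|deriv f a| ^ q) (|deriv f b| ^ q) with hMdef
  have hq0 : (0:ℝ) < q := lt_of_lt_of_le one_pos hq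
  have hM0 : 0 ≤ M := le_max_of_le_left (Real.rpow_nonneg (abs_nonneg _) q)
  set C := M ^ (1/q) with hCdef
  have hC0 : 0 ≤ C := Real.rpow_nonneg hM0 _
  have hmem : ∀ t ∈ Icc (0:ℝ) 1, a + t * h ∈ I := fun t ht => hinv a ha b hb t ht
  -- the pointwise bound on the derivative
  have hbound : ∀ t ∈ Icc (0:ℝ) 1, |deriv f (a + t * h)| ≤ C := by
    intro t ht
    have h1 : |deriv f (a + t * h)| ^ q ≤ M := hpre a ha b hb t ht
    have h2 : (|deriv f (a + t * h)| ^ q) ^ (1/q) ≤ C :=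
      Real.rpow_le_rpow (Real.rpow_nonneg (abs_nonneg _) q) h1 (by positivity)
    calc |deriv f (a + t * h)| = (|deriv f (a + t * h)| ^ q) ^ (1/q) := by
          rw [← Real.rpow_mul (abs_nonneg _), mul_one_div_cancel hq0.ne', Real.rpow_one]
      _ ≤ C := h2
  have hder : ∀ x ∈ I, HasDerivAt f (deriv f x) x := fun x hx =>
    (hf.differentiableAt (hI.mem_nhds hx)).hasDerivAt
  have hg : ∀ t ∈ Icc (0:ℝ) 1, HasDerivAt (fun s => f (a + s * h)) (deriv f (a + t * h) * h) t := by
    intro t ht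
    have h2 : HasDerivAt (fun s : ℝ => a + s * h) h t := by
      simpa using ((hasDerivAt_id t).mul_const h).const_add a
    exact (hder _ (hmem t ht)).comp t h2
  have hgc : ContinuousOn (fun s => f (a + s * h)) (Icc (0:ℝ) 1) := fun t ht =>
    (hg t ht).continuousAt.continuousWithinAt
  -- integrability of the derivative term
  have hmeas : Measurable fun t : ℝ => deriv f (a + t * h) * h :=
    ((measurable_deriv f).comp (measurable_const.add (measurable_id.mul_const h))).mul_const h
  have hint : IntervalIntegrable (fun t => deriv f (a + t * h) * h) volume 0 1 := by
    rw [intervalIntegrable_iff]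
    have hci : IntegrableOn (fun _ : ℝ => C * h) (Set.uIoc (0:ℝ) 1) volume := by
      have : IntervalIntegrable (fun _ : ℝ => C * h) volume 0 1 := intervalIntegrable_const
      rwa [intervalIntegrable_iff] at this
    refine MeasureTheory.Integrable.mono' hci
      hmeas.aestronglyMeasurable.restrict ?_
    filter_upwards [ae_restrict_mem measurableSet_uIoc] with t ht
    have ht' : t ∈ Icc (0:ℝ) 1 := by
      rw [Set.uIoc_of_le (by norm_num : (0:ℝ) ≤ 1)] at ht
      exact ⟨le_of_lt ht.1, ht.2⟩
    have := hbound t ht'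
    rw [Real.norm_eq_abs, abs_mul, abs_of_pos hh]
    exact mul_le_mul_of_nonneg_right this hh.le
  have hsub1 : Set.uIcc (0:ℝ) (1/2) ⊆ Set.uIcc (0:ℝ) 1 := by
    rw [Set.uIcc_of_le (by norm_num : (0:ℝ) ≤ 1/2), Set.uIcc_of_le (by norm_num : (0:ℝ) ≤ 1)]
    exact Set.Icc_subset_Icc le_rfl (by norm_num)
  have hsub2 : Set.uIcc (1/2:ℝ) 1 ⊆ Set.uIcc (0:ℝ) 1 := by
    rw [Set.uIcc_of_le (by norm_num : (1/2:ℝ) ≤ 1), Set.uIcc_of_le (by norm_num : (0:ℝ) ≤ 1)]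
    exact Set.Icc_subset_Icc (by norm_num) le_rfl
  have hIcc1 : Set.uIcc (0:ℝ) (1/2) ⊆ Icc (0:ℝ) 1 := by
    rw [Set.uIcc_of_le (by norm_num : (0:ℝ) ≤ 1)] at hsub1; exact hsub1
  have hIcc2 : Set.uIcc (1/2:ℝ) 1 ⊆ Icc (0:ℝ) 1 := by
    rw [Set.uIcc_of_le (by norm_num : (0:ℝ) ≤ 1)] at hsub2; exact hsub2
  -- integration by parts on [0, 1/2]
  have key1 : ∫ t in (0:ℝ)..(1/2), (t - 1/6) * (deriv f (a + t * h) * h)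
      = ((1:ℝ)/2 - 1/6) * f (a + (1/2) * h) - ((0:ℝ) - 1/6) * f (a + 0 * h)
        - ∫ t in (0:ℝ)..(1/2), 1 * f (a + t * h) := by
    refine intervalIntegral.integral_mul_deriv_eq_deriv_mul_of_hasDerivAt
      (u := fun t => t - 1/6) (u' := fun _ => 1)
      (v := fun t => f (a + t * h)) (v' := fun t => deriv f (a + t * h) * h)
      ?_ ?_ ?_ ?_ ?_ ?_
    · exact (continuous_id.sub continuous_const).continuousOn
    · exact hgc.mono hIcc1
    · intro x _; simpa using (hasDerivAt_id x).sub_const (1/6 : ℝ)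
    · intro x hx
      refine hg x ?_
      have h1 : min (0:ℝ) (1/2) = 0 := by norm_num
      have h2 : max (0:ℝ) (1/2) = 1/2 := by norm_num
      rw [h1, h2] at hx
      exact ⟨hx.1.le, hx.2.le.trans (by norm_num)⟩
    · exact intervalIntegrable_const
    · exact hint.mono_set hsub1
  -- integration by parts on [1/2, 1]
  have key2 : ∫ t in (1/2:ℝ)..1, (t - 5/6) * (deriv f (a + t * h) * h)
      = ((1:ℝ) - 5/6) * f (a + 1 * h) - ((1:ℝ)/2 - 5/6) * f (a + (1/2) * h)
        - ∫ t in (1/2:ℝ)..1, 1 * f (a + t * h) := by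
    refine intervalIntegral.integral_mul_deriv_eq_deriv_mul_of_hasDerivAt
      (u := fun t => t - 5/6) (u' := fun _ => 1)
      (v := fun t => f (a + t * h)) (v' := fun t => deriv f (a + t * h) * h)
      ?_ ?_ ?_ ?_ ?_ ?_
    · exact (continuous_id.sub continuous_const).continuousOn
    · exact hgc.mono hIcc2
    · intro x _; simpa using (hasDerivAt_id x).sub_const (5/6 : ℝ)
    · intro x hx
      refine hg x ?_
      have h1 : min (1/2:ℝ) 1 = 1/2 := by norm_num
      have h2 : max (1/2:ℝ) 1 = 1 := by norm_num
      rw [h1, h2] at hx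
      exact ⟨le_trans (by norm_num) hx.1.le, hx.2.le⟩
    · exact intervalIntegrable_const
    · exact hint.mono_set hsub2
  -- substitution
  have hgint1 : IntervalIntegrable (fun t => f (a + t * h)) volume 0 (1/2) :=
    (hgc.mono hIcc1).intervalIntegrable
  have hgint2 : IntervalIntegrable (fun t => f (a + t * h)) volume (1/2) 1 :=
    (hgc.mono hIcc2).intervalIntegrable
  have hsplit : (∫ t in (0:ℝ)..(1/2), f (a + t * h)) + ∫ t in (1/2:ℝ)..1, f (a + t * h)
      = ∫ t in (0:ℝ)..1, f (a + t * h) :=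
    intervalIntegral.integral_add_adjacent_intervals hgint1 hgint2
  have hsubst : ∫ t in (0:ℝ)..1, f (a + t * h) = h⁻¹ * ∫ x in a..(a + h), f x := by
    have := intervalIntegral.integral_comp_add_mul (a := 0) (b := 1) (f := f) (c := h) hη a
    simp only [mul_zero, add_zero, mul_one, smul_eq_mul] at this
    rw [← this]
    congr 1
    ext t
    rw [mul_comm]
  -- the identity
  set A := ∫ t in (0:ℝ)..(1/2), (t - 1/6) * (deriv f (a + t * h) * h) with hAdef
  set B := ∫ t in (1/2:ℝ)..1, (t - 5/6) * (deriv f (a + t * h) * h) with hBdef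
  have e1 : a + (1/2 : ℝ) * h = a + h / 2 := by ring
  have e2 : a + (0:ℝ) * h = a := by ring
  have e3 : a + (1:ℝ) * h = a + h := by ring
  have identity : (1/6 : ℝ) * (f a + 4 * f (a + h / 2) + f (a + h)) -
      (1 / h) * (∫ x in a..(a + h), f x) = A + B := by
    rw [key1, key2]
    simp only [one_mul, e1, e2, e3]
    have : (1/h : ℝ) * (∫ x in a..(a + h), f x)
        = (∫ t in (0:ℝ)..(1/2), f (a + t * h)) + ∫ t in (1/2:ℝ)..1, f (a + t * h) := by
      rw [hsplit, hsubst, one_div]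
    rw [this]
    ring
  -- bounds on A and B
  have habs_bound : ∀ (c : ℝ), ∀ t ∈ Icc (0:ℝ) 1,
      ‖(t - c) * (deriv f (a + t * h) * h)‖ ≤ |t - c| * (C * h) := by
    intro c t ht
    rw [Real.norm_eq_abs, abs_mul, abs_mul, abs_of_pos hh]
    exact mul_le_mul_of_nonneg_left
      (mul_le_mul_of_nonneg_right (hbound t ht) hh.le) (abs_nonneg _)
  have hcont_abs : ∀ c : ℝ, Continuous fun t : ℝ => |t - c| * (C * h) := fun c =>
    ((continuous_id.sub continuous_const).abs).mul continuous_const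
  have hA : |A| ≤ 5/72 * (C * h) := by
    have hb1 : ∀ᵐ t ∂(volume.restrict (Set.uIoc (0:ℝ) (1/2))),
        ‖(t - 1/6) * (deriv f (a + t * h) * h)‖ ≤ |t - 1/6| * (C * h) := by
      filter_upwards [ae_restrict_mem measurableSet_uIoc] with t ht
      refine habs_bound (1/6) t ?_
      rw [Set.uIoc_of_le (by norm_num : (0:ℝ) ≤ 1/2)] at ht
      exact ⟨ht.1.le, ht.2.trans (by norm_num)⟩
    have h2 := intervalIntegral.norm_integral_le_abs_of_norm_le hb1
      ((hcont_abs (1/6)).intervalIntegrable 0 (1/2))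
    have hval : (∫ t in (0:ℝ)..(1/2), |t - 1/6| * (C * h)) = 5/72 * (C * h) := by
      rw [intervalIntegral.integral_mul_const]
      have hs : (∫ t in (0:ℝ)..(1/2), |t - 1/6|)
          = (∫ t in (0:ℝ)..(1/6), |t - 1/6|) + ∫ t in (1/6:ℝ)..(1/2), |t - 1/6| :=
        (intervalIntegral.integral_add_adjacent_intervals
          (((continuous_id.sub continuous_const).abs).intervalIntegrable _ _)
          (((continuous_id.sub continuous_const).abs).intervalIntegrable _ _)).symm
      have hs1 : (∫ t in (0:ℝ)..(1/6), |t - 1/6|) = ∫ t in (0:ℝ)..(1/6), (1/6 - t) := by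
        refine intervalIntegral.integral_congr fun x hx => ?_
        rw [Set.uIcc_of_le (by norm_num : (0:ℝ) ≤ 1/6)] at hx
        rw [abs_of_nonpos (by linarith [hx.2])]; ring
      have hs2 : (∫ t in (1/6:ℝ)..(1/2), |t - 1/6|) = ∫ t in (1/6:ℝ)..(1/2), (t - 1/6) := by
        refine intervalIntegral.integral_congr fun x hx => ?_
        rw [Set.uIcc_of_le (by norm_num : (1/6:ℝ) ≤ 1/2)] at hx
        rw [abs_of_nonneg (by linarith [hx.1])]
      have c1 : (∫ t in (0:ℝ)..(1/6), (1/6 - t)) = 1/72 := by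
        rw [integral_sub intervalIntegrable_const
          intervalIntegrable_id]
        simp [integral_id]
        norm_num
      have c2 : (∫ t in (1/6:ℝ)..(1/2), (t - 1/6)) = 1/18 := by
        rw [integral_sub intervalIntegrable_id
          intervalIntegrable_const]
        simp [integral_id]
        norm_num
      rw [hs, hs1, hs2, c1, c2]; ring
    rw [hval] at h2
    calc |A| = ‖A‖ := (Real.norm_eq_abs A).symm
      _ ≤ |5/72 * (C * h)| := h2
      _ = 5/72 * (C * h) := abs_of_nonneg (by positivity)
  have hB : |B| ≤ 5/72 * (C * h) := by
    have hb1 : ∀ᵐ t ∂(volume.restrict (Set.uIoc (1/2:ℝ) 1)),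
        ‖(t - 5/6) * (deriv f (a + t * h) * h)‖ ≤ |t - 5/6| * (C * h) := by
      filter_upwards [ae_restrict_mem measurableSet_uIoc] with t ht
      refine habs_bound (5/6) t ?_
      rw [Set.uIoc_of_le (by norm_num : (1/2:ℝ) ≤ 1)] at ht
      exact ⟨le_trans (by norm_num) ht.1.le, ht.2⟩
    have h2 := intervalIntegral.norm_integral_le_abs_of_norm_le hb1
      ((hcont_abs (5/6)).intervalIntegrable (1/2) 1)
    have hval : (∫ t in (1/2:ℝ)..1, |t - 5/6| * (C * h)) = 5/72 * (C * h) := by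
      rw [intervalIntegral.integral_mul_const]
      have hs : (∫ t in (1/2:ℝ)..1, |t - 5/6|)
          = (∫ t in (1/2:ℝ)..(5/6), |t - 5/6|) + ∫ t in (5/6:ℝ)..1, |t - 5/6| :=
        (intervalIntegral.integral_add_adjacent_intervals
          (((continuous_id.sub continuous_const).abs).intervalIntegrable _ _)
          (((continuous_id.sub continuous_const).abs).intervalIntegrable _ _)).symm
      have hs1 : (∫ t in (1/2:ℝ)..(5/6), |t - 5/6|) = ∫ t in (1/2:ℝ)..(5/6), (5/6 - t) := by
        refine intervalIntegral.integral_congr fun x hx => ?_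
        rw [Set.uIcc_of_le (by norm_num : (1/2:ℝ) ≤ 5/6)] at hx
        rw [abs_of_nonpos (by linarith [hx.2])]; ring
      have hs2 : (∫ t in (5/6:ℝ)..1, |t - 5/6|) = ∫ t in (5/6:ℝ)..1, (t - 5/6) := by
        refine intervalIntegral.integral_congr fun x hx => ?_
        rw [Set.uIcc_of_le (by norm_num : (5/6:ℝ) ≤ 1)] at hx
        rw [abs_of_nonneg (by linarith [hx.1])]
      have c1 : (∫ t in (1/2:ℝ)..(5/6), (5/6 - t)) = 1/18 := by
        rw [integral_sub intervalIntegrable_const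
          intervalIntegrable_id]
        simp [integral_id]
        norm_num
      have c2 : (∫ t in (5/6:ℝ)..1, (t - 5/6)) = 1/72 := by
        rw [integral_sub intervalIntegrable_id
          intervalIntegrable_const]
        simp [integral_id]
        norm_num
      rw [hs, hs1, hs2, c1, c2]; ring
    rw [hval] at h2
    calc |B| = ‖B‖ := (Real.norm_eq_abs B).symm
      _ ≤ |5/72 * (C * h)| := h2
      _ = 5/72 * (C * h) := abs_of_nonneg (by positivity)
  rw [identity]
  calc |A + B| ≤ |A| + |B| := abs_add_le A B
    _ ≤ 5/72 * (C * h) + 5/72 * (C * h) := add_le_add hA hB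
    _ = 5/36 * h * C := by ring
end

section
/- Let I ⊆ ℝ be an open invex set with respect to η : I × I → ℝ₊, let f : I → ℝ be differentiable, a, b ∈ I with η(b,a) ≠ 0. If |f'| is prequasiinvex on I, then |(1/6)[f(a) + 4f(a + η(b,a)/2) + f(a + η(b,a))] − (1/η(b,a)) ∫_a^{a+η(b,a)} f(x) dx| ≤ (5/36)·η(b,a)·max{|f'(a)|, |f'(b)|}. -/
open Real MeasureTheory intervalIntegral Set

lemma int_abs_sub (p q r : ℝ) (h1 : p ≤ q) (h2 : q ≤ r) :
    ∫ x in p..r, |x - q| = ((q - p)^2 + (r - q)^2) / 2 := by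
  have hcont : Continuous fun x : ℝ => |x - q| :=
    continuous_abs.comp (continuous_id.sub continuous_const)
  have i1 : ∫ x in p..q, |x - q| = (q - p)^2 / 2 := by
    rw [intervalIntegral.integral_congr (g := fun x => q - x)
      (fun x hx => by
        rw [Set.uIcc_of_le h1] at hx
        rw [abs_of_nonpos (by linarith [hx.2])]; ring)]
    rw [intervalIntegral.integral_sub intervalIntegrable_const intervalIntegrable_id,
      intervalIntegral.integral_const, integral_id, smul_eq_mul]
    ring
  have i2 : ∫ x in q..r, |x - q| = (r - q)^2 / 2 := by
    rw [intervalIntegral.integral_congr (g := fun x => x - q)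
      (fun x hx => by
        rw [Set.uIcc_of_le h2] at hx
        rw [abs_of_nonneg (by linarith [hx.1])])]
    rw [intervalIntegral.integral_sub intervalIntegrable_id intervalIntegrable_const,
      intervalIntegral.integral_const, integral_id, smul_eq_mul]
    ring
  rw [← intervalIntegral.integral_add_adjacent_intervals
    (hcont.intervalIntegrable p q) (hcont.intervalIntegrable q r), i1, i2]
  ring

theorem stmt6 (I : Set ℝ) (η : ℝ → ℝ → ℝ) (f : ℝ → ℝ) (a b : ℝ)
    (hI : IsOpen I)
    (hinv : ∀ u ∈ I, ∀ v ∈ I, ∀ t ∈ Set.Icc (0:ℝ) 1, u + t * η v u ∈ I)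
    (hηnn : ∀ u ∈ I, ∀ v ∈ I, 0 ≤ η v u)
    (ha : a ∈ I) (hb : b ∈ I) (hη : η b a ≠ 0)
    (hf : DifferentiableOn ℝ f I)
    (hpre : ∀ u ∈ I, ∀ v ∈ I, ∀ t ∈ Set.Icc (0:ℝ) 1,
      |deriv f (u + t * η v u)| ≤ max (|deriv f u|) (|deriv f v|)) :
    |(1/6 : ℝ) * (f a + 4 * f (a + η b a / 2) + f (a + η b a)) -
      (1 / η b a) * ∫ x in a..(a + η b a), f x| ≤ (5/36) * η b a * max (|deriv f a|) (|deriv f b|) := by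
  set M := max (|deriv f a|) (|deriv f b|) with hMdef
  have hM : (0:ℝ) ≤ M := le_trans (abs_nonneg _) (le_max_left _ _)
  have hpos : 0 < η b a := lt_of_le_of_ne (hηnn a ha b hb) (Ne.symm hη)
  set h := η b a with hhdef
  have hle : a ≤ a + h := by linarith
  have hle2 : a ≤ a + h/2 := by linarith
  have hle3 : a + h/2 ≤ a + h := by linarith
  -- the interval lies in I
  have hmem : ∀ x ∈ Set.Icc a (a + h), x ∈ I := by
    intro x hx
    have ht : (x - a)/h ∈ Set.Icc (0:ℝ) 1 :=
      ⟨div_nonneg (by linarith [hx.1]) hpos.le, (div_le_one hpos).2 (by linarith [hx.2])⟩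
    have := hinv a ha b hb _ ht
    rw [div_mul_cancel₀ _ (ne_of_gt hpos), show a + (x - a) = x by ring] at this
    exact this
  -- bound on the derivative
  have hbound : ∀ x ∈ Set.Icc a (a + h), |deriv f x| ≤ M := by
    intro x hx
    have ht : (x - a)/h ∈ Set.Icc (0:ℝ) 1 :=
      ⟨div_nonneg (by linarith [hx.1]) hpos.le, (div_le_one hpos).2 (by linarith [hx.2])⟩
    have := hpre a ha b hb _ ht
    rwa [div_mul_cancel₀ _ (ne_of_gt hpos), show a + (x - a) = x by ring] at this
  have hderivAt : ∀ x ∈ Set.Icc a (a + h), HasDerivAt f (deriv f x) x := fun x hx =>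
    (hf.differentiableAt (hI.mem_nhds (hmem x hx))).hasDerivAt
  have hcont : ContinuousOn f (Set.Icc a (a + h)) := hf.continuousOn.mono hmem
  -- integrability of deriv f
  have hd_int : IntervalIntegrable (deriv f) volume a (a + h) := by
    rw [intervalIntegrable_iff_integrableOn_Icc_of_le hle]
    refine Integrable.mono' (g := fun _ => M)
      (integrableOn_const measure_Icc_lt_top.ne)
      ((measurable_deriv f).aestronglyMeasurable.restrict) ?_
    filter_upwards [ae_restrict_mem measurableSet_Icc] with x hx
    simpa [Real.norm_eq_abs] using hbound x hx
  have hd1 : IntervalIntegrable (deriv f) volume a (a + h/2) :=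
    hd_int.mono_set (by
      rw [Set.uIcc_of_le hle]
      exact Set.uIcc_subset_Icc ⟨le_refl a, hle⟩ ⟨hle2, hle3⟩)
  have hd2 : IntervalIntegrable (deriv f) volume (a + h/2) (a + h) :=
    hd_int.mono_set (by
      rw [Set.uIcc_of_le hle]
      exact Set.uIcc_subset_Icc ⟨hle2, hle3⟩ ⟨hle, le_refl _⟩)
  -- integration by parts on each half
  have ibp1 : ∫ x in a..(a + h/2), (x - (a + h/6)) * deriv f x
      = ((a + h/2) - (a + h/6)) * f (a + h/2) - (a - (a + h/6)) * f a
        - ∫ x in a..(a + h/2), f x := by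
    have huicc : Set.uIcc a (a + h/2) ⊆ Set.Icc a (a + h) := by
      rw [Set.uIcc_of_le hle2]
      exact Set.Icc_subset_Icc (le_refl a) hle3
    have := intervalIntegral.integral_mul_deriv_eq_deriv_mul
      (u := fun x => x - (a + h/6)) (v := f) (u' := fun _ => (1:ℝ)) (v' := deriv f)
      (fun x _ => (hasDerivAt_id x).sub_const _)
      (fun x hx => hderivAt x (huicc hx)) intervalIntegrable_const hd1
    simpa using this
  have ibp2 : ∫ x in (a + h/2)..(a + h), (x - (a + 5*h/6)) * deriv f x
      = ((a + h) - (a + 5*h/6)) * f (a + h) - ((a + h/2) - (a + 5*h/6)) * f (a + h/2)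
        - ∫ x in (a + h/2)..(a + h), f x := by
    have huicc : Set.uIcc (a + h/2) (a + h) ⊆ Set.Icc a (a + h) := by
      rw [Set.uIcc_of_le hle3]
      exact Set.Icc_subset_Icc hle2 (le_refl _)
    have := intervalIntegral.integral_mul_deriv_eq_deriv_mul
      (u := fun x => x - (a + 5*h/6)) (v := f) (u' := fun _ => (1:ℝ)) (v' := deriv f)
      (fun x _ => (hasDerivAt_id x).sub_const _)
      (fun x hx => hderivAt x (huicc hx)) intervalIntegrable_const hd2
    simpa using this
  -- the key identity
  have hf1 : IntervalIntegrable f volume a (a + h/2) :=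
    (hcont.mono (by rw [Set.uIcc_of_le hle2]; exact Set.Icc_subset_Icc (le_refl a) hle3)).intervalIntegrable
  have hf2 : IntervalIntegrable f volume (a + h/2) (a + h) :=
    (hcont.mono (by rw [Set.uIcc_of_le hle3]; exact Set.Icc_subset_Icc hle2 (le_refl _))).intervalIntegrable
  have hsplit : (∫ x in a..(a + h/2), f x) + ∫ x in (a + h/2)..(a + h), f x
      = ∫ x in a..(a + h), f x :=
    intervalIntegral.integral_add_adjacent_intervals hf1 hf2
  have key : (1/6 : ℝ) * (f a + 4 * f (a + h / 2) + f (a + h)) -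
      (1 / h) * ∫ x in a..(a + h), f x
      = (1/h) * ((∫ x in a..(a + h/2), (x - (a + h/6)) * deriv f x)
          + ∫ x in (a + h/2)..(a + h), (x - (a + 5*h/6)) * deriv f x) := by
    rw [ibp1, ibp2, ← hsplit]
    field_simp
    ring
  rw [key]
  -- bound the two kernel integrals
  have b1 : |∫ x in a..(a + h/2), (x - (a + h/6)) * deriv f x| ≤ M * (5 * h^2 / 72) := by
    calc |∫ x in a..(a + h/2), (x - (a + h/6)) * deriv f x|
        ≤ ∫ x in a..(a + h/2), |(x - (a + h/6)) * deriv f x| :=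
          intervalIntegral.abs_integral_le_integral_abs hle2
      _ ≤ ∫ x in a..(a + h/2), |x - (a + h/6)| * M := by
          refine intervalIntegral.integral_mono_on hle2 ?_ ?_ ?_
          · exact (hd1.continuousOn_mul
              ((continuous_id.sub continuous_const).continuousOn)).abs
          · exact (((continuous_abs.comp (continuous_id.sub continuous_const)).mul
              continuous_const).intervalIntegrable _ _)
          · intro x hx
            rw [abs_mul]
            exact mul_le_mul_of_nonneg_left
              (hbound x ⟨hx.1, le_trans hx.2 hle3⟩) (abs_nonneg _)
      _ = M * (5 * h^2 / 72) := by
          rw [intervalIntegral.integral_mul_const,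
            int_abs_sub a (a + h/6) (a + h/2) (by linarith) (by linarith)]
          ring
  have b2 : |∫ x in (a + h/2)..(a + h), (x - (a + 5*h/6)) * deriv f x| ≤ M * (5 * h^2 / 72) := by
    calc |∫ x in (a + h/2)..(a + h), (x - (a + 5*h/6)) * deriv f x|
        ≤ ∫ x in (a + h/2)..(a + h), |(x - (a + 5*h/6)) * deriv f x| :=
          intervalIntegral.abs_integral_le_integral_abs hle3
      _ ≤ ∫ x in (a + h/2)..(a + h), |x - (a + 5*h/6)| * M := by
          refine intervalIntegral.integral_mono_on hle3 ?_ ?_ ?_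
          · exact (hd2.continuousOn_mul
              ((continuous_id.sub continuous_const).continuousOn)).abs
          · exact (((continuous_abs.comp (continuous_id.sub continuous_const)).mul
              continuous_const).intervalIntegrable _ _)
          · intro x hx
            rw [abs_mul]
            exact mul_le_mul_of_nonneg_left
              (hbound x ⟨le_trans hle2 hx.1, hx.2⟩) (abs_nonneg _)
      _ = M * (5 * h^2 / 72) := by
          rw [intervalIntegral.integral_mul_const,
            int_abs_sub (a + h/2) (a + 5*h/6) (a + h) (by linarith) (by linarith)]
          ring
  calc |(1/h) * ((∫ x in a..(a + h/2), (x - (a + h/6)) * deriv f x)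
          + ∫ x in (a + h/2)..(a + h), (x - (a + 5*h/6)) * deriv f x)|
      ≤ (1/h) * (|∫ x in a..(a + h/2), (x - (a + h/6)) * deriv f x|
          + |∫ x in (a + h/2)..(a + h), (x - (a + 5*h/6)) * deriv f x|) := by
        rw [abs_mul, abs_of_pos (by positivity : (0:ℝ) < 1/h)]
        exact mul_le_mul_of_nonneg_left (abs_add_le _ _) (by positivity)
    _ ≤ (1/h) * (M * (5 * h^2 / 72) + M * (5 * h^2 / 72)) := by
        exact mul_le_mul_of_nonneg_left (add_le_add b1 b2) (by positivity)
    _ = 5/36 * h * M := by field_simp; ring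
end

section
/- Let I ⊆ ℝ be an open invex set with respect to η : I × I → ℝ₊, let f : I → ℝ be differentiable, a, b ∈ I with η(b,a) ≠ 0, and suppose |f'| is prequasiinvex on I. If additionally f(a) = f(a + η(b,a)/2) = f(a + η(b,a)), then |f(a + η(b,a)/2) − (1/η(b,a)) ∫_a^{a+η(b,a)} f(x) dx| ≤ (5/36)·η(b,a)·max{|f'(a)|, |f'(b)|}. -/
open Real MeasureTheory intervalIntegral Set

theorem stmt7 (I : Set ℝ) (η : ℝ → ℝ → ℝ) (f : ℝ → ℝ) (a b : ℝ)
    (hI : IsOpen I)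
    (hinv : ∀ u ∈ I, ∀ v ∈ I, ∀ t ∈ Set.Icc (0:ℝ) 1, u + t * η v u ∈ I)
    (hηnn : ∀ u ∈ I, ∀ v ∈ I, 0 ≤ η v u)
    (ha : a ∈ I) (hb : b ∈ I) (hη : η b a ≠ 0)
    (hf : DifferentiableOn ℝ f I)
    (hpre : ∀ u ∈ I, ∀ v ∈ I, ∀ t ∈ Set.Icc (0:ℝ) 1,
      |deriv f (u + t * η v u)| ≤ max (|deriv f u|) (|deriv f v|))
    (heq1 : f a = f (a + η b a / 2)) (heq2 : f (a + η b a / 2) = f (a + η b a)) :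
    |f (a + η b a / 2) - (1 / η b a) * ∫ x in a..(a + η b a), f x| ≤
      (5/36) * η b a * max (|deriv f a|) (|deriv f b|) := by
  set h := η b a with hhdef
  have hh0 : 0 < h := lt_of_le_of_ne (hηnn a ha b hb) (Ne.symm hη)
  set M := max (|deriv f a|) (|deriv f b|) with hMdef
  have hM0 : 0 ≤ M := le_trans (abs_nonneg _) (le_max_left _ _)
  set d := a + h with hddef
  set m := a + h / 2 with hmdef
  have had : a ≤ d := by rw [hddef]; linarith
  -- the segment lies in I
  have hparam : ∀ x ∈ Icc a d, (x - a) / h ∈ Icc (0:ℝ) 1 ∧ a + (x - a) / h * h = x := by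
    intro x hx
    have hx2 : x ≤ a + h := hx.2
    refine ⟨⟨div_nonneg (by linarith [hx.1]) hh0.le,
      (div_le_one hh0).2 (by linarith)⟩, by field_simp; ring⟩
  have hsub : Icc a d ⊆ I := by
    intro x hx
    obtain ⟨ht, hx'⟩ := hparam x hx
    have := hinv a ha b hb _ ht
    rwa [hx'] at this
  have hM : ∀ x ∈ Icc a d, |deriv f x| ≤ M := by
    intro x hx
    obtain ⟨ht, hx'⟩ := hparam x hx
    have := hpre a ha b hb _ ht
    rwa [hx'] at this
  -- derivatives
  have hder : ∀ x ∈ Icc a d, HasDerivAt f (deriv f x) x := fun x hx =>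
    (hf.differentiableAt (hI.mem_nhds (hsub hx))).hasDerivAt
  have hfc : ContinuousOn f (Icc a d) := (hf.continuousOn).mono hsub
  -- integrability of deriv f
  have hd_int : IntegrableOn (deriv f) (Icc a d) volume := by
    refine Integrable.mono' (g := fun _ => M) (integrableOn_const measure_Icc_lt_top.ne)
      ((measurable_deriv f).aestronglyMeasurable.restrict) ?_
    exact (ae_restrict_iff' measurableSet_Icc).2 (ae_of_all _ fun x hx => by
      simpa [Real.norm_eq_abs] using hM x hx)
  have hd_ii : ∀ s t, s ∈ Icc a d → t ∈ Icc a d → IntervalIntegrable (deriv f) volume s t := by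
    intro s t hs ht
    exact (hd_int.mono_set (uIcc_subset_Icc hs ht)).intervalIntegrable
  have hf_ii : ∀ s t, s ∈ Icc a d → t ∈ Icc a d → IntervalIntegrable f volume s t := by
    intro s t hs ht
    exact (hfc.mono (uIcc_subset_Icc hs ht)).intervalIntegrable
  -- membership facts
  have hma : m ∈ Icc a d := ⟨by rw [hmdef]; linarith, by rw [hmdef, hddef]; linarith⟩
  have haa : a ∈ Icc a d := ⟨le_refl a, had⟩
  have hdd : d ∈ Icc a d := ⟨had, le_refl d⟩
  -- integration by parts
  have ibp : ∀ c s t, s ∈ Icc a d → t ∈ Icc a d →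
      ∫ x in s..t, (x - c) * deriv f x
        = (t - c) * f t - (s - c) * f s - ∫ x in s..t, f x := by
    intro c s t hs ht
    have := integral_mul_deriv_eq_deriv_mul (u := fun x => x - c) (u' := fun _ => (1:ℝ))
      (v := f) (v' := deriv f)
      (fun x _ => (hasDerivAt_id x).sub_const c)
      (fun x hx => hder x (uIcc_subset_Icc hs ht hx))
      (intervalIntegrable_const (c := 1)) (hd_ii s t hs ht)
    simpa using this
  -- bound lemma
  have bnd : ∀ c s t, a ≤ s → s ≤ c → c ≤ t → t ≤ d →
      |∫ x in s..t, (x - c) * deriv f x| ≤ M * ((c - s)^2/2 + (t - c)^2/2) := by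
    intro c s t has hsc hct htd
    have hst : s ≤ t := le_trans hsc hct
    have hsI : s ∈ Icc a d := ⟨has, le_trans hst htd⟩
    have htI : t ∈ Icc a d := ⟨le_trans has hst, htd⟩
    have habs : |∫ x in s..t, (x - c) * deriv f x| ≤ ∫ x in s..t, |(x - c) * deriv f x| :=
      abs_integral_le_integral_abs hst
    have hii1 : IntervalIntegrable (fun x => |(x - c) * deriv f x|) volume s t :=
      ((hd_ii s t hsI htI).continuousOn_mul
        ((continuous_id.sub continuous_const).continuousOn)).abs
    have hii2 : IntervalIntegrable (fun x => |x - c| * M) volume s t :=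
      (((continuous_id.sub continuous_const).abs.mul continuous_const).intervalIntegrable s t)
    have hmono : (∫ x in s..t, |(x - c) * deriv f x|) ≤ ∫ x in s..t, |x - c| * M := by
      refine integral_mono_on hst hii1 hii2 fun x hx => ?_
      rw [abs_mul]
      exact mul_le_mul_of_nonneg_left
        (hM x ⟨le_trans has hx.1, le_trans hx.2 htd⟩) (abs_nonneg _)
    have hcomp : (∫ x in s..t, |x - c| * M) = M * ((c - s)^2/2 + (t - c)^2/2) := by
      rw [intervalIntegral.integral_mul_const]
      have hsplit : (∫ x in s..c, |x - c|) + (∫ x in c..t, |x - c|) = ∫ x in s..t, |x - c| :=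
        integral_add_adjacent_intervals
          ((continuous_id.sub continuous_const).abs.intervalIntegrable s c)
          ((continuous_id.sub continuous_const).abs.intervalIntegrable c t)
      have h1 : (∫ x in s..c, |x - c|) = (c - s)^2/2 := by
        rw [intervalIntegral.integral_congr (g := fun x => c - x)
          (fun x hx => by
            rw [uIcc_of_le hsc] at hx
            rw [abs_of_nonpos (by linarith [hx.2])]; ring)]
        rw [intervalIntegral.integral_sub (intervalIntegrable_const (c := c)) intervalIntegral.intervalIntegrable_id]
        simp [integral_id, intervalIntegral.integral_const, smul_eq_mul]
        ring
      have h2 : (∫ x in c..t, |x - c|) = (t - c)^2/2 := by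
        rw [intervalIntegral.integral_congr (g := fun x => x - c)
          (fun x hx => by
            rw [uIcc_of_le hct] at hx
            rw [abs_of_nonneg (by linarith [hx.1])])]
        rw [intervalIntegral.integral_sub intervalIntegral.intervalIntegrable_id (intervalIntegrable_const (c := c))]
        simp [integral_id, intervalIntegral.integral_const, smul_eq_mul]
        ring
      rw [← hsplit, h1, h2]; ring
    calc |∫ x in s..t, (x - c) * deriv f x| ≤ ∫ x in s..t, |(x - c) * deriv f x| := habs
      _ ≤ ∫ x in s..t, |x - c| * M := hmono
      _ = M * ((c - s)^2/2 + (t - c)^2/2) := hcomp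
  -- apply with the two kernels
  set c₁ := a + h/6 with hc1
  set c₂ := a + 5*h/6 with hc2
  have hA := ibp c₁ a m haa hma
  have hB := ibp c₂ m d hma hdd
  have hbA := bnd c₁ a m (le_refl a) (by rw [hc1]; linarith) (by rw [hc1, hmdef]; linarith)
    hma.2
  have hbB := bnd c₂ m d hma.1 (by rw [hc2, hmdef]; linarith) (by rw [hc2, hddef]; linarith)
    (le_refl d)
  have hsplitf : (∫ x in a..m, f x) + (∫ x in m..d, f x) = ∫ x in a..d, f x :=
    integral_add_adjacent_intervals (hf_ii a m haa hma) (hf_ii m d hma hdd)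
  have key : h * f m - ∫ x in a..d, f x
      = (∫ x in a..m, (x - c₁) * deriv f x) + (∫ x in m..d, (x - c₂) * deriv f x) := by
    rw [hA, hB, ← hsplitf]
    have hfa : f a = f m := heq1
    have hfd : f m = f d := heq2
    rw [← hfd, ← hfa] at *
    rw [hmdef, hddef, hc1, hc2]
    ring_nf
  have hkey_bound : |h * f m - ∫ x in a..d, f x| ≤ (5/36) * h^2 * M := by
    rw [key]
    calc |(∫ x in a..m, (x - c₁) * deriv f x) + (∫ x in m..d, (x - c₂) * deriv f x)|
        ≤ |∫ x in a..m, (x - c₁) * deriv f x| + |∫ x in m..d, (x - c₂) * deriv f x| :=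
          abs_add_le _ _
      _ ≤ M * ((c₁ - a)^2/2 + (m - c₁)^2/2) + M * ((c₂ - m)^2/2 + (d - c₂)^2/2) := by
          exact add_le_add hbA hbB
      _ = (5/36) * h^2 * M := by rw [hc1, hc2, hmdef, hddef]; ring
  have hgoal : f m - (1/h) * ∫ x in a..d, f x = (1/h) * (h * f m - ∫ x in a..d, f x) := by
    field_simp
  rw [hgoal, abs_mul, abs_of_pos (by positivity : (0:ℝ) < 1/h)]
  calc (1/h) * |h * f m - ∫ x in a..d, f x| ≤ (1/h) * ((5/36) * h^2 * M) := by
        exact mul_le_mul_of_nonneg_left hkey_bound (by positivity)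
    _ = (5/36) * h * M := by field_simp
end

section
/- Let I ⊆ ℝ be an open invex set with respect to η : I × I → ℝ₊, let f : I → ℝ be differentiable, a, b ∈ I with η(b,a) ≠ 0, and let q > 1 with p = q/(q−1). If |f'|^q is prequasiinvex on I, then |(1/6)[f(a) + 4f(a + η(b,a)/2) + f(a + η(b,a))] − (1/η(b,a)) ∫_a^{a+η(b,a)} f(x) dx| ≤ 2·η(b,a)·((1 + 2^{p+1})/(6^{p+1}(p+1)))^{1/p} · ((max{|f'(a)|^q, |f'(b)|^q})/2)^{1/q}. -/
open Real MeasureTheory intervalIntegral Set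

theorem stmt8 (I : Set ℝ) (η : ℝ → ℝ → ℝ) (f : ℝ → ℝ) (a b : ℝ)
    (hI : IsOpen I)
    (hinv : ∀ u ∈ I, ∀ v ∈ I, ∀ t ∈ Set.Icc (0:ℝ) 1, u + t * η v u ∈ I)
    (hηnn : ∀ u ∈ I, ∀ v ∈ I, 0 ≤ η v u)
    (ha : a ∈ I) (hb : b ∈ I) (hη : η b a ≠ 0)
    (hf : DifferentiableOn ℝ f I)
    (q p : ℝ) (hq : 1 < q) (hp : p = q / (q - 1))
    (hpre : ∀ u ∈ I, ∀ v ∈ I, ∀ t ∈ Set.Icc (0:ℝ) 1,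
      |deriv f (u + t * η v u)| ^ q ≤ max (|deriv f u| ^ q) (|deriv f v| ^ q)) :
    |(1/6 : ℝ) * (f a + 4 * f (a + η b a / 2) + f (a + η b a)) -
      (1 / η b a) * ∫ x in a..(a + η b a), f x| ≤ 2 * η b a * ((1 + 2 ^ (p + 1)) / (6 ^ (p + 1) * (p + 1))) ^ (1/p) *
      ((max (|deriv f a| ^ q) (|deriv f b| ^ q)) / 2) ^ (1/q) := by
  set h : ℝ := η b a with hhdef
  have hh : 0 < h := lt_of_le_of_ne (hηnn a ha b hb) (Ne.symm hη)
  have hq0 : (0:ℝ) < q := by linarith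
  have hq1 : (0:ℝ) < q - 1 := by linarith
  have hp1 : 1 < p := by rw [hp, lt_div_iff₀ hq1]; linarith
  have hp0 : (0:ℝ) < p := by linarith
  have hpq : p.HolderConjugate q := by
    exact ((Real.holderConjugate_iff_eq_conjExponent hq).2 hp).symm
  have hinvp : 1 / p = 1 - 1 / q := by
    rw [hp]; field_simp
  -- membership of the segment
  have hmem : ∀ t ∈ Icc (0:ℝ) 1, a + t * h ∈ I := fun t ht => hinv a ha b hb t ht
  set D : ℝ → ℝ := fun t => deriv f (a + t * h) with hDdef
  set g : ℝ → ℝ := fun t => f (a + t * h) with hgdef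
  set M : ℝ := max (|deriv f a| ^ q) (|deriv f b| ^ q) with hMdef
  have hM0 : 0 ≤ M := le_trans (Real.rpow_nonneg (abs_nonneg _) q) (le_max_left _ _)
  have hDb : ∀ t ∈ Icc (0:ℝ) 1, |D t| ≤ M ^ (1/q) := by
    intro t ht
    have h1 : |D t| ^ q ≤ M := hpre a ha b hb t ht
    have h2 : (|D t| ^ q) ^ (1/q) ≤ M ^ (1/q) :=
      Real.rpow_le_rpow (Real.rpow_nonneg (abs_nonneg _) q) h1 (by positivity)
    rw [one_div] at h2 ⊢
    rwa [Real.rpow_rpow_inv (abs_nonneg _) (ne_of_gt hq0)] at h2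
  -- the Simpson kernel
  set k : ℝ → ℝ := fun t => if t ≤ 1/2 then t - 1/6 else t - 5/6 with hkdef
  have hkm : Measurable k := Measurable.ite
    (measurableSet_le measurable_id measurable_const)
    ((measurable_id.sub measurable_const)) ((measurable_id.sub measurable_const))
  have hkb : ∀ t ∈ Icc (0:ℝ) 1, |k t| ≤ 1 := by
    intro t ht
    simp only [hkdef]
    split_ifs <;> rw [abs_le] <;> constructor <;> linarith [ht.1, ht.2]
  have hDm : Measurable D := (measurable_deriv f).comp
    (measurable_const.add (measurable_id.mul measurable_const))
  -- generic integrability helper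
  have intg : ∀ (F : ℝ → ℝ), Measurable F → ∀ C : ℝ, (∀ t ∈ Icc (0:ℝ) 1, |F t| ≤ C) →
      ∀ c d : ℝ, c ∈ Icc (0:ℝ) 1 → d ∈ Icc (0:ℝ) 1 → IntervalIntegrable F volume c d := by
    intro F hFm C hFb c d hc hd
    rw [intervalIntegrable_iff]
    haveI : IsFiniteMeasure (volume.restrict (Set.uIoc c d)) := by
      constructor
      rw [Measure.restrict_apply_univ, Set.uIoc]
      exact measure_Ioc_lt_top
    refine Integrable.mono' (integrable_const C) hFm.aestronglyMeasurable.restrict ?_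
    refine (ae_restrict_iff' measurableSet_uIoc).2 (Filter.Eventually.of_forall ?_)
    intro x hx
    rw [Set.uIoc, Set.mem_Ioc] at hx
    have hx' : x ∈ Icc (0:ℝ) 1 :=
      ⟨le_trans (le_inf hc.1 hd.1) hx.1.le, le_trans hx.2 (sup_le hc.2 hd.2)⟩
    rw [Real.norm_eq_abs]; exact hFb x hx'
  have hDint : ∀ c d : ℝ, c ∈ Icc (0:ℝ) 1 → d ∈ Icc (0:ℝ) 1 →
      IntervalIntegrable (fun t => h * D t) volume c d := by
    intro c d hc hd
    exact (intg D hDm (M ^ (1/q)) hDb c d hc hd).const_mul h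
  have hkDint : ∀ c d : ℝ, c ∈ Icc (0:ℝ) 1 → d ∈ Icc (0:ℝ) 1 →
      IntervalIntegrable (fun t => k t * (h * D t)) volume c d := by
    intro c d hc hd
    refine intg (fun t => k t * (h * D t)) (hkm.mul (measurable_const.mul hDm)) (1 * (h * M ^ (1/q))) ?_ c d hc hd
    intro t ht
    rw [abs_mul, abs_mul, abs_of_nonneg hh.le]
    exact mul_le_mul (hkb t ht) (mul_le_mul_of_nonneg_left (hDb t ht) hh.le)
      (by positivity) (by norm_num)
  -- derivative of g
  have hgderiv : ∀ t ∈ Icc (0:ℝ) 1, HasDerivAt g (h * D t) t := by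
    intro t ht
    have hmt := hmem t ht
    have hfd : HasDerivAt f (D t) (a + t * h) :=
      ((hf _ hmt).differentiableAt (hI.mem_nhds hmt)).hasDerivAt
    have haff : HasDerivAt (fun s : ℝ => a + s * h) h t := by
      simpa using ((hasDerivAt_id t).mul_const h).const_add a
    simpa [hgdef, Function.comp_def, mul_comm] using hfd.comp t haff
  have hgc : ContinuousOn g (Icc 0 1) := by
    refine (hf.continuousOn).comp ?_ hmem
    exact (continuous_const.add (continuous_id.mul continuous_const)).continuousOn
  have hgint : ∀ c d : ℝ, c ∈ Icc (0:ℝ) 1 → d ∈ Icc (0:ℝ) 1 →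
      IntervalIntegrable g volume c d := by
    intro c d hc hd
    refine (hgc.mono ?_).intervalIntegrable
    intro x hx
    rw [Set.uIcc, Set.mem_Icc] at hx
    exact ⟨le_trans (le_inf hc.1 hd.1) hx.1, le_trans hx.2 (sup_le hc.2 hd.2)⟩
  -- integration by parts
  have IBP : ∀ c d e : ℝ, c ∈ Icc (0:ℝ) 1 → d ∈ Icc (0:ℝ) 1 → c ≤ d →
      ∫ t in c..d, (t - e) * (h * D t) =
        (d - e) * g d - (c - e) * g c - ∫ t in c..d, g t := by
    intro c d e hc hd hcd
    have hsub : Set.uIcc c d ⊆ Icc (0:ℝ) 1 := by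
      rw [Set.uIcc_of_le hcd]; exact Set.Icc_subset_Icc hc.1 hd.2
    have := intervalIntegral.integral_mul_deriv_eq_deriv_mul
      (u := fun t => t - e) (u' := fun _ => (1:ℝ)) (v := g) (v' := fun t => h * D t)
      (fun x hx => (hasDerivAt_id x).sub_const e)
      (fun x hx => hgderiv x (hsub hx))
      intervalIntegrable_const (hDint c d hc hd)
    simpa [one_mul] using this
  have h0 : (0:ℝ) ∈ Icc (0:ℝ) 1 := by norm_num
  have h12 : (1/2:ℝ) ∈ Icc (0:ℝ) 1 := by norm_num
  have h1 : (1:ℝ) ∈ Icc (0:ℝ) 1 := by norm_num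
  -- the key identity
  set T : ℝ := ∫ t in (0:ℝ)..1, k t * (h * D t) with hTdef
  have eqA : ∫ t in (0:ℝ)..(1/2), k t * (h * D t)
      = ∫ t in (0:ℝ)..(1/2), (t - 1/6) * (h * D t) := by
    refine intervalIntegral.integral_congr ?_
    intro t ht
    rw [Set.uIcc_of_le (by norm_num : (0:ℝ) ≤ 1/2)] at ht
    simp only [hkdef, if_pos ht.2]
  have eqB : ∫ t in (1/2:ℝ)..1, k t * (h * D t)
      = ∫ t in (1/2:ℝ)..1, (t - 5/6) * (h * D t) := by
    refine intervalIntegral.integral_congr_ae ?_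
    refine Filter.Eventually.of_forall ?_
    intro t ht
    rw [Set.uIoc_of_le (by norm_num : (1/2:ℝ) ≤ 1)] at ht
    simp only [hkdef, if_neg (not_le.2 ht.1)]
  have hsplitk : T = (∫ t in (0:ℝ)..(1/2), k t * (h * D t))
      + ∫ t in (1/2:ℝ)..1, k t * (h * D t) :=
    (intervalIntegral.integral_add_adjacent_intervals
      (hkDint 0 (1/2) h0 h12) (hkDint (1/2) 1 h12 h1)).symm
  have hsplitg : ∫ t in (0:ℝ)..1, g t = (∫ t in (0:ℝ)..(1/2), g t)
      + ∫ t in (1/2:ℝ)..1, g t :=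
    (intervalIntegral.integral_add_adjacent_intervals
      (hgint 0 (1/2) h0 h12) (hgint (1/2) 1 h12 h1)).symm
  have hT : T = (1/6) * g 0 + (2/3) * g (1/2) + (1/6) * g 1 - ∫ t in (0:ℝ)..1, g t := by
    rw [hsplitk, eqA, eqB, IBP 0 (1/2) (1/6) h0 h12 (by norm_num),
      IBP (1/2) 1 (5/6) h12 h1 (by norm_num), hsplitg]
    ring
  -- change of variables
  have hcv : ∫ x in a..(a + h), f x = h * ∫ t in (0:ℝ)..1, g t := by
    have := intervalIntegral.integral_comp_add_mul f (a := 0) (b := 1) (ne_of_gt hh) a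
    simp only [mul_zero, add_zero, mul_one, smul_eq_mul] at this
    have hg2 : ∫ x in (0:ℝ)..1, f (a + h * x) = ∫ t in (0:ℝ)..1, g t := by
      refine intervalIntegral.integral_congr ?_
      intro t _; simp only [hgdef]; ring_nf
    rw [hg2] at this
    rw [this]; field_simp
  have hLHS : (1/6 : ℝ) * (f a + 4 * f (a + h / 2) + f (a + h)) -
      (1 / h) * ∫ x in a..(a + h), f x = T := by
    have e0 : f a = g 0 := by simp [hgdef]
    have e12 : f (a + h / 2) = g (1/2) := by
      simp only [hgdef]
      congr 1
      ring
    have e1 : f (a + h) = g 1 := by simp [hgdef]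
    rw [hcv, e0, e12, e1, hT]
    field_simp
    ring
  rw [hLHS]
  -- now the estimate
  set μ : Measure ℝ := volume.restrict (Ioc (0:ℝ) 1) with hμdef
  have hfin : IsFiniteMeasure μ := by
    constructor
    rw [hμdef, Measure.restrict_apply_univ, Real.volume_Ioc]
    exact ENNReal.ofReal_lt_top
  have habs : |T| ≤ h * ∫ t, |k t| * |D t| ∂μ := by
    have h1' : |T| ≤ ∫ t in (0:ℝ)..1, |k t * (h * D t)| :=
      intervalIntegral.abs_integral_le_integral_abs (by norm_num)
    have h2' : ∫ t in (0:ℝ)..1, |k t * (h * D t)|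
        = ∫ t in (0:ℝ)..1, h * (|k t| * |D t|) := by
      refine intervalIntegral.integral_congr fun t _ => ?_
      rw [abs_mul, abs_mul, abs_of_nonneg hh.le]; ring
    rw [h2', intervalIntegral.integral_of_le (by norm_num : (0:ℝ) ≤ 1)] at h1'
    rwa [MeasureTheory.integral_const_mul] at h1'
  -- Hölder
  have hkmem : MemLp (fun t => |k t|) (ENNReal.ofReal p) μ := by
    refine MemLp.of_bound hkm.abs.aestronglyMeasurable.restrict 1 ?_
    refine (ae_restrict_iff' measurableSet_Ioc).2 (Filter.Eventually.of_forall ?_)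
    intro x hx
    rw [Real.norm_eq_abs, abs_abs]
    exact hkb x ⟨hx.1.le, hx.2⟩
  have hDmem : MemLp (fun t => |D t|) (ENNReal.ofReal q) μ := by
    refine MemLp.of_bound hDm.abs.aestronglyMeasurable.restrict (M ^ (1/q)) ?_
    refine (ae_restrict_iff' measurableSet_Ioc).2 (Filter.Eventually.of_forall ?_)
    intro x hx
    rw [Real.norm_eq_abs, abs_abs]
    exact hDb x ⟨hx.1.le, hx.2⟩
  have hol : ∫ t, |k t| * |D t| ∂μ ≤
      (∫ t, |k t| ^ p ∂μ) ^ (1/p) * (∫ t, |D t| ^ q ∂μ) ^ (1/q) :=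
    MeasureTheory.integral_mul_le_Lp_mul_Lq_of_nonneg hpq
      (Filter.Eventually.of_forall fun t => abs_nonneg _)
      (Filter.Eventually.of_forall fun t => abs_nonneg _) hkmem hDmem
  -- compute the kernel integral
  have hp1' : p + 1 ≠ 0 := by positivity
  have hrpow2 : ∀ c d : ℝ, ∫ x in c..d, (x - c) ^ p = (d - c) ^ (p+1) / (p+1) := by
    intro c d
    rw [intervalIntegral.integral_comp_sub_right (fun x => x ^ p) c, sub_self,
      integral_rpow (Or.inl (by linarith)), Real.zero_rpow hp1']
    ring
  have hrpow3 : ∀ c d : ℝ, ∫ x in c..d, (d - x) ^ p = (d - c) ^ (p+1) / (p+1) := by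
    intro c d
    rw [intervalIntegral.integral_comp_sub_left (fun x => x ^ p) d, sub_self,
      integral_rpow (Or.inl (by linarith)), Real.zero_rpow hp1']
    ring
  have hKAint : ∀ c d : ℝ, c ∈ Icc (0:ℝ) 1 → d ∈ Icc (0:ℝ) 1 →
      IntervalIntegrable (fun t => |k t| ^ p) volume c d := by
    intro c d hc hd
    refine intg _ (hkm.abs.pow measurable_const) 1 ?_ c d hc hd
    intro t ht
    rw [abs_of_nonneg (Real.rpow_nonneg (abs_nonneg _) p)]
    exact Real.rpow_le_one (abs_nonneg _) (hkb t ht) hp0.le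
  have P1 : ∫ t in (0:ℝ)..(1/6), |k t| ^ p = (1/6:ℝ) ^ (p+1) / (p+1) := by
    have : ∫ t in (0:ℝ)..(1/6), |k t| ^ p = ∫ t in (0:ℝ)..(1/6), (1/6 - t) ^ p := by
      refine intervalIntegral.integral_congr fun t ht => ?_
      rw [Set.uIcc_of_le (by norm_num : (0:ℝ) ≤ 1/6)] at ht
      simp only [hkdef, if_pos (by linarith [ht.2] : t ≤ 1/2)]
      rw [abs_of_nonpos (by linarith [ht.2])]
      ring_nf
    rw [this, hrpow3 0 (1/6), show (1/6 - 0 : ℝ) = 1/6 by norm_num]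
  have P2 : ∫ t in (1/6:ℝ)..(1/2), |k t| ^ p = (1/3:ℝ) ^ (p+1) / (p+1) := by
    have : ∫ t in (1/6:ℝ)..(1/2), |k t| ^ p = ∫ t in (1/6:ℝ)..(1/2), (t - 1/6) ^ p := by
      refine intervalIntegral.integral_congr fun t ht => ?_
      rw [Set.uIcc_of_le (by norm_num : (1/6:ℝ) ≤ 1/2)] at ht
      simp only [hkdef, if_pos ht.2]
      rw [abs_of_nonneg (by linarith [ht.1])]
    rw [this, hrpow2 (1/6) (1/2), show (1/2 - 1/6 : ℝ) = 1/3 by norm_num]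
  have P3 : ∫ t in (1/2:ℝ)..(5/6), |k t| ^ p = (1/3:ℝ) ^ (p+1) / (p+1) := by
    have : ∫ t in (1/2:ℝ)..(5/6), |k t| ^ p = ∫ t in (1/2:ℝ)..(5/6), (5/6 - t) ^ p := by
      refine intervalIntegral.integral_congr fun t ht => ?_
      rw [Set.uIcc_of_le (by norm_num : (1/2:ℝ) ≤ 5/6)] at ht
      by_cases hcase : t ≤ 1/2
      · have : t = 1/2 := le_antisymm hcase ht.1
        subst this
        simp only [hkdef, if_pos le_rfl]
        rw [show (1/2 - 1/6 : ℝ) = 1/3 by norm_num, show (5/6 - 1/2 : ℝ) = 1/3 by norm_num,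
          abs_of_nonneg (by norm_num : (0:ℝ) ≤ 1/3)]
      · simp only [hkdef, if_neg hcase]
        rw [abs_of_nonpos (by linarith [ht.2])]
        ring_nf
    rw [this, hrpow3 (1/2) (5/6), show (5/6 - 1/2 : ℝ) = 1/3 by norm_num]
  have P4 : ∫ t in (5/6:ℝ)..1, |k t| ^ p = (1/6:ℝ) ^ (p+1) / (p+1) := by
    have : ∫ t in (5/6:ℝ)..1, |k t| ^ p = ∫ t in (5/6:ℝ)..1, (t - 5/6) ^ p := by
      refine intervalIntegral.integral_congr fun t ht => ?_
      rw [Set.uIcc_of_le (by norm_num : (5/6:ℝ) ≤ 1)] at ht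
      simp only [hkdef, if_neg (by push_neg; linarith [ht.1] : ¬ (t ≤ 1/2))]
      rw [abs_of_nonneg (by linarith [ht.1])]
    rw [this, hrpow2 (5/6) 1, show (1 - 5/6 : ℝ) = 1/6 by norm_num]
  have hKA : ∫ t, |k t| ^ p ∂μ
      = 2 * ((1/6:ℝ) ^ (p+1) + (1/3:ℝ) ^ (p+1)) / (p+1) := by
    have hsum : ∫ t in (0:ℝ)..1, |k t| ^ p
        = ((1/6:ℝ) ^ (p+1) + (1/3:ℝ) ^ (p+1) + (1/3:ℝ) ^ (p+1) + (1/6:ℝ) ^ (p+1)) / (p+1) := by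
      have s1 := intervalIntegral.integral_add_adjacent_intervals
        (hKAint 0 (1/6) h0 (by norm_num)) (hKAint (1/6) (1/2) (by norm_num) h12)
      have s2 := intervalIntegral.integral_add_adjacent_intervals
        (hKAint 0 (1/2) h0 h12) (hKAint (1/2) (5/6) h12 (by norm_num))
      have s3 := intervalIntegral.integral_add_adjacent_intervals
        (hKAint 0 (5/6) h0 (by norm_num)) (hKAint (5/6) 1 (by norm_num) h1)
      rw [← s3, ← s2, ← s1, P1, P2, P3, P4]
      ring
    have : ∫ t, |k t| ^ p ∂μ = ∫ t in (0:ℝ)..1, |k t| ^ p := by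
      rw [intervalIntegral.integral_of_le (by norm_num : (0:ℝ) ≤ 1)]
    rw [this, hsum]; ring
  -- bound the D integral
  have hDq : ∫ t, |D t| ^ q ∂μ ≤ M := by
    have hint1 : Integrable (fun t => |D t| ^ q) μ := by
      have := hKAint  -- dummy
      rw [hμdef, ← IntegrableOn, ← Set.uIoc_of_le (by norm_num : (0:ℝ) ≤ 1),
        ← intervalIntegrable_iff]
      refine intg _ (hDm.abs.pow measurable_const) M ?_ 0 1 h0 h1
      intro t ht
      rw [abs_of_nonneg (Real.rpow_nonneg (abs_nonneg _) q)]
      exact hpre a ha b hb t ht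
    have hle : ∀ᵐ t ∂μ, |D t| ^ q ≤ M := by
      refine (ae_restrict_iff' measurableSet_Ioc).2 (Filter.Eventually.of_forall ?_)
      intro t ht
      exact hpre a ha b hb t ⟨ht.1.le, ht.2⟩
    calc ∫ t, |D t| ^ q ∂μ ≤ ∫ _t, M ∂μ :=
          integral_mono_ae hint1 (integrable_const M) hle
      _ = M := by
          rw [MeasureTheory.integral_const, smul_eq_mul, measureReal_restrict_apply_univ,
            measureReal_def, Real.volume_Ioc]
          norm_num
  -- assemble
  have hA0 : 0 ≤ ∫ t, |k t| ^ p ∂μ := integral_nonneg fun t => Real.rpow_nonneg (abs_nonneg _) p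
  have hB0 : 0 ≤ ∫ t, |D t| ^ q ∂μ := integral_nonneg fun t => Real.rpow_nonneg (abs_nonneg _) q
  have hchain : |T| ≤ h * ((2 * ((1/6:ℝ) ^ (p+1) + (1/3:ℝ) ^ (p+1)) / (p+1)) ^ (1/p) * M ^ (1/q)) := by
    refine le_trans habs (mul_le_mul_of_nonneg_left ?_ hh.le)
    refine le_trans hol ?_
    rw [hKA]
    refine mul_le_mul_of_nonneg_left ?_ (Real.rpow_nonneg (by positivity) _)
    exact Real.rpow_le_rpow hB0 hDq (by positivity)
  refine le_trans hchain (le_of_eq ?_)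
  -- final algebra
  have h6 : (0:ℝ) < (6:ℝ) ^ (p+1) := Real.rpow_pos_of_pos (by norm_num) _
  have h2p : (0:ℝ) < (2:ℝ) ^ (p+1) := Real.rpow_pos_of_pos (by norm_num) _
  have e16 : (1/6:ℝ) ^ (p+1) = 1 / 6 ^ (p+1) := by
    rw [Real.div_rpow (by norm_num) (by norm_num), Real.one_rpow]
  have e13 : (1/3:ℝ) ^ (p+1) = 2 ^ (p+1) / 6 ^ (p+1) := by
    rw [show (1/3:ℝ) = 2/6 by norm_num, Real.div_rpow (by norm_num) (by norm_num)]
  have hW0 : (0:ℝ) ≤ (1 + 2 ^ (p+1)) / (6 ^ (p+1) * (p+1)) := by positivity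
  have eV : 2 * ((1/6:ℝ) ^ (p+1) + (1/3:ℝ) ^ (p+1)) / (p+1)
      = 2 * ((1 + 2 ^ (p+1)) / (6 ^ (p+1) * (p+1))) := by
    rw [e16, e13]
    field_simp
  rw [eV, Real.mul_rpow (by norm_num) hW0]
  have e2 : (2:ℝ) ^ (1/p) = 2 / 2 ^ (1/q) := by
    rw [hinvp, Real.rpow_sub (by norm_num : (0:ℝ) < 2), Real.rpow_one]
  have e2q : (0:ℝ) < (2:ℝ) ^ (1/q) := Real.rpow_pos_of_pos (by norm_num) _
  rw [e2, Real.div_rpow hM0 (by norm_num : (0:ℝ) ≤ 2)]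
  field_simp
end

section
/- (Special case η(b,a) = b − a of Theorem 3.1, classical Simpson bound.) Let f : [a,b] → ℝ be differentiable with a < b, and suppose |f'| is convex on [a,b]. Then |(1/6)[f(a) + 4f((a+b)/2) + f(b)] − (1/(b−a)) ∫_a^b f(x) dx| ≤ (5/72)(b−a)(|f'(a)| + |f'(b)|). -/
open Real MeasureTheory intervalIntegral Set

private lemma key_int (p q c α β : ℝ) :
    ∫ x in p..q, (x - c) * (α + β * x) =
      (α * q^2/2 + β * q^3/3 - c*(α*q + β*q^2/2)) -
      (α * p^2/2 + β * p^3/3 - c*(α*p + β*p^2/2)) := by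
  rw [integral_eq_sub_of_hasDerivAt
    (f := fun x => α * x^2/2 + β * x^3/3 - c*(α*x + β*x^2/2))]
  · intro x _
    have h2 : HasDerivAt (fun x : ℝ => x^2) (2*x) x := by simpa using hasDerivAt_pow 2 x
    have h3 : HasDerivAt (fun x : ℝ => x^3) (3*x^2) x := by simpa using hasDerivAt_pow 3 x
    have H : HasDerivAt (fun x : ℝ => α * x^2/2 + β * x^3/3 - c*(α*x + β*x^2/2))
        (α*(2*x)/2 + β*(3*x^2)/3 - c*(α*1 + β*(2*x)/2)) x :=
      (((h2.const_mul α).div_const 2).add ((h3.const_mul β).div_const 3)).sub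
        ((((hasDerivAt_id x).const_mul α).add ((h2.const_mul β).div_const 2)).const_mul c)
    exact H.congr_deriv (by ring)
  · exact Continuous.intervalIntegrable ((continuous_id.sub continuous_const).mul (continuous_const.add (continuous_const.mul continuous_id))) p q

private lemma piece_bound (f' k g : ℝ → ℝ) {a b p q : ℝ} (hap : a ≤ p) (hpq : p ≤ q)
    (hqb : q ≤ b) (hk : Continuous k) (hg : Continuous g)
    (hint : IntervalIntegrable f' volume a b)
    (hbd : ∀ x ∈ Icc a b, |f' x| ≤ g x) :
    |∫ x in p..q, k x * f' x| ≤ ∫ x in p..q, |k x| * g x := by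
  have hab : a ≤ b := le_trans hap (le_trans hpq hqb)
  have hsub : Icc p q ⊆ Icc a b := Icc_subset_Icc hap hqb
  have hint' : IntervalIntegrable f' volume p q :=
    hint.mono_set (by rw [uIcc_of_le hpq, uIcc_of_le hab]; exact hsub)
  have i1 : IntervalIntegrable (fun x => |k x| * |f' x|) volume p q :=
    hint'.abs.continuousOn_mul hk.abs.continuousOn
  have i2 : IntervalIntegrable (fun x => |k x| * g x) volume p q :=
    (hk.abs.mul hg).intervalIntegrable p q
  calc |∫ x in p..q, k x * f' x| ≤ ∫ x in p..q, |k x * f' x| :=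
        abs_integral_le_integral_abs hpq
    _ = ∫ x in p..q, |k x| * |f' x| := integral_congr fun x _ => abs_mul _ _
    _ ≤ ∫ x in p..q, |k x| * g x := by
        refine integral_mono_on hpq i1 i2 fun x hx => ?_
        exact mul_le_mul_of_nonneg_left (hbd x (hsub hx)) (abs_nonneg _)

set_option maxHeartbeats 1000000 in
theorem stmt17 (f f' : ℝ → ℝ) (a b : ℝ) (hab : a < b)
    (hf : ∀ x ∈ Set.Icc a b, HasDerivAt f (f' x) x)
    (hconv : ∀ x ∈ Set.Icc a b, ∀ y ∈ Set.Icc a b, ∀ t ∈ Set.Icc (0:ℝ) 1,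
      |f' ((1 - t) * x + t * y)| ≤ (1 - t) * |f' x| + t * |f' y|) :
    |(1/6 : ℝ) * (f a + 4 * f ((a + b) / 2) + f b) - (1 / (b - a)) * ∫ x in a..b, f x| ≤
      (5/72) * (b - a) * (|f' a| + |f' b|) := by
  have hab' : a ≤ b := hab.le
  have h0 : (0:ℝ) < b - a := by linarith
  have hne : b - a ≠ 0 := ne_of_gt h0
  set A := |f' a| with hA
  set B := |f' b| with hB
  set m : ℝ := (a + b) / 2 with hm
  set c1 : ℝ := (5*a + b) / 6 with hc1
  set c2 : ℝ := (a + 5*b) / 6 with hc2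
  have hac1 : a ≤ c1 := by rw [hc1]; linarith
  have hc1m : c1 ≤ m := by rw [hc1, hm]; linarith
  have ham : a ≤ m := le_trans hac1 hc1m
  have hmc2 : m ≤ c2 := by rw [hm, hc2]; linarith
  have hc2b : c2 ≤ b := by rw [hc2]; linarith
  have hmb : m ≤ b := le_trans hmc2 hc2b
  -- the linear bound g
  set g : ℝ → ℝ := fun x => ((b - x) * A + (x - a) * B) / (b - a) with hgdef
  have hgc : Continuous g := by
    rw [hgdef]
    exact (((continuous_const.sub continuous_id).mul continuous_const).add ((continuous_id.sub continuous_const).mul continuous_const)).div_const _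
  have hbd : ∀ x ∈ Icc a b, |f' x| ≤ g x := by
    intro x hx
    have ht : (x - a)/(b - a) ∈ Icc (0:ℝ) 1 := by
      constructor
      · apply div_nonneg <;> linarith [hx.1]
      · rw [div_le_one h0]; linarith [hx.2]
    have h2 := hconv a ⟨le_refl a, hab'⟩ b ⟨hab', le_refl b⟩ ((x - a)/(b - a)) ht
    have hx' : (1 - (x - a)/(b - a)) * a + ((x - a)/(b - a)) * b = x := by
      field_simp
      ring
    rw [hx'] at h2
    refine h2.trans (le_of_eq ?_)
    rw [hgdef, ← hA, ← hB]
    field_simp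
    try ring
  -- integrability of f'
  have heq : EqOn (deriv f) f' (Icc a b) := fun x hx => (hf x hx).deriv
  have hmeas : AEStronglyMeasurable f' (volume.restrict (Icc a b)) := by
    refine (measurable_deriv f).aestronglyMeasurable.congr ?_
    filter_upwards [ae_restrict_mem measurableSet_Icc] with x hx using heq hx
  have hintf' : IntervalIntegrable f' volume a b := by
    rw [intervalIntegrable_iff_integrableOn_Icc_of_le hab']
    refine Integrable.mono' (hgc.integrableOn_Icc) hmeas ?_
    filter_upwards [ae_restrict_mem measurableSet_Icc] with x hx
    simpa using hbd x hx
  have hfc : ContinuousOn f (Icc a b) :=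
    fun x hx => (hf x hx).continuousAt.continuousWithinAt
  have subIcc : ∀ p q : ℝ, a ≤ p → p ≤ q → q ≤ b → uIcc p q ⊆ Icc a b := by
    intro p q h1 h3 h2
    rw [uIcc_of_le h3]
    exact Icc_subset_Icc h1 h2
  have subU : ∀ p q : ℝ, a ≤ p → p ≤ q → q ≤ b → uIcc p q ⊆ uIcc a b := by
    intro p q h1 h3 h2
    rw [uIcc_of_le hab']
    exact subIcc p q h1 h3 h2
  -- integration by parts on [a,m] and [m,b]
  have IBP1 : ∫ x in a..m, (x - c1) * f' x
      = (m - c1) * f m - (a - c1) * f a - ∫ x in a..m, f x := by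
    have H := integral_mul_deriv_eq_deriv_mul (u := fun x => x - c1)
      (u' := fun _ => (1:ℝ)) (v := f) (v' := f')
      (fun x _ => (hasDerivAt_id x).sub_const c1)
      (fun x hx => hf x (subIcc a m le_rfl ham hmb hx))
      intervalIntegrable_const
      (hintf'.mono_set (subU a m le_rfl ham hmb))
    simpa using H
  have IBP2 : ∫ x in m..b, (x - c2) * f' x
      = (b - c2) * f b - (m - c2) * f m - ∫ x in m..b, f x := by
    have H := integral_mul_deriv_eq_deriv_mul (u := fun x => x - c2)
      (u' := fun _ => (1:ℝ)) (v := f) (v' := f')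
      (fun x _ => (hasDerivAt_id x).sub_const c2)
      (fun x hx => hf x (subIcc m b ham hmb le_rfl hx))
      intervalIntegrable_const
      (hintf'.mono_set (subU m b ham hmb le_rfl))
    simpa using H
  have hsplitf : (∫ x in a..m, f x) + ∫ x in m..b, f x = ∫ x in a..b, f x :=
    integral_add_adjacent_intervals
      ((hfc.mono (subIcc a m le_rfl ham hmb)).intervalIntegrable)
      ((hfc.mono (subIcc m b ham hmb le_rfl)).intervalIntegrable)
  -- key identity
  have hkey : (1/6 : ℝ) * (f a + 4 * f ((a + b) / 2) + f b) - (1 / (b - a)) * ∫ x in a..b, f x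
      = (1/(b-a)) * ((∫ x in a..m, (x - c1) * f' x) + ∫ x in m..b, (x - c2) * f' x) := by
    rw [IBP1, IBP2, ← hsplitf, ← hm, hm, hc1, hc2]
    field_simp
    ring
  -- split the kernel integrals at c1 and c2
  have Ik : ∀ c p q : ℝ, a ≤ p → p ≤ q → q ≤ b →
      IntervalIntegrable (fun x => (x - c) * f' x) volume p q := by
    intro c p q h1 h2 h3
    exact (hintf'.mono_set (subU p q h1 h2 h3)).continuousOn_mul
      (Continuous.continuousOn (continuous_id.sub continuous_const))
  have hsplit1 : (∫ x in a..c1, (x - c1) * f' x) + ∫ x in c1..m, (x - c1) * f' x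
      = ∫ x in a..m, (x - c1) * f' x :=
    integral_add_adjacent_intervals (Ik c1 a c1 le_rfl hac1 (hc1m.trans hmb))
      (Ik c1 c1 m hac1 hc1m hmb)
  have hsplit2 : (∫ x in m..c2, (x - c2) * f' x) + ∫ x in c2..b, (x - c2) * f' x
      = ∫ x in m..b, (x - c2) * f' x :=
    integral_add_adjacent_intervals (Ik c2 m c2 ham hmc2 hc2b)
      (Ik c2 c2 b (ham.trans hmc2) hc2b le_rfl)
  -- bounds on each of the four pieces
  have pb : ∀ c p q : ℝ, a ≤ p → p ≤ q → q ≤ b →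
      |∫ x in p..q, (x - c) * f' x| ≤ ∫ x in p..q, |x - c| * g x := by
    intro c p q h1 h2 h3
    exact piece_bound f' (fun x => x - c) g h1 h2 h3 (continuous_id.sub continuous_const) hgc hintf' hbd
  -- closed forms: write g x = α + β x
  set α : ℝ := b * A - a * B with hα
  set β : ℝ := B - A with hβ
  have hgx : ∀ x : ℝ, g x = (α + β * x) / (b - a) := by
    intro x
    rw [hgdef, hα, hβ]
    rw [div_eq_div_iff hne hne]
    ring
  have e1 : ∫ x in a..c1, |x - c1| * g x
      = (1/(b-a)) * ∫ x in a..c1, (x - c1) * (-α + -β * x) := by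
    rw [← intervalIntegral.integral_const_mul]
    refine integral_congr fun x hx => ?_
    rw [uIcc_of_le hac1] at hx
    rw [abs_of_nonpos (by linarith [hx.2]), hgx x]
    field_simp
    ring
  have e2 : ∫ x in c1..m, |x - c1| * g x
      = (1/(b-a)) * ∫ x in c1..m, (x - c1) * (α + β * x) := by
    rw [← intervalIntegral.integral_const_mul]
    refine integral_congr fun x hx => ?_
    rw [uIcc_of_le hc1m] at hx
    rw [abs_of_nonneg (by linarith [hx.1]), hgx x]
    field_simp
  have e3 : ∫ x in m..c2, |x - c2| * g x
      = (1/(b-a)) * ∫ x in m..c2, (x - c2) * (-α + -β * x) := by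
    rw [← intervalIntegral.integral_const_mul]
    refine integral_congr fun x hx => ?_
    rw [uIcc_of_le hmc2] at hx
    rw [abs_of_nonpos (by linarith [hx.2]), hgx x]
    field_simp
    ring
  have e4 : ∫ x in c2..b, |x - c2| * g x
      = (1/(b-a)) * ∫ x in c2..b, (x - c2) * (α + β * x) := by
    rw [← intervalIntegral.integral_const_mul]
    refine integral_congr fun x hx => ?_
    rw [uIcc_of_le hc2b] at hx
    rw [abs_of_nonneg (by linarith [hx.1]), hgx x]
    field_simp
  -- the total bound
  have b1 : |∫ x in a..m, (x - c1) * f' x|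
      ≤ (∫ x in a..c1, |x - c1| * g x) + ∫ x in c1..m, |x - c1| * g x := by
    rw [← hsplit1]
    exact (abs_add_le _ _).trans (add_le_add (pb c1 a c1 le_rfl hac1 (hc1m.trans hmb))
      (pb c1 c1 m hac1 hc1m hmb))
  have b2 : |∫ x in m..b, (x - c2) * f' x|
      ≤ (∫ x in m..c2, |x - c2| * g x) + ∫ x in c2..b, |x - c2| * g x := by
    rw [← hsplit2]
    exact (abs_add_le _ _).trans (add_le_add (pb c2 m c2 ham hmc2 hc2b)
      (pb c2 c2 b (ham.trans hmc2) hc2b le_rfl))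
  rw [hkey, abs_mul, abs_of_pos (by positivity : (0:ℝ) < 1/(b-a))]
  calc (1/(b-a)) * |(∫ x in a..m, (x - c1) * f' x) + ∫ x in m..b, (x - c2) * f' x|
      ≤ (1/(b-a)) * (((∫ x in a..c1, |x - c1| * g x) + ∫ x in c1..m, |x - c1| * g x)
          + ((∫ x in m..c2, |x - c2| * g x) + ∫ x in c2..b, |x - c2| * g x)) := by
        refine mul_le_mul_of_nonneg_left ?_ (by positivity)
        exact (abs_add_le _ _).trans (add_le_add b1 b2)
    _ = (5/72) * (b - a) * (A + B) := by
        rw [e1, e2, e3, e4, key_int, key_int, key_int, key_int, hα, hβ, hc1, hc2, hm]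
        field_simp
        ring
end

section
/- (Special case η(b,a) = b − a of Theorem 4.1 with q = 1.) Let f : [a,b] → ℝ be differentiable with a < b, and suppose |f'| is quasiconvex on [a,b]. Then |(1/6)[f(a) + 4f((a+b)/2) + f(b)] − (1/(b−a)) ∫_a^b f(x) dx| ≤ (5/36)(b−a)·max{|f'(a)|, |f'(b)|}. -/
open Real MeasureTheory intervalIntegral Set

lemma abs_int_helper18 (g : ℝ → ℝ) (p q c M : ℝ) (hpc : p ≤ c) (hcq : c ≤ q)
    (hM : ∀ x ∈ Set.Icc p q, |g x| ≤ M)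
    (hint : IntervalIntegrable g volume p q) :
    |∫ x in p..q, (x - c) * g x| ≤ M * (((c - p)^2 + (q - c)^2)/2) := by
  have hpq : p ≤ q := hpc.trans hcq
  have hcont : Continuous (fun x : ℝ => |x - c|) :=
    continuous_abs.comp (continuous_id.sub continuous_const)
  have habs : ∫ x in p..q, M * |x - c| = M * (((c - p)^2 + (q - c)^2)/2) := by
    rw [intervalIntegral.integral_const_mul]
    have h1 : IntervalIntegrable (fun x => |x - c|) volume p c :=
      hcont.intervalIntegrable _ _
    have h2 : IntervalIntegrable (fun x => |x - c|) volume c q :=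
      hcont.intervalIntegrable _ _
    rw [← intervalIntegral.integral_add_adjacent_intervals h1 h2]
    have e1 : ∫ x in p..c, |x - c| = (c - p)^2/2 := by
      rw [intervalIntegral.integral_congr (g := fun x => c - x) ?_]
      · rw [intervalIntegral.integral_sub (intervalIntegrable_const) intervalIntegrable_id,
          intervalIntegral.integral_const, integral_id, smul_eq_mul]
        ring
      · intro x hx
        rw [Set.uIcc_of_le hpc] at hx
        dsimp only
        rw [abs_of_nonpos (by linarith [hx.2])]; ring
    have e2 : ∫ x in c..q, |x - c| = (q - c)^2/2 := by
      rw [intervalIntegral.integral_congr (g := fun x => x - c) ?_]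
      · rw [intervalIntegral.integral_sub intervalIntegrable_id (intervalIntegrable_const),
          intervalIntegral.integral_const, integral_id, smul_eq_mul]
        ring
      · intro x hx
        rw [Set.uIcc_of_le hcq] at hx
        dsimp only
        exact abs_of_nonneg (by linarith [hx.1])
    rw [e1, e2]; ring
  have hb : IntervalIntegrable (fun x => M * |x - c|) volume p q :=
    (continuous_const.mul hcont).intervalIntegrable _ _
  have key : ‖∫ x in p..q, (x - c) * g x‖ ≤ |(∫ x in p..q, M * |x - c|)| := by
    apply intervalIntegral.norm_integral_le_abs_of_norm_le ?_ hb
    rw [Set.uIoc_of_le hpq]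
    refine (ae_restrict_iff' measurableSet_Ioc).2 (ae_of_all _ fun x hx => ?_)
    have hxm : |g x| ≤ M := hM x ⟨le_of_lt hx.1, hx.2⟩
    rw [Real.norm_eq_abs, abs_mul]
    calc |x - c| * |g x| ≤ |x - c| * M := by
          exact mul_le_mul_of_nonneg_left hxm (abs_nonneg _)
      _ = M * |x - c| := mul_comm _ _
  rw [Real.norm_eq_abs] at key
  calc |∫ x in p..q, (x - c) * g x| ≤ |(∫ x in p..q, M * |x - c|)| := key
    _ = M * (((c - p)^2 + (q - c)^2)/2) := by
        rw [habs, abs_of_nonneg]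
        have hMnn : 0 ≤ M := le_trans (abs_nonneg _) (hM p ⟨le_refl p, hpq⟩)
        positivity

theorem stmt18 (f f' : ℝ → ℝ) (a b : ℝ) (hab : a < b)
    (hf : ∀ x ∈ Set.Icc a b, HasDerivAt f (f' x) x)
    (hq : ∀ x ∈ Set.Icc a b, ∀ y ∈ Set.Icc a b, ∀ t ∈ Set.Icc (0:ℝ) 1,
      |f' ((1 - t) * x + t * y)| ≤ max (|f' x|) (|f' y|)) :
    |(1/6 : ℝ) * (f a + 4 * f ((a + b) / 2) + f b) - (1 / (b - a)) * ∫ x in a..b, f x| ≤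
      (5/36) * (b - a) * max (|f' a|) (|f' b|) := by
  set m : ℝ := (a + b) / 2 with hm
  set c1 : ℝ := (5*a + b)/6 with hc1
  set c2 : ℝ := (a + 5*b)/6 with hc2
  set M : ℝ := max (|f' a|) (|f' b|) with hMdef
  have hba : (0:ℝ) < b - a := by linarith
  have ham : a ≤ m := by rw [hm]; linarith
  have hmb : m ≤ b := by rw [hm]; linarith
  have hac1 : a ≤ c1 := by rw [hc1]; linarith
  have hc1m : c1 ≤ m := by rw [hc1, hm]; linarith
  have hmc2 : m ≤ c2 := by rw [hm, hc2]; linarith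
  have hc2b : c2 ≤ b := by rw [hc2]; linarith
  have hMnn : 0 ≤ M := le_trans (abs_nonneg _) (le_max_left _ _)
  -- |f'| ≤ M on [a,b]
  have hf'le : ∀ x ∈ Set.Icc a b, |f' x| ≤ M := by
    intro x hx
    have ht : (x - a)/(b - a) ∈ Set.Icc (0:ℝ) 1 := by
      constructor
      · apply div_nonneg (by linarith [hx.1]) (le_of_lt hba)
      · rw [div_le_one hba]; linarith [hx.2]
    have h := hq a ⟨le_refl a, le_of_lt hab⟩ b ⟨le_of_lt hab, le_refl b⟩ _ ht
    have hxe : (1 - (x - a)/(b - a)) * a + (x - a)/(b - a) * b = x := by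
      field_simp
      ring
    rwa [hxe] at h
  -- continuity of f on Icc a b
  have hfc : ContinuousOn f (Set.Icc a b) :=
    fun x hx => (hf x hx).continuousAt.continuousWithinAt
  -- f' interval integrable on subintervals of [a,b]
  have hint : ∀ u v : ℝ, u ∈ Set.Icc a b → v ∈ Set.Icc a b →
      IntervalIntegrable f' volume u v := by
    intro u v hu hv
    rw [intervalIntegrable_iff]
    have hsub : Set.uIoc u v ⊆ Set.Icc a b :=
      Set.uIoc_subset_uIcc.trans (Set.uIcc_subset_Icc hu hv)
    have heq : ∀ᵐ x ∂(volume.restrict (Set.uIoc u v)), deriv f x = f' x := by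
      refine (ae_restrict_iff' measurableSet_uIoc).2 (ae_of_all _ fun x hx => ?_)
      exact (hf x (hsub hx)).deriv
    have hmble : AEStronglyMeasurable (deriv f) volume :=
      (measurable_deriv f).aestronglyMeasurable
    have hbdd : ∀ᵐ x ∂(volume.restrict (Set.uIoc u v)), ‖deriv f x‖ ≤ M := by
      refine (ae_restrict_iff' measurableSet_uIoc).2 (ae_of_all _ fun x hx => ?_)
      rw [(hf x (hsub hx)).deriv, Real.norm_eq_abs]
      exact hf'le x (hsub hx)
    have hd : IntegrableOn (deriv f) (Set.uIoc u v) volume :=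
      Measure.integrableOn_of_bounded (ne_of_lt measure_Ioc_lt_top) hmble hbdd
    exact hd.congr heq
  -- f interval integrable on subintervals
  have hintf : ∀ u v : ℝ, u ∈ Set.Icc a b → v ∈ Set.Icc a b →
      IntervalIntegrable f volume u v := by
    intro u v hu hv
    apply ContinuousOn.intervalIntegrable
    exact hfc.mono (Set.uIcc_subset_Icc hu hv)
  have haI : a ∈ Set.Icc a b := ⟨le_refl a, le_of_lt hab⟩
  have hbI : b ∈ Set.Icc a b := ⟨le_of_lt hab, le_refl b⟩
  have hmI : m ∈ Set.Icc a b := ⟨ham, hmb⟩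
  -- integration by parts on [a, m]
  have hI1 : ∫ x in a..m, (x - c1) * f' x
      = (b - a)/3 * f m + (b - a)/6 * f a - ∫ x in a..m, f x := by
    have hu : ∀ x ∈ Set.uIcc a m, HasDerivAt (fun x => x - c1) (1:ℝ) x :=
      fun x _ => (hasDerivAt_id x).sub_const c1
    have hv : ∀ x ∈ Set.uIcc a m, HasDerivAt f (f' x) x := by
      intro x hx
      rw [Set.uIcc_of_le ham] at hx
      exact hf x ⟨hx.1, hx.2.trans hmb⟩
    have h := intervalIntegral.integral_mul_deriv_eq_deriv_mul hu hv
      ((continuous_const.intervalIntegrable a m)) (hint a m haI hmI)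
    rw [h]
    have : ∫ x in a..m, (1:ℝ) * f x = ∫ x in a..m, f x := by
      simp
    rw [this]
    have h1 : m - c1 = (b - a)/3 := by rw [hm, hc1]; ring
    have h2 : a - c1 = -((b - a)/6) := by rw [hc1]; ring
    rw [h1, h2]; ring
  -- integration by parts on [m, b]
  have hI2 : ∫ x in m..b, (x - c2) * f' x
      = (b - a)/6 * f b + (b - a)/3 * f m - ∫ x in m..b, f x := by
    have hu : ∀ x ∈ Set.uIcc m b, HasDerivAt (fun x => x - c2) (1:ℝ) x :=
      fun x _ => (hasDerivAt_id x).sub_const c2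
    have hv : ∀ x ∈ Set.uIcc m b, HasDerivAt f (f' x) x := by
      intro x hx
      rw [Set.uIcc_of_le hmb] at hx
      exact hf x ⟨ham.trans hx.1, hx.2⟩
    have h := intervalIntegral.integral_mul_deriv_eq_deriv_mul hu hv
      ((continuous_const.intervalIntegrable m b)) (hint m b hmI hbI)
    rw [h]
    have : ∫ x in m..b, (1:ℝ) * f x = ∫ x in m..b, f x := by
      simp
    rw [this]
    have h1 : b - c2 = (b - a)/6 := by rw [hc2]; ring
    have h2 : m - c2 = -((b - a)/3) := by rw [hm, hc2]; ring
    rw [h1, h2]; ring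
  have hsplit : (∫ x in a..m, f x) + ∫ x in m..b, f x = ∫ x in a..b, f x :=
    intervalIntegral.integral_add_adjacent_intervals (hintf a m haI hmI) (hintf m b hmI hbI)
  -- key identity
  have hkey : (1/6 : ℝ) * (f a + 4 * f m + f b) - (1 / (b - a)) * ∫ x in a..b, f x
      = (1 / (b - a)) * ((∫ x in a..m, (x - c1) * f' x) + ∫ x in m..b, (x - c2) * f' x) := by
    rw [hI1, hI2, ← hsplit]
    field_simp
    ring
  rw [hkey]
  -- bounds on the two integrals
  have hB1 : |∫ x in a..m, (x - c1) * f' x| ≤ M * (5 * (b - a)^2 / 72) := by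
    have h := abs_int_helper18 f' a m c1 M hac1 hc1m
      (fun x hx => hf'le x ⟨hx.1, hx.2.trans hmb⟩) (hint a m haI hmI)
    have he : ((c1 - a)^2 + (m - c1)^2)/2 = 5 * (b - a)^2 / 72 := by
      rw [hc1, hm]; ring
    rwa [he] at h
  have hB2 : |∫ x in m..b, (x - c2) * f' x| ≤ M * (5 * (b - a)^2 / 72) := by
    have h := abs_int_helper18 f' m b c2 M hmc2 hc2b
      (fun x hx => hf'le x ⟨ham.trans hx.1, hx.2⟩) (hint m b hmI hbI)
    have he : ((c2 - m)^2 + (b - c2)^2)/2 = 5 * (b - a)^2 / 72 := by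
      rw [hc2, hm]; ring
    rwa [he] at h
  have habs : |(1 / (b - a)) * ((∫ x in a..m, (x - c1) * f' x) + ∫ x in m..b, (x - c2) * f' x)|
      ≤ (1 / (b - a)) * (M * (5 * (b - a)^2 / 72) + M * (5 * (b - a)^2 / 72)) := by
    rw [abs_mul, abs_of_pos (by positivity : (0:ℝ) < 1 / (b - a))]
    apply mul_le_mul_of_nonneg_left _ (by positivity)
    exact (abs_add_le _ _).trans (add_le_add hB1 hB2)
  apply habs.trans
  rw [hMdef]
  rw [div_mul_eq_mul_div, one_mul, div_le_iff₀ hba] at *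
  · nlinarith [hMnn, sq_nonneg (b - a)]
end

section
/- (Special case η(b,a) = b − a of Lemma 3.1.) Let f : [a,b] → ℝ be absolutely continuous with a < b. Then (1/6)[f(a) + 4f((a+b)/2) + f(b)] − (1/(b−a)) ∫_a^b f(x) dx = (b−a) ∫_0^1 m(t) f'(a + t(b−a)) dt, where m(t) = t − 1/6 for t ∈ [0,1/2) and m(t) = t − 5/6 for t ∈ [1/2,1]. -/
open Real MeasureTheory intervalIntegral Set

lemma fub19 (g : ℝ → ℝ) (a b : ℝ) (hab : a ≤ b)
    (hg : IntervalIntegrable g volume a b) :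
    ∫ x in a..b, (∫ t in a..x, g t) = ∫ t in a..b, (b - t) * g t := by
  set μ := volume.restrict (Set.Ioc a b) with hμ
  have hgint : Integrable g μ := by
    rw [hμ]; exact (intervalIntegrable_iff_integrableOn_Ioc_of_le hab).1 hg
  set F : ℝ × ℝ → ℝ := fun p => {q : ℝ × ℝ | q.2 ≤ q.1}.indicator (fun q => g q.2) p with hF
  have hμfin : μ Set.univ ≠ ⊤ := by
    rw [hμ]; simp [Measure.restrict_apply]
  have hsnd : Integrable (fun q : ℝ × ℝ => g q.2) (μ.prod μ) := by
    have hmap : (μ.prod μ).map Prod.snd = μ Set.univ • μ := Measure.map_snd_prod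
    have h2 : Integrable g ((μ.prod μ).map Prod.snd) := by
      rw [hmap]; exact hgint.smul_measure hμfin
    have hsm : AEStronglyMeasurable g ((μ.prod μ).map Prod.snd) := h2.1
    exact (integrable_map_measure hsm measurable_snd.aemeasurable).1 h2
  have hFint : Integrable F (μ.prod μ) :=
    hsnd.indicator (measurableSet_le measurable_snd measurable_fst)
  have hswap : ∫ x, (∫ t, F (x, t) ∂μ) ∂μ = ∫ t, (∫ x, F (x, t) ∂μ) ∂μ :=
    MeasureTheory.integral_integral_swap hFint
  have hL : ∫ x in a..b, (∫ t in a..x, g t) = ∫ x, (∫ t, F (x, t) ∂μ) ∂μ := by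
    rw [intervalIntegral.integral_of_le hab]
    refine integral_congr_ae ?_
    filter_upwards [ae_restrict_mem measurableSet_Ioc] with x hx
    have hx1 : a ≤ x := le_of_lt hx.1
    have : ∀ t, F (x, t) = (Set.Iic x).indicator g t := by
      intro t
      simp only [hF, Set.indicator, Set.mem_setOf_eq, Set.mem_Iic]
    simp_rw [this]
    rw [MeasureTheory.integral_indicator measurableSet_Iic, hμ,
      Measure.restrict_restrict measurableSet_Iic]
    rw [show Set.Iic x ∩ Set.Ioc a b = Set.Ioc a x by
      ext t; simp only [Set.mem_inter_iff, Set.mem_Iic, Set.mem_Ioc]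
      constructor
      · rintro ⟨h1, h2, h3⟩; exact ⟨h2, h1⟩
      · rintro ⟨h1, h2⟩; exact ⟨h2, h1, h2.trans hx.2⟩]
    rw [intervalIntegral.integral_of_le hx1]
  have hR : ∫ t, (∫ x, F (x, t) ∂μ) ∂μ = ∫ t in a..b, (b - t) * g t := by
    rw [intervalIntegral.integral_of_le hab]
    refine integral_congr_ae ?_
    filter_upwards [ae_restrict_mem measurableSet_Ioc] with t ht
    have : ∀ x, F (x, t) = (Set.Ici t).indicator (fun _ => g t) x := by
      intro x
      simp only [hF, Set.indicator, Set.mem_setOf_eq, Set.mem_Ici]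
    simp_rw [this]
    rw [MeasureTheory.integral_indicator_const _ measurableSet_Ici]
    have : μ (Set.Ici t) = ENNReal.ofReal (b - t) := by
      rw [hμ, Measure.restrict_apply measurableSet_Ici]
      rw [show Set.Ici t ∩ Set.Ioc a b = Set.Icc t b by
        ext s; simp only [Set.mem_inter_iff, Set.mem_Ici, Set.mem_Ioc, Set.mem_Icc]
        constructor
        · rintro ⟨h1, _, h3⟩; exact ⟨h1, h3⟩
        · rintro ⟨h1, h2⟩; exact ⟨h1, ht.1.trans_le h1, h2⟩]
      exact Real.volume_Icc
    rw [measureReal_def, this, ENNReal.toReal_ofReal (by linarith [ht.2] : (0:ℝ) ≤ b - t)]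
    simp [smul_eq_mul]
  rw [hL, hswap, hR]

theorem stmt19 (f f' : ℝ → ℝ) (a b : ℝ) (hab : a < b)
    (hint : IntervalIntegrable f' MeasureTheory.volume a b)
    (hFTC : ∀ x ∈ Set.Icc a b, f x = f a + ∫ t in a..x, f' t)
    (hint' : IntervalIntegrable (fun t => f' (a + t * (b - a))) MeasureTheory.volume 0 1)
    (m : ℝ → ℝ)
    (hm : ∀ t : ℝ, m t = if t < 1/2 then t - 1/6 else t - 5/6) :
    (1/6 : ℝ) * (f a + 4 * f ((a + b) / 2) + f b) - (1 / (b - a)) * (∫ x in a..b, f x) =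
      (b - a) * ∫ t in (0:ℝ)..1, m t * f' (a + t * (b - a)) := by
  have hba : (0:ℝ) < b - a := sub_pos.2 hab
  have hne : b - a ≠ 0 := ne_of_gt hba
  set c : ℝ := (a + b) / 2 with hc
  have hac : a ≤ c := by rw [hc]; linarith
  have hcb : c ≤ b := by rw [hc]; linarith
  have hsub1 : Set.uIcc a c ⊆ Set.uIcc a b := by
    rw [Set.uIcc_of_le hac, Set.uIcc_of_le hab.le]
    exact Set.Icc_subset_Icc le_rfl hcb
  have hsub2 : Set.uIcc c b ⊆ Set.uIcc a b := by
    rw [Set.uIcc_of_le hcb, Set.uIcc_of_le hab.le]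
    exact Set.Icc_subset_Icc hac le_rfl
  have hint_ac : IntervalIntegrable f' volume a c := hint.mono_set hsub1
  have hint_cb : IntervalIntegrable f' volume c b := hint.mono_set hsub2
  have hcontw : ContinuousOn (fun x : ℝ => b - x) (Set.uIcc a b) :=
    (continuous_const.sub continuous_id).continuousOn
  have hw_ab : IntervalIntegrable (fun x => (b - x) * f' x) volume a b :=
    hint.continuousOn_mul hcontw
  have hw_ac : IntervalIntegrable (fun x => (b - x) * f' x) volume a c :=
    hint_ac.continuousOn_mul (hcontw.mono hsub1)
  have hw_cb : IntervalIntegrable (fun x => (b - x) * f' x) volume c b :=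
    hint_cb.continuousOn_mul (hcontw.mono hsub2)
  set A := ∫ x in a..c, f' x with hA
  set B := ∫ x in c..b, f' x with hB
  set W1 := ∫ x in a..c, (b - x) * f' x with hW1
  set W2 := ∫ x in c..b, (b - x) * f' x with hW2
  have hAB : ∫ x in a..b, f' x = A + B :=
    (intervalIntegral.integral_add_adjacent_intervals hint_ac hint_cb).symm
  have hW : ∫ x in a..b, (b - x) * f' x = W1 + W2 :=
    (intervalIntegral.integral_add_adjacent_intervals hw_ac hw_cb).symm
  have hfc : f c = f a + A := hFTC c ⟨hac, hcb⟩
  have hfb : f b = f a + (A + B) := by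
    rw [hFTC b ⟨hab.le, le_rfl⟩, hAB]
  -- integral of f
  have hf_int : ∫ x in a..b, f x = (b - a) * f a + (W1 + W2) := by
    have h1 : ∫ x in a..b, f x = ∫ x in a..b, (f a + ∫ t in a..x, f' t) := by
      apply intervalIntegral.integral_congr
      intro x hx
      rw [Set.uIcc_of_le hab.le] at hx
      exact hFTC x hx
    have hprim : IntervalIntegrable (fun x => ∫ t in a..x, f' t) volume a b :=
      (continuousOn_primitive_interval' hint Set.left_mem_uIcc).intervalIntegrable
    rw [h1, intervalIntegral.integral_add intervalIntegrable_const hprim,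
      intervalIntegral.integral_const, fub19 f' a b hab.le hint, hW]
    simp [smul_eq_mul]
  -- change of variables on the RHS
  set g : ℝ → ℝ := fun x => m ((x - a) / (b - a)) * f' x with hg
  have hRHS : ∫ t in (0:ℝ)..1, m t * f' (a + t * (b - a))
      = (b - a)⁻¹ * ∫ x in a..b, g x := by
    have hcomp : ∀ t : ℝ, m t * f' (a + t * (b - a)) = g ((b - a) * t + a) := by
      intro t
      rw [hg]
      simp only
      rw [show ((b - a) * t + a - a) / (b - a) = t by field_simp; ring,
        show (b - a) * t + a = a + t * (b - a) by ring]
    simp_rw [hcomp]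
    rw [intervalIntegral.integral_comp_mul_add g hne a]
    norm_num
  -- split and evaluate the integral of g
  set u1 : ℝ → ℝ := fun x => ((x - a) / (b - a) - 1/6) * f' x with hu1d
  set u2 : ℝ → ℝ := fun x => ((x - a) / (b - a) - 5/6) * f' x with hu2d
  have hcont1 : ContinuousOn (fun x : ℝ => (x - a) / (b - a) - 1/6) (Set.uIcc a c) :=
    (((continuous_id.sub continuous_const).div_const _).sub continuous_const).continuousOn
  have hcont2 : ContinuousOn (fun x : ℝ => (x - a) / (b - a) - 5/6) (Set.uIcc c b) :=
    (((continuous_id.sub continuous_const).div_const _).sub continuous_const).continuousOn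
  have hu1 : IntervalIntegrable u1 volume a c := hint_ac.continuousOn_mul hcont1
  have hu2 : IntervalIntegrable u2 volume c b := hint_cb.continuousOn_mul hcont2
  have haec : ∀ᵐ x : ℝ, x ≠ c := by
    refine (ae_iff).2 ?_
    simp only [not_not, Set.setOf_eq_eq_singleton, Real.volume_singleton]
  have heq1 : ∀ᵐ x : ℝ, x ∈ Set.uIoc a c → g x = u1 x := by
    filter_upwards [haec] with x hxc hx
    rw [Set.uIoc_of_le hac] at hx
    have hxlt : x < c := lt_of_le_of_ne hx.2 hxc
    have hrat : (x - a) / (b - a) < 1/2 := by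
      rw [div_lt_iff₀ hba]
      rw [hc] at hxlt
      linarith
    rw [hg, hu1d]
    simp only
    rw [hm, if_pos hrat]
  have heq2 : ∀ x ∈ Set.uIcc c b, g x = u2 x := by
    intro x hx
    rw [Set.uIcc_of_le hcb] at hx
    have hrat : ¬ ((x - a) / (b - a) < 1/2) := by
      rw [not_lt, le_div_iff₀ hba]
      rw [hc] at hx
      linarith [hx.1]
    rw [hg, hu2d]
    simp only
    rw [hm, if_neg hrat]
  have hg1 : IntervalIntegrable g volume a c := by
    rw [intervalIntegrable_iff_integrableOn_Ioc_of_le hac]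
    refine ((intervalIntegrable_iff_integrableOn_Ioc_of_le hac).1 hu1).congr ?_
    rw [Set.uIoc_of_le hac] at heq1
    filter_upwards [ae_restrict_mem measurableSet_Ioc, ae_restrict_of_ae heq1] with x hx h2
    exact (h2 hx).symm
  have hg2 : IntervalIntegrable g volume c b := by
    rw [intervalIntegrable_iff_integrableOn_Ioc_of_le hcb]
    refine ((intervalIntegrable_iff_integrableOn_Ioc_of_le hcb).1 hu2).congr ?_
    filter_upwards [ae_restrict_mem measurableSet_Ioc] with x hx
    exact (heq2 x (by rw [Set.uIcc_of_le hcb]; exact Set.Ioc_subset_Icc_self hx)).symm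
  have hsplit : ∫ x in a..b, g x = (∫ x in a..c, u1 x) + ∫ x in c..b, u2 x := by
    rw [← intervalIntegral.integral_add_adjacent_intervals hg1 hg2]
    congr 1
    · exact intervalIntegral.integral_congr_ae heq1
    · exact intervalIntegral.integral_congr heq2
  have hI1 : ∫ x in a..c, u1 x = 5/6 * A - (b - a)⁻¹ * W1 := by
    have hx : ∀ x : ℝ, u1 x = 5/6 * f' x - (b - a)⁻¹ * ((b - x) * f' x) := by
      intro x
      rw [hu1d]
      simp only
      field_simp
      ring
    simp_rw [hx]
    rw [intervalIntegral.integral_sub (hint_ac.const_mul _) (hw_ac.const_mul _),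
      intervalIntegral.integral_const_mul, intervalIntegral.integral_const_mul]
  have hI2 : ∫ x in c..b, u2 x = 1/6 * B - (b - a)⁻¹ * W2 := by
    have hx : ∀ x : ℝ, u2 x = 1/6 * f' x - (b - a)⁻¹ * ((b - x) * f' x) := by
      intro x
      rw [hu2d]
      simp only
      field_simp
      ring
    simp_rw [hx]
    rw [intervalIntegral.integral_sub (hint_cb.const_mul _) (hw_cb.const_mul _),
      intervalIntegral.integral_const_mul, intervalIntegral.integral_const_mul]
  rw [hRHS, hsplit, hI1, hI2, hfc, hfb, hf_int]
  field_simp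
  ring
end
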